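/- arXiv:1502.04000 — 15 statements merged into one kernel-verified Lean document; each statement's English description precedes it below -/
import Mathlib

section
/- Let f be the solution of the evolution equation ḟ = (T − Id)f with f(0) = z. Then for every t ≥ 0 and every natural number n, ‖f(t) − T^[n](z)‖ ≤ ‖z − T(z)‖ · √(t + (n − t)²). -/
open Real Set MeasureTheory intervalIntegral

section ChernoffAux

variable {Z : Type*} [NormedAddCommGroup Z] [NormedSpace ℝ Z] [CompleteSpace Z]

lemma chernoff_iter_nonexp (T : Z → Z) (hT : ∀ x y : Z, ‖T x - T y‖ ≤ ‖x - y‖)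
    (n : ℕ) : ∀ a b : Z, ‖T^[n] a - T^[n] b‖ ≤ ‖a - b‖ := by
  induction n with
  | zero => intro a b; simp
  | succ n ih =>
    intro a b
    rw [Function.iterate_succ_apply, Function.iterate_succ_apply]
    exact (ih _ _).trans (hT a b)

lemma chernoff_dist_iter (T : Z → Z) (hT : ∀ x y : Z, ‖T x - T y‖ ≤ ‖x - y‖)
    (z : Z) (n : ℕ) : ‖z - T^[n] z‖ ≤ n * ‖z - T z‖ := by
  induction n with
  | zero => simp
  | succ n ih =>
    have h1 : ‖T^[n] z - T^[n + 1] z‖ ≤ ‖z - T z‖ := by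
      rw [Function.iterate_succ_apply]
      exact chernoff_iter_nonexp T hT n z (T z)
    have h2 : ‖z - T^[n + 1] z‖ ≤ ‖z - T^[n] z‖ + ‖T^[n] z - T^[n + 1] z‖ :=
      norm_sub_le_norm_sub_add_norm_sub _ _ _
    push_cast
    nlinarith [norm_nonneg (z - T z)]

/-- Integral representation of the solution of the evolution equation. -/
lemma chernoff_rep (T : Z → Z) (hT : ∀ x y : Z, ‖T x - T y‖ ≤ ‖x - y‖)
    (z : Z) (f : ℝ → Z) (hf0 : f 0 = z)
    (hf : ∀ t : ℝ, 0 ≤ t → HasDerivAt f (T (f t) - f t) t)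
    (t : ℝ) (ht : 0 ≤ t) :
    Real.exp t • f t = z + ∫ s in (0:ℝ)..t, Real.exp s • T (f (max s 0)) := by
  have hTc : Continuous T := by
    have : LipschitzWith 1 T := by
      refine LipschitzWith.of_dist_le_mul fun x y => ?_
      simpa [dist_eq_norm] using hT x y
    exact this.continuous
  have hF : Continuous fun s : ℝ => f (max s 0) := by
    have hm : Continuous fun s : ℝ => max s 0 := continuous_id.max continuous_const
    have hfc : ContinuousOn f (Ici 0) := fun x hx => (hf x hx).continuousAt.continuousWithinAt
    exact hfc.comp_continuous hm fun x => le_max_right x 0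
  have hG : Continuous fun s : ℝ => Real.exp s • T (f (max s 0)) :=
    Real.continuous_exp.smul (hTc.comp hF)
  set G : ℝ → Z := fun s => Real.exp s • T (f (max s 0)) with hGdef
  set P : ℝ → Z := fun x => ∫ s in (0:ℝ)..x, G s with hPdef
  have hP : ∀ x : ℝ, HasDerivAt P (G x) x := fun x =>
    integral_hasDerivAt_right (hG.intervalIntegrable 0 x)
      (hG.stronglyMeasurable.stronglyMeasurableAtFilter) hG.continuousAt
  set g : ℝ → Z := fun x => Real.exp x • f x - P x with hgdef
  have hgderiv : ∀ x ∈ Ico (0:ℝ) t, HasDerivWithinAt g 0 (Ici x) x := by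
    intro x hx
    have h1 : HasDerivAt (fun y => Real.exp y • f y)
        (Real.exp x • (T (f x) - f x) + Real.exp x • f x) x :=
      (Real.hasDerivAt_exp x).smul (hf x hx.1)
    have h2 : Real.exp x • (T (f x) - f x) + Real.exp x • f x = G x := by
      rw [hGdef]
      simp only [max_eq_left hx.1]
      rw [smul_sub]
      abel
    rw [h2] at h1
    have h3 : HasDerivAt g 0 x := by
      have := h1.sub (hP x)
      rw [sub_self] at this
      exact this
    exact h3.hasDerivWithinAt
  have hgcont : ContinuousOn g (Icc 0 t) := by
    apply ContinuousOn.sub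
    · intro x hx
      exact ((Real.continuous_exp.continuousAt).smul
        ((hf x hx.1).continuousAt)).continuousWithinAt
    · exact fun x _ => ((hP x).continuousAt).continuousWithinAt
  have := constant_of_has_deriv_right_zero hgcont hgderiv t ⟨ht, le_refl t⟩
  have hg0 : g 0 = z := by
    simp [hgdef, hPdef, hf0, intervalIntegral.integral_same]
  rw [hg0] at this
  have : Real.exp t • f t - P t = z := this
  rw [hPdef] at this
  linear_combination (norm := module) this

/-- Key integral estimate. -/
lemma chernoff_est (T : Z → Z) (hT : ∀ x y : Z, ‖T x - T y‖ ≤ ‖x - y‖)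
    (z : Z) (f : ℝ → Z) (hf0 : f 0 = z)
    (hf : ∀ t : ℝ, 0 ≤ t → HasDerivAt f (T (f t) - f t) t)
    (c : Z) (t : ℝ) (ht : 0 ≤ t) :
    Real.exp t * ‖f t - c‖ ≤
      ‖z - c‖ + ∫ s in (0:ℝ)..t, Real.exp s * ‖T (f (max s 0)) - c‖ := by
  have hTc : Continuous T := by
    have : LipschitzWith 1 T := by
      refine LipschitzWith.of_dist_le_mul fun x y => ?_
      simpa [dist_eq_norm] using hT x y
    exact this.continuous
  have hF : Continuous fun s : ℝ => f (max s 0) := by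
    have hm : Continuous fun s : ℝ => max s 0 := continuous_id.max continuous_const
    have hfc : ContinuousOn f (Ici 0) := fun x hx => (hf x hx).continuousAt.continuousWithinAt
    exact hfc.comp_continuous hm fun x => le_max_right x 0
  have hG : Continuous fun s : ℝ => Real.exp s • T (f (max s 0)) :=
    Real.continuous_exp.smul (hTc.comp hF)
  have hGc : Continuous fun s : ℝ => Real.exp s • c := Real.continuous_exp.smul continuous_const
  have hrep := chernoff_rep T hT z f hf0 hf t ht
  have hcint : (∫ s in (0:ℝ)..t, Real.exp s • c) = (Real.exp t - 1) • c := by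
    rw [intervalIntegral.integral_smul_const, integral_exp, Real.exp_zero]
  have key : Real.exp t • (f t - c)
      = (z - c) + ∫ s in (0:ℝ)..t, Real.exp s • (T (f (max s 0)) - c) := by
    have hsub : (∫ s in (0:ℝ)..t, Real.exp s • (T (f (max s 0)) - c))
        = (∫ s in (0:ℝ)..t, Real.exp s • T (f (max s 0)))
          - ∫ s in (0:ℝ)..t, Real.exp s • c := by
      rw [← intervalIntegral.integral_sub (hG.intervalIntegrable 0 t)
        (hGc.intervalIntegrable 0 t)]
      congr 1
      ext s
      rw [smul_sub]
    rw [hsub, hcint, smul_sub, hrep, sub_smul, one_smul]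
    abel
  have hnorm : Real.exp t * ‖f t - c‖ = ‖Real.exp t • (f t - c)‖ := by
    rw [norm_smul, Real.norm_eq_abs, abs_of_pos (Real.exp_pos t)]
  rw [hnorm, key]
  refine (norm_add_le _ _).trans ?_
  gcongr
  refine (intervalIntegral.norm_integral_le_integral_norm ht).trans_eq ?_
  apply intervalIntegral.integral_congr
  intro s _
  simp [norm_smul, Real.abs_exp]

/-- Base case: `‖f t - z‖ ≤ ‖z - T z‖ * t`. -/
lemma chernoff_base (T : Z → Z) (hT : ∀ x y : Z, ‖T x - T y‖ ≤ ‖x - y‖)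
    (z : Z) (f : ℝ → Z) (hf0 : f 0 = z)
    (hf : ∀ t : ℝ, 0 ≤ t → HasDerivAt f (T (f t) - f t) t)
    (t : ℝ) (ht : 0 ≤ t) :
    ‖f t - z‖ ≤ ‖z - T z‖ * t := by
  set C := ‖z - T z‖ with hCdef
  have hC : 0 ≤ C := norm_nonneg _
  have hTc : Continuous T := by
    have : LipschitzWith 1 T := by
      refine LipschitzWith.of_dist_le_mul fun x y => ?_
      simpa [dist_eq_norm] using hT x y
    exact this.continuous
  have hF : Continuous fun s : ℝ => f (max s 0) := by
    have hm : Continuous fun s : ℝ => max s 0 := continuous_id.max continuous_const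
    have hfc : ContinuousOn f (Ici 0) := fun x hx => (hf x hx).continuousAt.continuousWithinAt
    exact hfc.comp_continuous hm fun x => le_max_right x 0
  set φ : ℝ → ℝ := fun s => ‖f (max s 0) - z‖ with hφdef
  have hφc : Continuous φ := (hF.sub continuous_const).norm
  set G : ℝ → ℝ := fun s => Real.exp s * (φ s + C) with hGdef
  have hGc : Continuous G := Real.continuous_exp.mul (hφc.add continuous_const)
  set H : ℝ → ℝ := fun x => ∫ s in (0:ℝ)..x, G s with hHdef
  have hH : ∀ x : ℝ, HasDerivAt H (G x) x := fun x =>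
    integral_hasDerivAt_right (hGc.intervalIntegrable 0 x)
      (hGc.stronglyMeasurable.stronglyMeasurableAtFilter) hGc.continuousAt
  have hkey : ∀ s : ℝ, 0 ≤ s → Real.exp s * ‖f s - z‖ ≤ H s := by
    intro s hs
    have h1 := chernoff_est T hT z f hf0 hf z s hs
    simp only [sub_self, norm_zero, zero_add] at h1
    refine h1.trans ?_
    rw [hHdef]
    apply intervalIntegral.integral_mono_on hs
    · exact ((Real.continuous_exp.mul
        ((hTc.comp hF).sub continuous_const).norm).intervalIntegrable 0 s)
    · exact hGc.intervalIntegrable 0 s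
    · intro r _
      have h2 : ‖T (f (max r 0)) - z‖ ≤ φ r + C := by
        have h3 : ‖T (f (max r 0)) - z‖ ≤ ‖T (f (max r 0)) - T z‖ + ‖T z - z‖ :=
          norm_sub_le_norm_sub_add_norm_sub _ _ _
        have h4 : ‖T (f (max r 0)) - T z‖ ≤ ‖f (max r 0) - z‖ := hT _ _
        have h5 : ‖T z - z‖ = C := by rw [hCdef, norm_sub_rev]
        rw [hφdef]
        simp only at h3 h4 ⊢
        linarith
      exact mul_le_mul_of_nonneg_left h2 (Real.exp_pos r).le
  set ρ : ℝ → ℝ := fun x => Real.exp (-x) * H x - C * x with hρdef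
  have hρd : ∀ x : ℝ, HasDerivAt ρ
      ((-Real.exp (-x)) * H x + Real.exp (-x) * G x - C) x := by
    intro x
    have he : HasDerivAt (fun y : ℝ => Real.exp (-y)) (-Real.exp (-x)) x := by
      have := (Real.hasDerivAt_exp (-x)).comp x (hasDerivAt_neg x)
      simp only [mul_neg, mul_one] at this
      exact this
    have h1 := he.mul (hH x)
    have h2 : HasDerivAt (fun y : ℝ => C * y) C x := by
      simpa using (hasDerivAt_id x).const_mul C
    exact h1.sub h2
  have hρmono : AntitoneOn ρ (Icc 0 t) := by
    apply antitoneOn_of_deriv_nonpos (convex_Icc 0 t)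
    · exact fun x _ => ((hρd x).continuousAt).continuousWithinAt
    · exact fun x _ => ((hρd x).differentiableAt).differentiableWithinAt
    · intro x hx
      rw [interior_Icc] at hx
      rw [(hρd x).deriv]
      have h2 := hkey x hx.1.le
      have hφx : φ x = ‖f x - z‖ := by rw [hφdef]; simp [max_eq_left hx.1.le]
      have hmul : Real.exp (-x) * Real.exp x = 1 := by
        rw [← Real.exp_add]; simp
      have h3 : Real.exp x * φ x ≤ H x := by rw [hφx]; exact h2
      have h4 : 0 < Real.exp (-x) := Real.exp_pos _
      have hGx : G x = Real.exp x * (φ x + C) := rfl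
      rw [hGx]
      have e1 : Real.exp (-x) * (Real.exp x * (φ x + C)) = φ x + C := by
        rw [← mul_assoc, hmul, one_mul]
      have e3 : Real.exp (-x) * (Real.exp x * φ x) = φ x := by
        rw [← mul_assoc, hmul, one_mul]
      have e4 : φ x ≤ Real.exp (-x) * H x := by
        have := mul_le_mul_of_nonneg_left h3 h4.le
        rw [e3] at this
        exact this
      rw [e1]
      linarith
  have hρt : ρ t ≤ ρ 0 := hρmono ⟨le_refl 0, ht⟩ ⟨ht, le_refl t⟩ ht
  have hρ0 : ρ 0 = 0 := by
    simp [hρdef, hHdef, intervalIntegral.integral_same]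
  rw [hρ0] at hρt
  have h5 := hkey t ht
  have hmul : Real.exp (-t) * Real.exp t = 1 := by rw [← Real.exp_add]; simp
  have h6 : 0 < Real.exp (-t) := Real.exp_pos _
  have h7 : Real.exp (-t) * H t - C * t ≤ 0 := hρt
  nlinarith [h5, h6, h7, hmul, norm_nonneg (f t - z)]

/-- Pointwise derivative inequality for the comparison functions. -/
lemma chernoff_sqrt_ineq (n : ℕ) (x : ℝ) (hx : 0 < x) :
    Real.sqrt (x + ((n : ℝ) - x) ^ 2) ≤ Real.sqrt (x + ((n : ℝ) + 1 - x) ^ 2)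
      + (1 - 2 * ((n : ℝ) + 1 - x)) / (2 * Real.sqrt (x + ((n : ℝ) + 1 - x) ^ 2)) := by
  have hQpos : 0 < x + ((n : ℝ) + 1 - x) ^ 2 := by nlinarith [sq_nonneg ((n : ℝ) + 1 - x)]
  have hQ0 : 0 ≤ x + ((n : ℝ) - x) ^ 2 := by nlinarith [sq_nonneg ((n : ℝ) - x)]
  set sQ : ℝ := Real.sqrt (x + ((n : ℝ) + 1 - x) ^ 2) with hsQdef
  set sQ0 : ℝ := Real.sqrt (x + ((n : ℝ) - x) ^ 2) with hsQ0def
  have hsQ : sQ ^ 2 = x + ((n : ℝ) + 1 - x) ^ 2 := Real.sq_sqrt hQpos.le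
  have hsQ0 : sQ0 ^ 2 = x + ((n : ℝ) - x) ^ 2 := Real.sq_sqrt hQ0
  have hsQpos : 0 < sQ := Real.sqrt_pos.mpr hQpos
  have hsQ0nn : 0 ≤ sQ0 := Real.sqrt_nonneg _
  have hrhs : 0 ≤ 2 * (x + ((n : ℝ) + 1 - x) ^ 2) + 1 - 2 * ((n : ℝ) + 1 - x) := by
    nlinarith [sq_nonneg (2 * ((n : ℝ) + 1 - x) - 1), hx.le]
  have key1 : 2 * sQ0 * sQ
      ≤ 2 * (x + ((n : ℝ) + 1 - x) ^ 2) + 1 - 2 * ((n : ℝ) + 1 - x) := by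
    have h4 : (2 * sQ0 * sQ) ^ 2
        ≤ (2 * (x + ((n : ℝ) + 1 - x) ^ 2) + 1 - 2 * ((n : ℝ) + 1 - x)) ^ 2 := by
      have h5 : (2 * sQ0 * sQ) ^ 2 = 4 * sQ0 ^ 2 * sQ ^ 2 := by ring
      rw [h5, hsQ, hsQ0]
      nlinarith [sq_nonneg (1 - 2 * ((n : ℝ) + 1 - x))]
    calc 2 * sQ0 * sQ = Real.sqrt ((2 * sQ0 * sQ) ^ 2) :=
          (Real.sqrt_sq (by nlinarith)).symm
      _ ≤ Real.sqrt ((2 * (x + ((n : ℝ) + 1 - x) ^ 2) + 1 - 2 * ((n : ℝ) + 1 - x)) ^ 2) :=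
          Real.sqrt_le_sqrt h4
      _ = 2 * (x + ((n : ℝ) + 1 - x) ^ 2) + 1 - 2 * ((n : ℝ) + 1 - x) := Real.sqrt_sq hrhs
  apply le_of_mul_le_mul_right ?_ (by linarith : (0:ℝ) < 2 * sQ)
  have heq : (sQ + (1 - 2 * ((n : ℝ) + 1 - x)) / (2 * sQ)) * (2 * sQ)
      = 2 * (x + ((n : ℝ) + 1 - x) ^ 2) + 1 - 2 * ((n : ℝ) + 1 - x) := by
    rw [add_mul, div_mul_cancel₀ _ (by linarith : (2:ℝ) * sQ ≠ 0)]
    nlinarith [hsQ]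
  rw [heq]
  calc sQ0 * (2 * sQ) = 2 * sQ0 * sQ := by ring
    _ ≤ _ := key1

/-- The analytic inequality for the inductive step. -/
lemma chernoff_analytic (n : ℕ) (t : ℝ) (ht : 0 ≤ t) :
    ((n : ℝ) + 1) + (∫ s in (0:ℝ)..t, Real.exp s * Real.sqrt (s + ((n : ℝ) - s) ^ 2))
      ≤ Real.exp t * Real.sqrt (t + (((n : ℝ) + 1) - t) ^ 2) := by
  have hbc : Continuous fun x : ℝ => Real.sqrt (x + ((n : ℝ) + 1 - x) ^ 2) := by
    apply Real.continuous_sqrt.comp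
    continuity
  have hb0c : Continuous fun x : ℝ => Real.sqrt (x + ((n : ℝ) - x) ^ 2) := by
    apply Real.continuous_sqrt.comp
    continuity
  have hGc : Continuous fun s : ℝ => Real.exp s * Real.sqrt (s + ((n : ℝ) - s) ^ 2) :=
    Real.continuous_exp.mul hb0c
  have hP : ∀ x : ℝ, HasDerivAt
      (fun y : ℝ => ∫ s in (0:ℝ)..y, Real.exp s * Real.sqrt (s + ((n : ℝ) - s) ^ 2))
      (Real.exp x * Real.sqrt (x + ((n : ℝ) - x) ^ 2)) x := fun x =>
    integral_hasDerivAt_right (hGc.intervalIntegrable 0 x)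
      (hGc.stronglyMeasurable.stronglyMeasurableAtFilter) hGc.continuousAt
  set D : ℝ → ℝ := fun x => Real.exp x * Real.sqrt (x + ((n : ℝ) + 1 - x) ^ 2)
      - ∫ s in (0:ℝ)..x, Real.exp s * Real.sqrt (s + ((n : ℝ) - s) ^ 2) with hDdef
  have hDc : Continuous D := by
    apply (Real.continuous_exp.mul hbc).sub
    exact continuous_iff_continuousAt.mpr fun x => (hP x).continuousAt
  have hbd : ∀ x : ℝ, 0 < x →
      HasDerivAt (fun y : ℝ => Real.sqrt (y + ((n : ℝ) + 1 - y) ^ 2))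
        ((1 - 2 * ((n : ℝ) + 1 - x)) / (2 * Real.sqrt (x + ((n : ℝ) + 1 - x) ^ 2))) x := by
    intro x hx
    have hq : HasDerivAt (fun y : ℝ => y + ((n : ℝ) + 1 - y) ^ 2)
        (1 - 2 * ((n : ℝ) + 1 - x)) x := by
      have h1 := (hasDerivAt_id x).add
        (((hasDerivAt_const x ((n : ℝ) + 1)).sub (hasDerivAt_id x)).pow 2)
      refine h1.congr_deriv ?_
      simp only [Pi.sub_apply, id_eq]
      push_cast
      ring
    have hqpos : 0 < x + ((n : ℝ) + 1 - x) ^ 2 := by nlinarith [sq_nonneg ((n : ℝ) + 1 - x)]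
    exact hq.sqrt hqpos.ne'
  have hDd : ∀ x : ℝ, 0 < x → HasDerivAt D
      (Real.exp x * Real.sqrt (x + ((n : ℝ) + 1 - x) ^ 2)
        + Real.exp x * ((1 - 2 * ((n : ℝ) + 1 - x)) / (2 * Real.sqrt (x + ((n : ℝ) + 1 - x) ^ 2)))
        - Real.exp x * Real.sqrt (x + ((n : ℝ) - x) ^ 2)) x := by
    intro x hx
    exact ((Real.hasDerivAt_exp x).mul (hbd x hx)).sub (hP x)
  have hmono : MonotoneOn D (Icc 0 t) := by
    apply monotoneOn_of_deriv_nonneg (convex_Icc 0 t) hDc.continuousOn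
    · intro x hx
      rw [interior_Icc] at hx
      exact ((hDd x hx.1).differentiableAt).differentiableWithinAt
    · intro x hx
      rw [interior_Icc] at hx
      rw [(hDd x hx.1).deriv]
      have key := chernoff_sqrt_ineq n x hx.1
      have h6 := mul_le_mul_of_nonneg_left key (Real.exp_pos x).le
      rw [mul_add] at h6
      linarith
  have hDt : D 0 ≤ D t := hmono ⟨le_refl 0, ht⟩ ⟨ht, le_refl t⟩ ht
  have hD0 : D 0 = (n : ℝ) + 1 := by
    rw [hDdef]
    simp only [intervalIntegral.integral_same, sub_zero]
    rw [Real.exp_zero, one_mul]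
    rw [zero_add]
    exact Real.sqrt_sq (by positivity)
  rw [hD0] at hDt
  have hDt' : D t = Real.exp t * Real.sqrt (t + ((n : ℝ) + 1 - t) ^ 2)
      - ∫ s in (0:ℝ)..t, Real.exp s * Real.sqrt (s + ((n : ℝ) - s) ^ 2) := rfl
  rw [hDt'] at hDt
  have : ((n : ℝ) + 1) - t = (n : ℝ) + 1 - t := by ring
  linarith [hDt]

end ChernoffAux

/-- Generalized Chernoff formula: if `f` solves the evolution equation
`ḟ = (T - Id) f` with `f 0 = z` for a nonexpansive map `T` on a Banach space,
then `‖f t - T^[n] z‖ ≤ ‖z - T z‖ * √(t + (n - t)²)`. -/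
theorem chernoff_formula
    {Z : Type*} [NormedAddCommGroup Z] [NormedSpace ℝ Z] [CompleteSpace Z]
    (T : Z → Z) (hT : ∀ x y : Z, ‖T x - T y‖ ≤ ‖x - y‖)
    (z : Z) (f : ℝ → Z) (hf0 : f 0 = z)
    (hf : ∀ t : ℝ, 0 ≤ t → HasDerivAt f (T (f t) - f t) t)
    (t : ℝ) (ht : 0 ≤ t) (n : ℕ) :
    ‖f t - T^[n] z‖ ≤ ‖z - T z‖ * Real.sqrt (t + ((n : ℝ) - t) ^ 2) := by
  have hC : 0 ≤ ‖z - T z‖ := norm_nonneg _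
  have hTc : Continuous T := by
    have : LipschitzWith 1 T := by
      refine LipschitzWith.of_dist_le_mul fun x y => ?_
      simpa [dist_eq_norm] using hT x y
    exact this.continuous
  have hF : Continuous fun s : ℝ => f (max s 0) := by
    have hm : Continuous fun s : ℝ => max s 0 := continuous_id.max continuous_const
    have hfc : ContinuousOn f (Ici 0) := fun x hx => (hf x hx).continuousAt.continuousWithinAt
    exact hfc.comp_continuous hm fun x => le_max_right x 0
  induction n generalizing t with
  | zero =>
    simp only [Function.iterate_zero, id_eq, Nat.cast_zero]
    have h1 := chernoff_base T hT z f hf0 hf t ht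
    refine h1.trans ?_
    apply mul_le_mul_of_nonneg_left ?_ hC
    calc t = Real.sqrt (t ^ 2) := (Real.sqrt_sq ht).symm
      _ ≤ Real.sqrt (t + (0 - t) ^ 2) := by
          apply Real.sqrt_le_sqrt
          nlinarith
  | succ n ih =>
    have h1 := chernoff_est T hT z f hf0 hf (T^[n + 1] z) t ht
    have h2 : (∫ s in (0:ℝ)..t, Real.exp s * ‖T (f (max s 0)) - T^[n + 1] z‖)
        ≤ ∫ s in (0:ℝ)..t, Real.exp s *
            (‖z - T z‖ * Real.sqrt (s + ((n : ℝ) - s) ^ 2)) := by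
      apply intervalIntegral.integral_mono_on ht
      · exact (Real.continuous_exp.mul
          ((hTc.comp hF).sub continuous_const).norm).intervalIntegrable 0 t
      · refine (Real.continuous_exp.mul (continuous_const.mul ?_)).intervalIntegrable 0 t
        apply Real.continuous_sqrt.comp
        continuity
      · intro s hs
        have h3 : ‖T (f (max s 0)) - T^[n + 1] z‖ ≤ ‖f s - T^[n] z‖ := by
          rw [Function.iterate_succ_apply', max_eq_left hs.1]
          exact hT _ _
        have h4 := ih s hs.1
        exact mul_le_mul_of_nonneg_left (h3.trans h4) (Real.exp_pos s).le
    have h5 : (∫ s in (0:ℝ)..t, Real.exp s *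
          (‖z - T z‖ * Real.sqrt (s + ((n : ℝ) - s) ^ 2)))
        = ‖z - T z‖ * ∫ s in (0:ℝ)..t, Real.exp s * Real.sqrt (s + ((n : ℝ) - s) ^ 2) := by
      rw [← intervalIntegral.integral_const_mul]
      congr 1
      ext s
      ring
    have h6 : ‖z - T^[n + 1] z‖ ≤ ((n : ℝ) + 1) * ‖z - T z‖ := by
      have := chernoff_dist_iter T hT z (n + 1)
      push_cast at this
      exact this
    have h7 := chernoff_analytic n t ht
    have h8 : Real.exp t * ‖f t - T^[n + 1] z‖
        ≤ ‖z - T z‖ * (((n : ℝ) + 1)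
          + ∫ s in (0:ℝ)..t, Real.exp s * Real.sqrt (s + ((n : ℝ) - s) ^ 2)) := by
      rw [mul_add]
      calc Real.exp t * ‖f t - T^[n + 1] z‖
          ≤ ‖z - T^[n + 1] z‖
            + ∫ s in (0:ℝ)..t, Real.exp s * ‖T (f (max s 0)) - T^[n + 1] z‖ := h1
        _ ≤ ((n : ℝ) + 1) * ‖z - T z‖
            + ‖z - T z‖ * ∫ s in (0:ℝ)..t,
                Real.exp s * Real.sqrt (s + ((n : ℝ) - s) ^ 2) := by
            rw [← h5]
            exact add_le_add h6 h2
        _ = ‖z - T z‖ * ((n : ℝ) + 1)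
            + ‖z - T z‖ * ∫ s in (0:ℝ)..t,
                Real.exp s * Real.sqrt (s + ((n : ℝ) - s) ^ 2) := by ring
    have h9 : Real.exp t * ‖f t - T^[n + 1] z‖
        ≤ ‖z - T z‖ * (Real.exp t * Real.sqrt (t + (((n : ℝ) + 1) - t) ^ 2)) :=
      h8.trans (mul_le_mul_of_nonneg_left h7 hC)
    have h10 : ‖f t - T^[n + 1] z‖
        ≤ ‖z - T z‖ * Real.sqrt (t + (((n : ℝ) + 1) - t) ^ 2) := by
      have hexp : 0 < Real.exp t := Real.exp_pos t
      nlinarith [h9, hexp]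
    push_cast
    exact h10
end

section
/- Let f be the solution of the evolution equation ḟ = (T − Id)f with f(0) = 0. Then for every natural number n ≥ 1, (1/n)·‖f(n) − T^[n](0)‖ ≤ ‖T(0)‖ / √n. -/
lemma chernoff_calc (k : ℕ) : ∀ t : ℝ, 0 ≤ t →
    ((k : ℝ) + 1) + (∫ s in (0:ℝ)..t, Real.exp s * Real.sqrt (((k:ℝ) - s)^2 + s)) ≤
      Real.exp t * Real.sqrt ((((k:ℝ) + 1) - t)^2 + t) := by
  intro t ht
  set c : ℝ := (k : ℝ) + 1 with hc
  set A : ℝ → ℝ := fun s => (c - s)^2 + s with hA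
  set B : ℝ → ℝ := fun s => ((k:ℝ) - s)^2 + s with hB
  have hk1 : (1:ℝ) ≤ c := by
    have : (0:ℝ) ≤ (k:ℝ) := Nat.cast_nonneg k
    linarith
  have hApos : ∀ s : ℝ, 0 < A s := by
    intro s
    show 0 < (c - s)^2 + s
    nlinarith [sq_nonneg (2*(c - s) - 1)]
  have hBnn : ∀ s : ℝ, 0 ≤ s → 0 ≤ B s := fun s hs => by positivity
  have hDA : ∀ s : ℝ, HasDerivAt A (1 - 2*(c - s)) s := by
    intro s
    have h1 := (((hasDerivAt_id s).const_sub c).pow 2).add (hasDerivAt_id s)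
    simp only [id_eq] at h1
    convert h1 using 1
    · rfl
    · rfl
    · rfl
    push_cast
    ring
  have hD : ∀ s : ℝ, HasDerivAt (fun s => Real.exp s * Real.sqrt (A s))
      (Real.exp s * Real.sqrt (A s) + Real.exp s * ((1 - 2*(c - s)) / (2 * Real.sqrt (A s)))) s := by
    intro s
    exact (Real.hasDerivAt_exp s).mul ((hDA s).sqrt (hApos s).ne')
  have hpt : ∀ s : ℝ, 0 ≤ s → Real.exp s * Real.sqrt (B s) ≤
      Real.exp s * Real.sqrt (A s) + Real.exp s * ((1 - 2*(c - s)) / (2 * Real.sqrt (A s))) := by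
    intro s hs
    have hX : 0 < Real.sqrt (A s) := Real.sqrt_pos.mpr (hApos s)
    have hX2 : Real.sqrt (A s) ^ 2 = A s := Real.sq_sqrt (hApos s).le
    have hY2 : Real.sqrt (B s) ^ 2 = B s := Real.sq_sqrt (hBnn s hs)
    have hY0 : 0 ≤ Real.sqrt (B s) := Real.sqrt_nonneg _
    have hAB : 1 - 2*(c - s) = B s - A s := by
      show 1 - 2*(c - s) = (((k:ℝ) - s)^2 + s) - ((c - s)^2 + s)
      rw [hc]; ring
    have amgm : 2 * Real.sqrt (A s) * Real.sqrt (B s) ≤ A s + B s := by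
      nlinarith [sq_nonneg (Real.sqrt (A s) - Real.sqrt (B s))]
    have key : Real.sqrt (B s) ≤ Real.sqrt (A s) + (1 - 2*(c - s)) / (2 * Real.sqrt (A s)) := by
      rw [hAB]
      have h1 : Real.sqrt (A s) + (B s - A s) / (2 * Real.sqrt (A s))
          = (A s + B s) / (2 * Real.sqrt (A s)) := by
        field_simp
        nlinarith [hX2]
      rw [h1, le_div_iff₀ (by positivity)]
      nlinarith [amgm]
    rw [← mul_add]
    exact mul_le_mul_of_nonneg_left key (Real.exp_pos s).le
  have hcB : Continuous B := (((continuous_const.sub continuous_id).pow 2).add continuous_id)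
  have hcA : Continuous A := (((continuous_const.sub continuous_id).pow 2).add continuous_id)
  have hcontB : Continuous fun s => Real.exp s * Real.sqrt (B s) :=
    Real.continuous_exp.mul (Real.continuous_sqrt.comp hcB)
  have hcontD : Continuous fun s => Real.exp s * Real.sqrt (A s) +
      Real.exp s * ((1 - 2*(c - s)) / (2 * Real.sqrt (A s))) := by
    have hsA : Continuous fun s => Real.sqrt (A s) := Real.continuous_sqrt.comp hcA
    refine (Real.continuous_exp.mul hsA).add (Real.continuous_exp.mul (Continuous.div ?_ ?_ ?_))
    · exact continuous_const.sub (continuous_const.mul (continuous_const.sub continuous_id))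
    · exact continuous_const.mul hsA
    · intro s
      have := Real.sqrt_pos.mpr (hApos s)
      positivity
  have hFTC : (∫ s in (0:ℝ)..t, (Real.exp s * Real.sqrt (A s) +
      Real.exp s * ((1 - 2*(c - s)) / (2 * Real.sqrt (A s)))))
      = Real.exp t * Real.sqrt (A t) - c := by
    rw [intervalIntegral.integral_eq_sub_of_hasDerivAt (fun s _ => hD s)
      (hcontD.intervalIntegrable 0 t)]
    have h0 : Real.sqrt (A 0) = c := by
      have h1 : A 0 = c^2 := by show (c - 0)^2 + 0 = c^2; ring
      rw [h1, Real.sqrt_sq (by linarith)]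
    rw [h0]
    simp
  have hmono : (∫ s in (0:ℝ)..t, Real.exp s * Real.sqrt (B s)) ≤
      (∫ s in (0:ℝ)..t, (Real.exp s * Real.sqrt (A s) +
        Real.exp s * ((1 - 2*(c - s)) / (2 * Real.sqrt (A s))))) := by
    apply intervalIntegral.integral_mono_on ht (hcontB.intervalIntegrable 0 t)
      (hcontD.intervalIntegrable 0 t)
    intro s hs
    exact hpt s hs.1
  have := hmono.trans hFTC.le
  linarith

lemma chernoff_int {Z : Type*} [NormedAddCommGroup Z] [NormedSpace ℝ Z] [CompleteSpace Z]
    (T : Z → Z) (hTc : Continuous T)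
    (f : ℝ → Z)
    (hf : ∀ t : ℝ, 0 ≤ t → HasDerivAt f (T (f t) - f t) t)
    (y : Z) (t : ℝ) (ht : 0 ≤ t) :
    Real.exp t * ‖f t - y‖ ≤ ‖f 0 - y‖ + ∫ s in (0:ℝ)..t, Real.exp s * ‖T (f s) - y‖ := by
  have huIcc : Set.uIcc (0:ℝ) t = Set.Icc 0 t := Set.uIcc_of_le ht
  set g : ℝ → Z := fun s => Real.exp s • (f s - y) with hg
  have hcf : ContinuousOn f (Set.Icc 0 t) := fun s hs =>
    ((hf s hs.1).continuousAt).continuousWithinAt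
  have hg' : ∀ s ∈ Set.uIcc (0:ℝ) t, HasDerivAt g (Real.exp s • (T (f s) - y)) s := by
    intro s hs
    rw [huIcc] at hs
    have h1 := (Real.hasDerivAt_exp s).smul ((hf s hs.1).sub_const y)
    convert h1 using 1
    · rfl
    rw [← smul_add]
    congr 1
    abel
  have hcont : ContinuousOn (fun s => Real.exp s • (T (f s) - y)) (Set.Icc 0 t) := by
    exact (Real.continuous_exp.continuousOn).smul (((hTc.comp_continuousOn hcf)).sub continuousOn_const)
  have hint : IntervalIntegrable (fun s => Real.exp s • (T (f s) - y)) MeasureTheory.volume 0 t := by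
    rw [intervalIntegrable_iff_integrableOn_Icc_of_le ht]
    exact hcont.integrableOn_compact isCompact_Icc
  have hFTC := intervalIntegral.integral_eq_sub_of_hasDerivAt hg' hint
  have hgt : g t = g 0 + ∫ s in (0:ℝ)..t, Real.exp s • (T (f s) - y) := by
    rw [hFTC]; abel
  have h1 : ‖g t‖ ≤ ‖g 0‖ + ‖∫ s in (0:ℝ)..t, Real.exp s • (T (f s) - y)‖ := by
    rw [hgt]; exact norm_add_le _ _
  have h2 : ‖∫ s in (0:ℝ)..t, Real.exp s • (T (f s) - y)‖ ≤
      ∫ s in (0:ℝ)..t, ‖Real.exp s • (T (f s) - y)‖ :=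
    intervalIntegral.norm_integral_le_integral_norm ht
  have h3 : (∫ s in (0:ℝ)..t, ‖Real.exp s • (T (f s) - y)‖) =
      ∫ s in (0:ℝ)..t, Real.exp s * ‖T (f s) - y‖ := by
    apply intervalIntegral.integral_congr
    intro s _
    simp only []
    rw [norm_smul, Real.norm_eq_abs, abs_of_pos (Real.exp_pos s)]
  have hg0 : ‖g 0‖ = ‖f 0 - y‖ := by simp [hg]
  have hgtn : ‖g t‖ = Real.exp t * ‖f t - y‖ := by
    rw [hg]
    simp only [norm_smul, Real.norm_eq_abs, abs_of_pos (Real.exp_pos t)]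
  rw [← hgtn, ← hg0]
  calc ‖g t‖ ≤ ‖g 0‖ + ‖∫ s in (0:ℝ)..t, Real.exp s • (T (f s) - y)‖ := h1
    _ ≤ ‖g 0‖ + ∫ s in (0:ℝ)..t, Real.exp s * ‖T (f s) - y‖ := by rw [← h3]; linarith

open Set Filter Topology

lemma chernoff_shift {Z : Type*} [NormedAddCommGroup Z] [NormedSpace ℝ Z]
    (T : Z → Z) (hT : ∀ x y : Z, ‖T x - T y‖ ≤ ‖x - y‖)
    (f : ℝ → Z)
    (hf : ∀ t : ℝ, 0 ≤ t → HasDerivAt f (T (f t) - f t) t)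
    (h : ℝ) (hh : 0 ≤ h) (t : ℝ) (ht : 0 ≤ t) :
    ‖f t - f (t + h)‖ ≤ ‖f 0 - f h‖ := by
  set v : ℝ → Z := fun s => Real.exp s • (f s - f (s + h)) with hv
  have hv' : ∀ s : ℝ, 0 ≤ s → HasDerivAt v (Real.exp s • (T (f s) - T (f (s + h)))) s := by
    intro s hs
    have h2 : HasDerivAt (fun u => f (u + h)) (T (f (s + h)) - f (s + h)) s :=
      HasDerivAt.comp_add_const s h (hf (s + h) (by linarith))
    have h1 := (Real.hasDerivAt_exp s).smul ((hf s hs).sub h2)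
    convert h1 using 1
    · rfl
    rw [← smul_add]
    congr 1
    simp only [Pi.sub_apply]
    abel
  have hvcont : ContinuousOn v (Icc 0 t) := fun s hs =>
    ((hv' s hs.1).continuousAt).continuousWithinAt
  have := norm_le_gronwallBound_of_norm_deriv_right_le (f := v)
    (f' := fun s => Real.exp s • (T (f s) - T (f (s + h)))) (δ := ‖v 0‖) (K := 1) (ε := 0)
    (a := 0) (b := t) hvcont
    (fun x hx => (hv' x hx.1).hasDerivWithinAt)
    le_rfl
    (fun x hx => by
      rw [norm_smul, Real.norm_eq_abs, abs_of_pos (Real.exp_pos x)]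
      have h1 : ‖T (f x) - T (f (x + h))‖ ≤ ‖f x - f (x + h)‖ := hT _ _
      have h2 : ‖v x‖ = Real.exp x * ‖f x - f (x + h)‖ := by
        rw [hv]; simp only []
        rw [norm_smul, Real.norm_eq_abs, abs_of_pos (Real.exp_pos x)]
      rw [one_mul, add_zero, h2]
      exact mul_le_mul_of_nonneg_left h1 (Real.exp_pos x).le)
    t ⟨ht, le_rfl⟩
  rw [gronwallBound_ε0] at this
  have hvt : ‖v t‖ = Real.exp t * ‖f t - f (t + h)‖ := by
    rw [hv]; simp only []
    rw [norm_smul, Real.norm_eq_abs, abs_of_pos (Real.exp_pos t)]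
  have hv0 : ‖v 0‖ = ‖f 0 - f h‖ := by
    rw [hv]; simp
  rw [hvt, hv0] at this
  have hexp : (0:ℝ) < Real.exp t := Real.exp_pos t
  have : Real.exp t * ‖f t - f (t + h)‖ ≤ ‖f 0 - f h‖ * Real.exp t := by
    simpa [sub_zero, one_mul] using this
  nlinarith [this]

lemma chernoff_deriv_bound {Z : Type*} [NormedAddCommGroup Z] [NormedSpace ℝ Z]
    (T : Z → Z) (hT : ∀ x y : Z, ‖T x - T y‖ ≤ ‖x - y‖)
    (f : ℝ → Z)
    (hf : ∀ t : ℝ, 0 ≤ t → HasDerivAt f (T (f t) - f t) t)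
    (t : ℝ) (ht : 0 ≤ t) :
    ‖T (f t) - f t‖ ≤ ‖T (f 0) - f 0‖ := by
  have hne : (𝓝[>] t).NeBot := nhdsGT_neBot t
  have hslope_t : Tendsto (fun y => ‖slope f t y‖) (𝓝[>] t) (𝓝 ‖T (f t) - f t‖) := by
    have := (hasDerivAt_iff_tendsto_slope.mp (hf t ht)).mono_left
      (nhdsWithin_mono t (fun y (hy : y ∈ Ioi t) => hy.ne'))
    exact (continuous_norm.tendsto _).comp this
  have hmap : Tendsto (fun y => y - t) (𝓝[>] t) (𝓝[>] (0:ℝ)) := by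
    rw [tendsto_nhdsWithin_iff]
    constructor
    · have : Tendsto (fun y : ℝ => y - t) (𝓝 t) (𝓝 (t - t)) :=
        (continuous_id.sub continuous_const).tendsto t
      rw [sub_self] at this
      exact this.mono_left nhdsWithin_le_nhds
    · filter_upwards [self_mem_nhdsWithin] with y (hy : y ∈ Ioi t)
      exact sub_pos.mpr (show t < y from hy)
  have hslope_0 : Tendsto (fun y => ‖slope f 0 (y - t)‖) (𝓝[>] t) (𝓝 ‖T (f 0) - f 0‖) := by
    have h0 : Tendsto (fun u => ‖slope f 0 u‖) (𝓝[>] (0:ℝ)) (𝓝 ‖T (f 0) - f 0‖) := by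
      have := (hasDerivAt_iff_tendsto_slope.mp (hf 0 le_rfl)).mono_left
        (nhdsWithin_mono 0 (fun y (hy : y ∈ Ioi (0:ℝ)) => hy.ne'))
      exact (continuous_norm.tendsto _).comp this
    exact h0.comp hmap
  refine le_of_tendsto_of_tendsto hslope_t hslope_0 ?_
  filter_upwards [self_mem_nhdsWithin] with y (hy : y ∈ Ioi t)
  have hyt : (0:ℝ) < y - t := sub_pos.mpr hy
  have hsh := chernoff_shift T hT f hf (y - t) hyt.le t ht
  rw [show t + (y - t) = y by ring] at hsh
  rw [slope_def_module, slope_def_module, sub_zero, norm_smul, norm_smul,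
    Real.norm_eq_abs, abs_of_pos (inv_pos.mpr hyt)]
  apply mul_le_mul_of_nonneg_left _ (inv_pos.mpr hyt).le
  rw [norm_sub_rev, norm_sub_rev (f (y - t))]
  exact hsh


/-- If `f` solves `ḟ = (T - Id) f` with `f 0 = 0` for a nonexpansive map `T`,
then for every `n ≥ 1`, `(1/n) ‖f n - T^[n] 0‖ ≤ ‖T 0‖ / √n`. -/
theorem chernoff_normalized
    {Z : Type*} [NormedAddCommGroup Z] [NormedSpace ℝ Z] [CompleteSpace Z]
    (T : Z → Z) (hT : ∀ x y : Z, ‖T x - T y‖ ≤ ‖x - y‖)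
    (f : ℝ → Z) (hf0 : f 0 = 0)
    (hf : ∀ t : ℝ, 0 ≤ t → HasDerivAt f (T (f t) - f t) t)
    (n : ℕ) (hn : 1 ≤ n) :
    (1 / (n : ℝ)) * ‖f (n : ℝ) - T^[n] 0‖ ≤ ‖T 0‖ / Real.sqrt (n : ℝ) := by
  have hTc : Continuous T := by
    have : LipschitzWith 1 T := LipschitzWith.of_dist_le_mul fun x y => by
      simpa [dist_eq_norm] using hT x y
    exact this.continuous
  set c : ℝ := ‖T 0‖ with hcdef
  have hc0 : 0 ≤ c := norm_nonneg _
  -- iterate increments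
  have hit : ∀ k : ℕ, ‖T^[k+1] 0 - T^[k] 0‖ ≤ c := by
    intro k
    induction k with
    | zero => simp [hcdef]
    | succ k ih =>
      rw [Function.iterate_succ_apply' T (k+1)]
      rw [Function.iterate_succ_apply' T k] at ih ⊢
      exact (hT _ _).trans ih
  have hitn : ∀ k : ℕ, ‖T^[k] 0‖ ≤ k * c := by
    intro k
    induction k with
    | zero => simp
    | succ k ih =>
      have h1 : ‖T^[k+1] 0‖ ≤ ‖T^[k+1] 0 - T^[k] 0‖ + ‖T^[k] 0‖ := by
        have := norm_add_le (T^[k+1] 0 - T^[k] 0) (T^[k] 0)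
        simpa using this
      have := (h1.trans (add_le_add (hit k) ih))
      push_cast
      linarith
  -- base case bound
  have hbase : ∀ t : ℝ, 0 ≤ t → ‖f t‖ ≤ c * t := by
    intro t ht
    have hder : ∀ x ∈ Set.Ici (0:ℝ), HasDerivWithinAt f (T (f x) - f x) (Set.Ici 0) x :=
      fun x hx => (hf x hx).hasDerivWithinAt
    have hbd : ∀ x ∈ Set.Ici (0:ℝ), ‖T (f x) - f x‖ ≤ c := by
      intro x hx
      have := chernoff_deriv_bound T hT f hf x hx
      rwa [hf0, sub_zero] at this
    have := (convex_Ici (0:ℝ)).norm_image_sub_le_of_norm_hasDerivWithin_le hder hbd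
      (Set.self_mem_Ici) ht
    rw [hf0, sub_zero, sub_zero, Real.norm_eq_abs, abs_of_nonneg ht] at this
    exact this
  -- main induction
  have main : ∀ k : ℕ, ∀ t : ℝ, 0 ≤ t →
      ‖f t - T^[k] 0‖ ≤ c * Real.sqrt (((k:ℝ) - t)^2 + t) := by
    intro k
    induction k with
    | zero =>
      intro t ht
      simp only [Function.iterate_zero, id_eq, sub_zero, Nat.cast_zero, zero_sub]
      have h1 : ‖f t‖ ≤ c * t := hbase t ht
      have h2 : t ≤ Real.sqrt ((-t)^2 + t) := by
        rw [show (-t)^2 = t^2 by ring]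
        calc t = Real.sqrt (t^2) := (Real.sqrt_sq ht).symm
          _ ≤ Real.sqrt (t^2 + t) := Real.sqrt_le_sqrt (by linarith)
      calc ‖f t‖ ≤ c * t := h1
        _ ≤ c * Real.sqrt ((-t)^2 + t) := mul_le_mul_of_nonneg_left h2 hc0
    | succ k ih =>
      intro t ht
      set y : Z := T^[k+1] 0 with hy
      have hint := chernoff_int T hTc f hf y t ht
      rw [hf0, zero_sub, norm_neg] at hint
      set B : ℝ → ℝ := fun s => ((k:ℝ) - s)^2 + s with hB
      have hcfy : ContinuousOn (fun s => Real.exp s * ‖T (f s) - y‖) (Set.uIcc 0 t) := by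
        rw [Set.uIcc_of_le ht]
        have hcf : ContinuousOn f (Set.Icc 0 t) := fun s hs =>
          ((hf s hs.1).continuousAt).continuousWithinAt
        exact (Real.continuous_exp.continuousOn).mul
          (((hTc.comp_continuousOn hcf).sub continuousOn_const).norm)
      have hcB : Continuous fun s => Real.exp s * (c * Real.sqrt (B s)) := by
        apply Real.continuous_exp.mul
        apply continuous_const.mul
        exact Real.continuous_sqrt.comp
          (((continuous_const.sub continuous_id).pow 2).add continuous_id)
      have hmono : (∫ s in (0:ℝ)..t, Real.exp s * ‖T (f s) - y‖) ≤
          ∫ s in (0:ℝ)..t, Real.exp s * (c * Real.sqrt (B s)) := by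
        apply intervalIntegral.integral_mono_on ht (hcfy.intervalIntegrable)
          (hcB.intervalIntegrable 0 t)
        intro s hs
        have h1 : ‖T (f s) - y‖ ≤ ‖f s - T^[k] 0‖ := by
          rw [hy, Function.iterate_succ_apply' T k]
          exact hT _ _
        have h2 := ih s hs.1
        exact mul_le_mul_of_nonneg_left (h1.trans h2) (Real.exp_pos s).le
      have hintc : (∫ s in (0:ℝ)..t, Real.exp s * (c * Real.sqrt (B s)))
          = c * ∫ s in (0:ℝ)..t, Real.exp s * Real.sqrt (B s) := by
        rw [← intervalIntegral.integral_const_mul]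
        apply intervalIntegral.integral_congr
        intro s _
        ring
      have hcalc := chernoff_calc k t ht
      have hyb : ‖y‖ ≤ ((k:ℝ) + 1) * c := by
        have := hitn (k+1)
        push_cast at this
        exact this
      have hfinal : Real.exp t * ‖f t - y‖ ≤
          c * (Real.exp t * Real.sqrt ((((k:ℝ) + 1) - t)^2 + t)) := by
        have h3 := mul_le_mul_of_nonneg_left hcalc hc0
        rw [hintc] at hmono
        nlinarith [hint, hmono]
      have h4 : ‖f t - y‖ ≤ c * Real.sqrt ((((k:ℝ) + 1) - t)^2 + t) := by
        have hexp : (0:ℝ) < Real.exp t := Real.exp_pos t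
        nlinarith [hfinal]
      have : ((k:ℕ)+1 : ℝ) = (k:ℝ) + 1 := by push_cast; ring
      convert h4 using 3 <;> push_cast <;> ring
  -- conclusion
  have hn0 : (0:ℝ) < n := by
    have : (1:ℝ) ≤ (n:ℝ) := by exact_mod_cast hn
    linarith
  have hm := main n n (le_of_lt hn0)
  have hs : Real.sqrt (((n:ℝ) - (n:ℝ))^2 + (n:ℝ)) = Real.sqrt (n:ℝ) := by
    rw [sub_self]
    norm_num
  rw [hs] at hm
  have hsn : (0:ℝ) < Real.sqrt (n:ℝ) := Real.sqrt_pos.mpr hn0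
  have heq : c * Real.sqrt (n:ℝ) / (n:ℝ) = c / Real.sqrt (n:ℝ) := by
    rw [div_eq_div_iff hn0.ne' hsn.ne']
    rw [mul_assoc, Real.mul_self_sqrt hn0.le]
  calc (1 / (n:ℝ)) * ‖f (n:ℝ) - T^[n] 0‖
      ≤ (1 / (n:ℝ)) * (c * Real.sqrt (n:ℝ)) := by
        apply mul_le_mul_of_nonneg_left hm
        positivity
    _ = c * Real.sqrt (n:ℝ) / (n:ℝ) := by ring
    _ = c / Real.sqrt (n:ℝ) := heq
end

section
/- Let (h_k)_{k≥1} be a sequence in [0,1], let z ∈ Z, and let (z_k) be the Eulerian scheme z_0 = z, z_{k+1} = (1 − h_{k+1})·z_k + h_{k+1}·T(z_k). Set σ_k = Σ_{i=1}^k h_i and τ_k = Σ_{i=1}^k h_i². Let f be the solution of the evolution equation ḟ = (T − Id)f with f(0) = z. Then for every t ≥ 0 and every k: ‖f(t) − z_k‖ ≤ ‖z − T(z)‖ · √((σ_k − t)² + τ_k). -/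
set_option maxHeartbeats 1000000

section aux

variable {Z : Type*} [NormedAddCommGroup Z] [NormedSpace ℝ Z]

lemma flow_shift_contract
    (T : Z → Z) (hT : ∀ x y : Z, ‖T x - T y‖ ≤ ‖x - y‖)
    (f : ℝ → Z)
    (hf : ∀ t : ℝ, 0 ≤ t → HasDerivAt f (T (f t) - f t) t)
    (ε : ℝ) (hε : 0 ≤ ε) (t : ℝ) (ht : 0 ≤ t) :
    ‖f (t + ε) - f t‖ ≤ ‖f ε - f 0‖ := by
  set F : ℝ → Z := fun s => Real.exp s • (f (s + ε) - f s) with hF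
  have hderiv : ∀ s ∈ Set.Icc (0:ℝ) t,
      HasDerivAt F (Real.exp s • (T (f (s + ε)) - T (f s))) s := by
    intro s hs
    have h1 : HasDerivAt (fun s => f (s + ε)) (T (f (s + ε)) - f (s + ε)) s := by
      exact (hf (s + ε) (by linarith [hs.1])).comp_add_const s ε
    have h2 := hf s hs.1
    have h3 : HasDerivAt (fun s => f (s + ε) - f s)
        ((T (f (s + ε)) - f (s + ε)) - (T (f s) - f s)) s := h1.sub h2
    have h4 := (Real.hasDerivAt_exp s).smul h3
    convert h4 using 1
    · rfl
    simp [smul_sub, smul_add]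
    abel
  have hcont : ContinuousOn F (Set.Icc 0 t) := fun s hs =>
    ((hderiv s hs).continuousAt).continuousWithinAt
  have hgb := norm_le_gronwallBound_of_norm_deriv_right_le (K := 1) (ε := 0)
      (δ := ‖F 0‖) hcont
      (fun s hs => (hderiv s (Set.mem_Icc.2 ⟨hs.1, le_of_lt hs.2⟩)).hasDerivWithinAt)
      le_rfl
      (fun s hs => by
        have := hT (f (s + ε)) (f s)
        have hns : ‖Real.exp s • (T (f (s + ε)) - T (f s))‖
            = Real.exp s * ‖T (f (s + ε)) - T (f s)‖ := by
          rw [norm_smul, Real.norm_eq_abs, abs_of_pos (Real.exp_pos s)]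
        have hFs : ‖F s‖ = Real.exp s * ‖f (s + ε) - f s‖ := by
          rw [hF]; simp [norm_smul, abs_of_pos (Real.exp_pos s)]
        rw [hns, hFs]
        nlinarith [Real.exp_pos s, hT (f (s + ε)) (f s), norm_nonneg (f (s+ε) - f s)])
      t (Set.mem_Icc.2 ⟨ht, le_rfl⟩)
  rw [gronwallBound_ε0] at hgb
  have hF0 : ‖F 0‖ = ‖f ε - f 0‖ := by simp [hF]
  have hFt : ‖F t‖ = Real.exp t * ‖f (t + ε) - f t‖ := by
    simp [hF, norm_smul, abs_of_pos (Real.exp_pos t)]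
  rw [hF0, hFt] at hgb
  have hexp := Real.exp_pos t
  calc ‖f (t + ε) - f t‖ = (Real.exp t * ‖f (t + ε) - f t‖) / Real.exp t := by
        field_simp
    _ ≤ (‖f ε - f 0‖ * Real.exp (1 * (t - 0))) / Real.exp t := by
        gcongr
    _ = ‖f ε - f 0‖ := by simp [Real.exp_ne_zero]

lemma flow_deriv_norm_le
    (T : Z → Z) (hT : ∀ x y : Z, ‖T x - T y‖ ≤ ‖x - y‖)
    (f : ℝ → Z)
    (hf : ∀ t : ℝ, 0 ≤ t → HasDerivAt f (T (f t) - f t) t)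
    (t : ℝ) (ht : 0 ≤ t) :
    ‖T (f t) - f t‖ ≤ ‖T (f 0) - f 0‖ := by
  have hshift : ∀ ε ≥ (0:ℝ), ∀ t ≥ (0:ℝ), ‖f (t + ε) - f t‖ ≤ ‖f ε - f 0‖ :=
    fun ε hε t ht => flow_shift_contract T hT f hf ε hε t ht
  have hslope_t : Filter.Tendsto (slope f t) (nhdsWithin t (Set.Ioi t))
      (nhds (T (f t) - f t)) := by
    have := (hasDerivAt_iff_tendsto_slope.1 (hf t ht))
    exact this.mono_left (nhdsWithin_mono t (fun y hy => ne_of_gt hy))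
  have hslope_0 : Filter.Tendsto (fun y => slope f 0 (y - t)) (nhdsWithin t (Set.Ioi t))
      (nhds (T (f 0) - f 0)) := by
    have h0 : Filter.Tendsto (slope f 0) (nhdsWithin 0 (Set.Ioi 0))
        (nhds (T (f 0) - f 0)) := by
      have := (hasDerivAt_iff_tendsto_slope.1 (hf 0 le_rfl))
      exact this.mono_left (nhdsWithin_mono 0 (fun y hy => ne_of_gt hy))
    apply h0.comp
    apply tendsto_nhdsWithin_of_tendsto_nhds_of_eventually_within
    · exact (by simpa using (continuous_sub_right t).tendsto t :
        Filter.Tendsto (fun y => y - t) (nhds t) (nhds 0)).mono_left nhdsWithin_le_nhds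
    · filter_upwards [self_mem_nhdsWithin] with y hy
      simp only [Set.mem_Ioi] at *
      linarith
  have hle : ∀ᶠ y in nhdsWithin t (Set.Ioi t), ‖slope f t y‖ ≤ ‖slope f 0 (y - t)‖ := by
    filter_upwards [self_mem_nhdsWithin] with y hy
    have hyt : t < y := hy
    have h1 : slope f t y = (y - t)⁻¹ • (f y - f t) := rfl
    have h2 : slope f 0 (y - t) = (y - t - 0)⁻¹ • (f (y - t) - f 0) := rfl
    rw [h1, h2, norm_smul, norm_smul, sub_zero]
    apply mul_le_mul_of_nonneg_left _ (norm_nonneg _)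
    have := hshift (y - t) (by linarith) t ht
    have he : t + (y - t) = y := by ring
    rw [he] at this
    exact this
  exact le_of_tendsto_of_tendsto hslope_t.norm hslope_0.norm hle

end aux

/-- Comparison of an Eulerian scheme with the solution of `ḟ = (T - Id) f`
(Vigeral): `‖f t - z_k‖ ≤ ‖z - T z‖ √((σ_k - t)² + τ_k)`. -/
theorem eulerian_scheme_vs_flow
    {Z : Type*} [NormedAddCommGroup Z] [NormedSpace ℝ Z] [CompleteSpace Z]
    (T : Z → Z) (hT : ∀ x y : Z, ‖T x - T y‖ ≤ ‖x - y‖)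
    (h : ℕ → ℝ) (hh : ∀ i, h i ∈ Set.Icc (0 : ℝ) 1)
    (z : Z) (zs : ℕ → Z) (hz0 : zs 0 = z)
    (hz : ∀ k, zs (k + 1) = (1 - h (k + 1)) • zs k + h (k + 1) • T (zs k))
    (f : ℝ → Z) (hf0 : f 0 = z)
    (hf : ∀ t : ℝ, 0 ≤ t → HasDerivAt f (T (f t) - f t) t)
    (t : ℝ) (ht : 0 ≤ t) (k : ℕ) :
    ‖f t - zs k‖ ≤ ‖z - T z‖ *
      Real.sqrt ((∑ i ∈ Finset.range k, h (i + 1) - t) ^ 2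
        + ∑ i ∈ Finset.range k, (h (i + 1)) ^ 2) := by
  have hC0 : (0:ℝ) ≤ ‖z - T z‖ := norm_nonneg _
  have hCrev : ‖T z - z‖ = ‖z - T z‖ := norm_sub_rev _ _
  have hTlip : LipschitzWith 1 T := by
    apply LipschitzWith.of_dist_le_mul
    intro x y
    rw [dist_eq_norm, dist_eq_norm]
    simpa using hT x y
  -- discrete: displacement nonincreasing
  have hC1 : ∀ j, ‖T (zs j) - zs j‖ ≤ ‖z - T z‖ := by
    intro j
    induction j with
    | zero => rw [hz0, hCrev]
    | succ j ih =>
      obtain ⟨ha0, ha1⟩ := hh (j + 1)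
      set a := h (j + 1) with ha
      have hstep : zs (j+1) - zs j = a • (T (zs j) - zs j) := by
        rw [hz j]; module
      have hd : ‖zs (j+1) - zs j‖ = a * ‖T (zs j) - zs j‖ := by
        rw [hstep, norm_smul, Real.norm_eq_abs, abs_of_nonneg ha0]
      have hsplit : T (zs (j+1)) - zs (j+1)
          = (1 - a) • (T (zs (j+1)) - zs j) + a • (T (zs (j+1)) - T (zs j)) := by
        rw [hz j]; module
      have e1 : ‖T (zs (j+1)) - zs (j+1)‖
          ≤ (1-a) * ‖T (zs (j+1)) - zs j‖ + a * ‖T (zs (j+1)) - T (zs j)‖ := by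
        rw [hsplit]
        refine (norm_add_le _ _).trans ?_
        rw [norm_smul, norm_smul, Real.norm_eq_abs, Real.norm_eq_abs,
          abs_of_nonneg (by linarith), abs_of_nonneg ha0]
      have e2 : ‖T (zs (j+1)) - T (zs j)‖ ≤ a * ‖T (zs j) - zs j‖ := by
        calc ‖T (zs (j+1)) - T (zs j)‖ ≤ ‖zs (j+1) - zs j‖ := hT _ _
          _ = a * ‖T (zs j) - zs j‖ := hd
      have e3 : ‖T (zs (j+1)) - zs j‖
          ≤ a * ‖T (zs j) - zs j‖ + ‖T (zs j) - zs j‖ := by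
        calc ‖T (zs (j+1)) - zs j‖
            ≤ ‖T (zs (j+1)) - T (zs j)‖ + ‖T (zs j) - zs j‖ := norm_sub_le_norm_sub_add_norm_sub _ _ _
          _ ≤ a * ‖T (zs j) - zs j‖ + ‖T (zs j) - zs j‖ := by linarith [e2]
      nlinarith [norm_nonneg (T (zs j) - zs j)]
  -- discrete: distance to start
  have hC2 : ∀ j, ‖z - zs j‖ ≤ ‖z - T z‖ * ∑ i ∈ Finset.range j, h (i + 1) := by
    intro j
    induction j with
    | zero => simp [hz0]
    | succ j ih =>
      obtain ⟨ha0, ha1⟩ := hh (j + 1)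
      have hstep : zs (j+1) - zs j = h (j+1) • (T (zs j) - zs j) := by
        rw [hz j]; module
      have hd : ‖zs (j+1) - zs j‖ = h (j+1) * ‖T (zs j) - zs j‖ := by
        rw [hstep, norm_smul, Real.norm_eq_abs, abs_of_nonneg ha0]
      rw [Finset.sum_range_succ, mul_add]
      calc ‖z - zs (j+1)‖ ≤ ‖z - zs j‖ + ‖zs j - zs (j+1)‖ := by
            have := norm_add_le (z - zs j) (zs j - zs (j+1))
            simpa using this
        _ ≤ ‖z - T z‖ * ∑ i ∈ Finset.range j, h (i+1) + ‖z - T z‖ * h (j+1) := by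
            have : ‖zs j - zs (j+1)‖ = h (j+1) * ‖T (zs j) - zs j‖ := by
              rw [← hd, norm_sub_rev]
            rw [this]
            have := hC1 j
            have := mul_le_mul_of_nonneg_left (hC1 j) ha0
            nlinarith [ih]
  -- flow speed bound
  have hB : ∀ s : ℝ, 0 ≤ s → ‖T (f s) - f s‖ ≤ ‖z - T z‖ := by
    intro s hs
    have := flow_deriv_norm_le T hT f hf s hs
    rwa [hf0, hCrev] at this
  have hfc : ∀ u : ℝ, 0 ≤ u → ContinuousOn f (Set.Icc 0 u) := by
    intro u hu s hs
    exact ((hf s hs.1).continuousAt).continuousWithinAt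
  induction k generalizing t ht with
  | zero =>
    simp only [Finset.range_zero, Finset.sum_empty, hz0, add_zero, zero_sub, neg_sq]
    rw [Real.sqrt_sq ht]
    have hmean : ‖f t - f 0‖ ≤ ‖z - T z‖ * ‖t - (0:ℝ)‖ := by
      apply Convex.norm_image_sub_le_of_norm_hasDerivWithin_le
        (f' := fun s => T (f s) - f s)
        (fun s hs => (hf s hs.1).hasDerivWithinAt)
        (fun s hs => hB s hs.1) (convex_Icc 0 t)
        (Set.mem_Icc.2 ⟨le_rfl, ht⟩) (Set.mem_Icc.2 ⟨ht, le_rfl⟩)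
    rw [hf0] at hmean
    calc ‖f t - z‖ ≤ ‖z - T z‖ * ‖t - (0:ℝ)‖ := hmean
      _ = ‖z - T z‖ * t := by rw [sub_zero, Real.norm_eq_abs, abs_of_nonneg ht]
  | succ k ih =>
    rw [Finset.sum_range_succ, Finset.sum_range_succ]
    obtain ⟨ha0, ha1⟩ := hh (k + 1)
    set a := h (k + 1) with hadef
    set σk : ℝ := ∑ i ∈ Finset.range k, h (i + 1) with hσ
    set τk : ℝ := ∑ i ∈ Finset.range k, (h (i + 1))^2 with hτ
    have hσk0 : 0 ≤ σk := Finset.sum_nonneg fun i _ => (hh (i+1)).1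
    have hτk0 : 0 ≤ τk := Finset.sum_nonneg fun i _ => sq_nonneg _
    rcases eq_or_lt_of_le ha0 with heq | hpos
    · -- a = 0 : trivial step
      have hz1 : zs (k+1) = zs k := by rw [hz k, ← hadef, ← heq]; simp
      rw [hz1, ← heq]
      simpa using ih t ht
    · -- main case
      set C := ‖z - T z‖ with hCdef
      set Q : ℝ → ℝ := fun s => (σk + a - s)^2 + (τk + a^2) with hQdef
      set R : ℝ → ℝ := fun s => (σk - s)^2 + τk with hRdef
      have hQpos : ∀ s, 0 < Q s := fun s => by positivity
      have hRnn : ∀ s, 0 ≤ R s := fun s => by positivity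
      set W : ℝ → Z := fun s => Real.exp (s / a) • (f s - zs (k+1)) with hWdef
      set W' : ℝ → Z := fun s =>
        Real.exp (s / a) • ((1/a) • (f s - zs (k+1)) + (T (f s) - f s)) with hW'def
      set B : ℝ → ℝ := fun s => Real.exp (s / a) * (C * Real.sqrt (Q s)) with hBdef
      set B' : ℝ → ℝ := fun s =>
        Real.exp (s / a) * (1/a) * (C * Real.sqrt (Q s))
          + Real.exp (s / a) * (C * ((2 * (σk + a - s)^1 * (-1)) / (2 * Real.sqrt (Q s))))
        with hB'def
      have hexpd : ∀ s : ℝ, HasDerivAt (fun u => Real.exp (u / a))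
          (Real.exp (s / a) * (1/a)) s := by
        intro s
        have := (Real.hasDerivAt_exp (s/a)).comp s ((hasDerivAt_id s).div_const a)
        simpa [Function.comp_def] using this
      have hWd : ∀ s ∈ Set.Icc (0:ℝ) t, HasDerivAt W (W' s) s := by
        intro s hs
        have h1 : HasDerivAt (fun u => f u - zs (k+1)) (T (f s) - f s) s :=
          (hf s hs.1).sub_const _
        have h2 := (hexpd s).smul h1
        convert h2 using 1
        · rfl
        rw [hW'def]
        simp only [smul_add, smul_smul]
        rw [mul_comm (Real.exp (s/a)) (1/a)]
        ring_nf
        module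
      have hQd : ∀ s : ℝ, HasDerivAt Q (2 * (σk + a - s)^1 * (-1)) s := by
        intro s
        exact (((hasDerivAt_id s).const_sub (σk + a)).pow 2).add_const _
      have hBd : ∀ s : ℝ, HasDerivAt B (B' s) s := by
        intro s
        exact (hexpd s).mul (((hQd s).sqrt (ne_of_gt (hQpos s))).const_mul C)
      -- key pointwise inequality
      have hkey : ∀ s : ℝ, C / a * Real.exp (s / a) * Real.sqrt (R s) ≤ B' s := by
        intro s
        set q := Real.sqrt (Q s) with hqdef
        have hq : 0 < q := Real.sqrt_pos.2 (hQpos s)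
        have hq2 : q^2 = Q s := Real.sq_sqrt (hQpos s).le
        have hQR : R s = Q s - 2*a*((σk + a) - s) := by
          simp only [hQdef, hRdef]; ring
        have hLHSpos : 0 < Q s + a * (s - (σk + a)) := by
          simp only [hQdef]
          nlinarith [sq_nonneg (σk + a - s - a/2), hpos.le, hτk0]
        have hprod : Real.sqrt (R s) * q ≤ Q s + a * (s - (σk + a)) := by
          have h1 : Real.sqrt (R s) * q = Real.sqrt (R s * Q s) := by
            rw [Real.sqrt_mul (hRnn s)]
          rw [h1]
          calc Real.sqrt (R s * Q s) ≤ Real.sqrt ((Q s + a * (s - (σk + a)))^2) := by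
                apply Real.sqrt_le_sqrt
                rw [hQR]
                nlinarith [sq_nonneg (a * ((σk + a) - s))]
            _ = Q s + a * (s - (σk + a)) := Real.sqrt_sq hLHSpos.le
        have hmul : C / a * Real.exp (s/a) * Real.sqrt (R s) * (a * q)
            ≤ B' s * (a * q) := by
          have e1 : C / a * Real.exp (s/a) * Real.sqrt (R s) * (a * q)
              = (C * Real.exp (s/a)) * (Real.sqrt (R s) * q) := by
            field_simp
          have e2 : B' s * (a * q)
              = (C * Real.exp (s/a)) * (Q s + a * (s - (σk + a))) := by
            have hqne : q ≠ 0 := hq.ne'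
            rw [show B' s = Real.exp (s / a) * (1/a) * (C * q)
              + Real.exp (s / a) * (C * ((2 * (σk + a - s)^1 * (-1)) / (2 * q))) from rfl, ← hq2]
            field_simp
            ring
          rw [e1, e2]
          apply mul_le_mul_of_nonneg_left hprod (by positivity)
        exact le_of_mul_le_mul_right hmul (by positivity)
      -- norm bound on W'
      have hWnorm : ∀ s ∈ Set.Icc (0:ℝ) t,
          ‖W' s‖ ≤ C / a * Real.exp (s / a) * Real.sqrt (R s) := by
        intro s hs
        have hvec : (1/a) • (f s - zs (k+1)) + (T (f s) - f s)
            = ((1-a)/a) • (f s - zs k) + (T (f s) - T (zs k)) := by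
          rw [hz k, ← hadef]
          match_scalars <;> (field_simp; try ring)
        have hinner : ‖(1/a) • (f s - zs (k+1)) + (T (f s) - f s)‖
            ≤ (1/a) * ‖f s - zs k‖ := by
          rw [hvec]
          calc ‖((1-a)/a) • (f s - zs k) + (T (f s) - T (zs k))‖
              ≤ ‖((1-a)/a) • (f s - zs k)‖ + ‖T (f s) - T (zs k)‖ := norm_add_le _ _
            _ ≤ ((1-a)/a) * ‖f s - zs k‖ + ‖f s - zs k‖ := by
                have h1 : ‖((1-a)/a) • (f s - zs k)‖ = ((1-a)/a) * ‖f s - zs k‖ := by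
                  rw [norm_smul, Real.norm_eq_abs,
                    abs_of_nonneg (by apply div_nonneg <;> linarith)]
                rw [h1]
                exact add_le_add le_rfl (hT _ _)
            _ = (1/a) * ‖f s - zs k‖ := by field_simp; ring
        have hWnr : ‖W' s‖ = Real.exp (s/a)
            * ‖(1/a) • (f s - zs (k+1)) + (T (f s) - f s)‖ := by
          rw [hW'def, norm_smul, Real.norm_eq_abs, abs_of_pos (Real.exp_pos _)]
        rw [hWnr]
        have hih := ih s hs.1
        calc Real.exp (s/a) * ‖(1/a) • (f s - zs (k+1)) + (T (f s) - f s)‖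
            ≤ Real.exp (s/a) * ((1/a) * ‖f s - zs k‖) := by
              apply mul_le_mul_of_nonneg_left hinner (Real.exp_pos _).le
          _ ≤ Real.exp (s/a) * ((1/a) * (C * Real.sqrt (R s))) := by
              apply mul_le_mul_of_nonneg_left _ (Real.exp_pos _).le
              apply mul_le_mul_of_nonneg_left _ (by positivity)
              exact hih
          _ = C / a * Real.exp (s/a) * Real.sqrt (R s) := by ring
      -- continuity facts
      have hfcc := hfc t ht
      have hW'c : ContinuousOn W' (Set.Icc 0 t) := by
        apply ContinuousOn.smul
        · exact (Real.continuous_exp.comp (continuous_id.div_const a)).continuousOn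
        · exact ((hfcc.sub continuousOn_const).const_smul _).add
            ((hTlip.continuous.comp_continuousOn hfcc).sub hfcc)
      have hQc : ContinuousOn (fun s => Real.sqrt (Q s)) (Set.Icc 0 t) := by
        apply Real.continuous_sqrt.comp_continuousOn
        apply ContinuousOn.add (ContinuousOn.pow ?_ 2) continuousOn_const
        exact (continuousOn_const.sub continuousOn_id)
      have hexpc : ContinuousOn (fun s : ℝ => Real.exp (s / a)) (Set.Icc 0 t) :=
        (Real.continuous_exp.comp (continuous_id.div_const a)).continuousOn
      have hB'c : ContinuousOn B' (Set.Icc 0 t) := by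
        apply ContinuousOn.add
        · exact (hexpc.mul continuousOn_const).mul (continuousOn_const.mul hQc)
        · apply hexpc.mul
          apply continuousOn_const.mul
          apply ContinuousOn.div
          · apply ContinuousOn.mul (continuousOn_const.mul (ContinuousOn.pow ?_ 1)) continuousOn_const
            exact continuousOn_const.sub continuousOn_id
          · exact continuousOn_const.mul hQc
          · intro s hs
            have := Real.sqrt_pos.2 (hQpos s)
            positivity
      have hboundc : ContinuousOn (fun s => C / a * Real.exp (s / a) * Real.sqrt (R s))
          (Set.Icc 0 t) := by
        apply ContinuousOn.mul (continuousOn_const.mul hexpc)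
        apply Real.continuous_sqrt.comp_continuousOn
        exact ((continuousOn_const.sub continuousOn_id).pow 2).add continuousOn_const
      have huIcc : Set.uIcc (0:ℝ) t = Set.Icc 0 t := Set.uIcc_of_le ht
      -- FTC for W
      have hFTCW : ∫ s in (0:ℝ)..t, W' s = W t - W 0 := by
        apply intervalIntegral.integral_eq_sub_of_hasDerivAt
        · intro s hs; exact hWd s (huIcc ▸ hs)
        · exact (huIcc ▸ hW'c).intervalIntegrable
      have hFTCB : ∫ s in (0:ℝ)..t, B' s = B t - B 0 := by
        apply intervalIntegral.integral_eq_sub_of_hasDerivAt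
        · intro s _; exact hBd s
        · exact (huIcc ▸ hB'c).intervalIntegrable
      -- integral comparison
      have hint1 : ‖W t - W 0‖ ≤ B t - B 0 := by
        rw [← hFTCW, ← hFTCB]
        calc ‖∫ s in (0:ℝ)..t, W' s‖ ≤ ∫ s in (0:ℝ)..t, ‖W' s‖ :=
              intervalIntegral.norm_integral_le_integral_norm ht
          _ ≤ ∫ s in (0:ℝ)..t, C / a * Real.exp (s / a) * Real.sqrt (R s) := by
              apply intervalIntegral.integral_mono_on ht
              · exact ((huIcc ▸ hW'c).norm).intervalIntegrable
              · exact (huIcc ▸ hboundc).intervalIntegrable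
              · exact hWnorm
          _ ≤ ∫ s in (0:ℝ)..t, B' s := by
              apply intervalIntegral.integral_mono_on ht
              · exact (huIcc ▸ hboundc).intervalIntegrable
              · exact (huIcc ▸ hB'c).intervalIntegrable
              · exact fun s _ => hkey s
      -- initial bound
      have hW0 : ‖W 0‖ ≤ B 0 := by
        have e1 : ‖W 0‖ = ‖z - zs (k+1)‖ := by
          rw [hWdef]; simp [hf0]
        have e2 : B 0 = C * Real.sqrt ((σk + a)^2 + (τk + a^2)) := by
          rw [hBdef]; simp [hQdef]
        rw [e1, e2]
        calc ‖z - zs (k+1)‖ ≤ C * (σk + a) := by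
              have := hC2 (k+1)
              rwa [Finset.sum_range_succ] at this
          _ ≤ C * Real.sqrt ((σk + a)^2 + (τk + a^2)) := by
              apply mul_le_mul_of_nonneg_left _ hC0
              calc σk + a = Real.sqrt ((σk + a)^2) := (Real.sqrt_sq (by positivity)).symm
                _ ≤ _ := Real.sqrt_le_sqrt (by nlinarith [hτk0, sq_nonneg a])
      -- conclude
      have hWt : ‖W t‖ ≤ B t := by
        have := norm_sub_norm_le (W t) (W 0)
        linarith [hint1, hW0]
      have eWt : ‖W t‖ = Real.exp (t / a) * ‖f t - zs (k+1)‖ := by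
        rw [hWdef, norm_smul, Real.norm_eq_abs, abs_of_pos (Real.exp_pos _)]
      have eBt : B t = Real.exp (t / a) * (C * Real.sqrt (Q t)) := rfl
      rw [eWt, eBt] at hWt
      have hfinal := le_of_mul_le_mul_left hWt (Real.exp_pos (t/a))
      simpa [hQdef] using hfinal
end

section
/- Let h ∈ (0,1], let h_1, …, h_k be step sizes with 0 ≤ h_i ≤ h for all i and Σ_{i=1}^k h_i = t, let z ∈ Z, and let (z_j) be the Eulerian scheme z_0 = z, z_{j+1} = (1 − h_{j+1})·z_j + h_{j+1}·T(z_j). Let f be the solution of the evolution equation ḟ = (T − Id)f with f(0) = z. Then ‖f(t) − z_k‖ ≤ ‖z − T(z)‖ · √(h·t). -/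
open Set

lemma aux_shift {Z : Type*} [NormedAddCommGroup Z] [NormedSpace ℝ Z]
    (T : Z → Z) (hT : ∀ x y : Z, ‖T x - T y‖ ≤ ‖x - y‖)
    (f : ℝ → Z) (hf : ∀ s : ℝ, 0 ≤ s → HasDerivAt f (T (f s) - f s) s)
    (δ : ℝ) (hδ : 0 ≤ δ) (s : ℝ) (hs : 0 ≤ s) :
    ‖f (s + δ) - f s‖ ≤ ‖f δ - f 0‖ := by
  set v : ℝ → Z := fun u => Real.exp u • (f (u + δ) - f u) with hv
  have hderiv : ∀ u, 0 ≤ u → HasDerivAt v (Real.exp u • (T (f (u + δ)) - T (f u))) u := by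
    intro u hu
    have h1 : HasDerivAt (fun x => f (x + δ)) (T (f (u + δ)) - f (u + δ)) u := by
      have := (hf (u + δ) (by linarith)).scomp u ((hasDerivAt_id u).add_const δ)
      simpa [Function.comp_def] using this
    have h3 := (Real.hasDerivAt_exp u).smul (h1.sub (hf u hu))
    convert h3 using 1
    · rfl
    rw [← smul_add]
    congr 1
    simp only [Pi.sub_apply]
    abel
  have key := norm_le_gronwallBound_of_norm_deriv_right_le
    (f := v) (f' := fun u => Real.exp u • (T (f (u + δ)) - T (f u)))
    (δ := ‖v 0‖) (K := 1) (ε := 0) (a := 0) (b := s)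
    (fun u hu => (hderiv u hu.1).continuousAt.continuousWithinAt)
    (fun u hu => (hderiv u hu.1).hasDerivWithinAt)
    le_rfl
    (by
      intro u hu
      rw [norm_smul, Real.norm_eq_abs, abs_of_pos (Real.exp_pos u), one_mul, add_zero, hv]
      simp only [norm_smul, Real.norm_eq_abs, abs_of_pos (Real.exp_pos u)]
      exact mul_le_mul_of_nonneg_left (hT _ _) (Real.exp_pos u).le)
    s (by simp [hs])
  rw [sub_zero, gronwallBound_ε0] at key
  have hv0 : v 0 = f δ - f 0 := by simp [hv]
  rw [hv0] at key
  have : Real.exp s * ‖f (s + δ) - f s‖ ≤ ‖f δ - f 0‖ * Real.exp (1 * s) := by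
    simpa [hv, norm_smul, Real.norm_eq_abs, abs_of_pos (Real.exp_pos s)] using key
  rw [one_mul] at this
  nlinarith [Real.exp_pos s, norm_nonneg (f (s + δ) - f s), norm_nonneg (f δ - f 0)]

lemma aux_vel {Z : Type*} [NormedAddCommGroup Z] [NormedSpace ℝ Z]
    (T : Z → Z) (hT : ∀ x y : Z, ‖T x - T y‖ ≤ ‖x - y‖)
    (f : ℝ → Z) (hf : ∀ s : ℝ, 0 ≤ s → HasDerivAt f (T (f s) - f s) s)
    (s : ℝ) (hs : 0 ≤ s) :
    ‖T (f s) - f s‖ ≤ ‖T (f 0) - f 0‖ := by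
  have hslope_s : Filter.Tendsto (fun y => ‖slope f s y‖) (nhdsWithin s (Ioi s))
      (nhds ‖T (f s) - f s‖) := by
    have := (hasDerivAt_iff_tendsto_slope.1 (hf s hs)).mono_left
      (nhdsWithin_mono s (fun y hy => ne_of_gt hy : Ioi s ⊆ {s}ᶜ))
    exact (continuous_norm.continuousAt.tendsto.comp this)
  have h0 : Filter.Tendsto (fun y => y - s) (nhdsWithin s (Ioi s)) (nhdsWithin 0 (Ioi 0)) := by
    rw [tendsto_nhdsWithin_iff]
    constructor
    · have : Filter.Tendsto (fun y : ℝ => y - s) (nhds s) (nhds 0) := by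
        have h : Continuous (fun y : ℝ => y - s) := continuous_id.sub continuous_const
        simpa using h.tendsto s
      exact this.mono_left nhdsWithin_le_nhds
    · filter_upwards [eventually_mem_nhdsWithin] with y hy
      exact sub_pos.2 (Set.mem_Ioi.1 hy)
  have hslope_0 : Filter.Tendsto (fun y => ‖slope f 0 (y - s)‖) (nhdsWithin s (Ioi s))
      (nhds ‖T (f 0) - f 0‖) := by
    have h1 := (hasDerivAt_iff_tendsto_slope.1 (hf 0 le_rfl)).mono_left
      (nhdsWithin_mono 0 (fun y hy => ne_of_gt hy : Ioi (0:ℝ) ⊆ {(0:ℝ)}ᶜ))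
    exact (continuous_norm.continuousAt.tendsto.comp (h1.comp h0))
  refine le_of_tendsto_of_tendsto hslope_s hslope_0 ?_
  filter_upwards [eventually_mem_nhdsWithin] with y hy
  have hy' : s < y := hy
  have hkey := aux_shift T hT f hf (y - s) (by linarith) s hs
  rw [add_sub_cancel] at hkey
  have h2 : slope f s y = (y - s)⁻¹ • (f y - f s) := slope_def_module f s y
  have h3 : slope f 0 (y - s) = (y - s)⁻¹ • (f (y - s) - f 0) := by
    rw [slope_def_module, sub_zero]
  rw [h2, h3, norm_smul, norm_smul]
  exact mul_le_mul_of_nonneg_left hkey (norm_nonneg _)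

lemma aux_lip {Z : Type*} [NormedAddCommGroup Z] [NormedSpace ℝ Z]
    (T : Z → Z) (hT : ∀ x y : Z, ‖T x - T y‖ ≤ ‖x - y‖)
    (f : ℝ → Z) (hf : ∀ s : ℝ, 0 ≤ s → HasDerivAt f (T (f s) - f s) s)
    (s : ℝ) (hs : 0 ≤ s) :
    ‖f s - f 0‖ ≤ ‖T (f 0) - f 0‖ * s := by
  have := Convex.norm_image_sub_le_of_norm_hasDerivWithin_le
    (f := f) (f' := fun u => T (f u) - f u) (C := ‖T (f 0) - f 0‖) (s := Ici (0:ℝ))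
    (fun u hu => (hf u hu).hasDerivWithinAt)
    (fun u hu => aux_vel T hT f hf u hu)
    (convex_Ici 0) self_mem_Ici hs
  simpa [abs_of_nonneg hs] using this

lemma aux_sqrt (A e x : ℝ) (hA : 0 ≤ A) (he : 0 < e) :
    Real.sqrt (A + (x + e)^2) ≤
      Real.sqrt (A + e^2 + x^2) + e * x / Real.sqrt (A + e^2 + x^2) := by
  set D := Real.sqrt (A + e^2 + x^2) with hD
  have hDpos : 0 < D := Real.sqrt_pos.2 (by nlinarith [sq_nonneg x, sq_nonneg e])
  have hD2 : D^2 = A + e^2 + x^2 := Real.sq_sqrt (by nlinarith [sq_nonneg x, sq_nonneg e])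
  have hnum : 0 ≤ D^2 + e * x := by nlinarith [sq_nonneg (e + x), sq_nonneg (e - x)]
  have hR : D + e * x / D = (D^2 + e * x) / D := by field_simp
  rw [hR]
  have h1 : A + (x + e)^2 ≤ ((D^2 + e * x) / D)^2 := by
    rw [div_pow, le_div_iff₀ (by positivity)]
    nlinarith [sq_nonneg (e * x)]
  calc Real.sqrt (A + (x + e)^2) ≤ Real.sqrt (((D^2 + e * x) / D)^2) := Real.sqrt_le_sqrt h1
    _ = (D^2 + e * x) / D := Real.sqrt_sq (by positivity)

lemma aux_disc {Z : Type*} [NormedAddCommGroup Z] [NormedSpace ℝ Z]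
    (T : Z → Z) (hT : ∀ x y : Z, ‖T x - T y‖ ≤ ‖x - y‖)
    (h : ℝ) (hh : h ∈ Set.Ioc (0 : ℝ) 1)
    (k : ℕ) (hs : ℕ → ℝ)
    (hbound : ∀ i ∈ Finset.Icc 1 k, 0 ≤ hs i ∧ hs i ≤ h)
    (z : Z) (zs : ℕ → Z) (hz0 : zs 0 = z)
    (hz : ∀ j, zs (j + 1) = (1 - hs (j + 1)) • zs j + hs (j + 1) • T (zs j)) :
    ∀ j, j ≤ k → ‖zs j - T (zs j)‖ ≤ ‖z - T z‖ ∧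
      ‖z - zs j‖ ≤ ‖z - T z‖ * ∑ i ∈ Finset.Icc 1 j, hs i := by
  intro j
  induction j with
  | zero => simp [hz0]
  | succ n ih =>
    intro hjk
    obtain ⟨ih1, ih2⟩ := ih (by omega)
    obtain ⟨he0, he1⟩ := hbound (n+1) (Finset.mem_Icc.2 ⟨by omega, hjk⟩)
    have he1' : hs (n+1) ≤ 1 := le_trans he1 hh.2
    have hstep : zs (n+1) - zs n = hs (n+1) • (T (zs n) - zs n) := by
      rw [hz n]; module
    have hd1 : zs (n+1) - T (zs n) = (1 - hs (n+1)) • (zs n - T (zs n)) := by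
      rw [hz n]; module
    have hstepn : ‖zs (n+1) - zs n‖ ≤ hs (n+1) * ‖z - T z‖ := by
      rw [hstep, norm_smul, Real.norm_eq_abs, abs_of_nonneg he0, norm_sub_rev (T (zs n))]
      exact mul_le_mul_of_nonneg_left ih1 he0
    have hA : ‖zs (n+1) - T (zs (n+1))‖ ≤ ‖z - T z‖ := by
      calc ‖zs (n+1) - T (zs (n+1))‖
          ≤ ‖zs (n+1) - T (zs n)‖ + ‖T (zs n) - T (zs (n+1))‖ :=
            norm_sub_le_norm_sub_add_norm_sub _ _ _
        _ ≤ (1 - hs (n+1)) * ‖zs n - T (zs n)‖ + ‖zs n - zs (n+1)‖ := by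
            rw [hd1, norm_smul, Real.norm_eq_abs, abs_of_nonneg (by linarith)]
            exact add_le_add le_rfl (hT _ _)
        _ ≤ (1 - hs (n+1)) * ‖z - T z‖ + hs (n+1) * ‖z - T z‖ := by
            rw [norm_sub_rev (zs n) (zs (n+1))]
            exact add_le_add (mul_le_mul_of_nonneg_left ih1 (by linarith)) hstepn
        _ = ‖z - T z‖ := by ring
    refine ⟨hA, ?_⟩
    rw [Finset.sum_Icc_succ_top (by omega : 1 ≤ n + 1)]
    calc ‖z - zs (n+1)‖ ≤ ‖z - zs n‖ + ‖zs n - zs (n+1)‖ :=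
          norm_sub_le_norm_sub_add_norm_sub _ _ _
      _ ≤ ‖z - T z‖ * ∑ i ∈ Finset.Icc 1 n, hs i + hs (n+1) * ‖z - T z‖ := by
          rw [norm_sub_rev (zs n)]
          exact add_le_add ih2 hstepn
      _ = ‖z - T z‖ * (∑ i ∈ Finset.Icc 1 n, hs i + hs (n+1)) := by ring

lemma aux_step {Z : Type*} [NormedAddCommGroup Z] [NormedSpace ℝ Z] [CompleteSpace Z]
    (T : Z → Z) (hT : ∀ x y : Z, ‖T x - T y‖ ≤ ‖x - y‖)
    (f : ℝ → Z) (hf : ∀ s : ℝ, 0 ≤ s → HasDerivAt f (T (f s) - f s) s)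
    (C : ℝ) (hC : 0 ≤ C)
    (w y : Z) (e : ℝ) (he0 : 0 < e) (he1 : e ≤ 1)
    (hw : w = (1 - e) • y + e • T y)
    (A σ : ℝ) (hA : 0 ≤ A) (hσ : 0 ≤ σ)
    (hIH : ∀ u : ℝ, 0 ≤ u → ‖f u - y‖ ≤ C * Real.sqrt (A + (u - σ)^2))
    (hinit : ‖f 0 - w‖ ≤ C * (σ + e))
    (s : ℝ) (hs : 0 ≤ s) :
    ‖f s - w‖ ≤ C * Real.sqrt ((A + e^2) + (s - (σ + e))^2) := by
  set A' : ℝ := A + e^2 with hA'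
  set σ' : ℝ := σ + e with hσ'
  have hA'pos : 0 < A' := by positivity
  have hTcont : Continuous T := by
    have : LipschitzWith 1 T := LipschitzWith.of_dist_le_mul (fun x y => by
      rw [dist_eq_norm, dist_eq_norm]; simpa using hT x y)
    exact this.continuous
  -- the function g and its derivative
  set g : ℝ → Z := fun u => Real.exp (u / e) • (f u - w) with hg_def
  set gd : ℝ → Z := fun u =>
    Real.exp (u / e) • ((1 / e) • (f u - w) + (T (f u) - f u)) with hgd_def
  have hexp : ∀ u : ℝ, HasDerivAt (fun v : ℝ => Real.exp (v / e))
      (Real.exp (u / e) * (1 / e)) u := by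
    intro u
    have h1 : HasDerivAt (fun v : ℝ => v / e) (1 / e) u := by
      simpa using (hasDerivAt_id u).div_const e
    exact h1.exp
  have hg : ∀ u : ℝ, 0 ≤ u → HasDerivAt g (gd u) u := by
    intro u hu
    have h2 := (hexp u).smul ((hf u hu).sub_const w)
    convert h2 using 1
    · rfl
    simp only [hgd_def, smul_add, mul_smul]
    abel
  -- norm bound on gd
  have hnorm : ∀ u : ℝ, 0 ≤ u →
      ‖gd u‖ ≤ Real.exp (u / e) * ((1 / e) * (C * Real.sqrt (A + (u - σ)^2))) := by
    intro u hu
    have hkey : (f u - w) + e • (T (f u) - f u)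
        = (1 - e) • (f u - y) + e • (T (f u) - T y) := by rw [hw]; module
    have hsc : (1 / e) • ((f u - w) + e • (T (f u) - f u))
        = (1 / e) • (f u - w) + (T (f u) - f u) := by
      rw [smul_add, smul_smul, one_div_mul_cancel he0.ne', one_smul]
    have hinner : ‖(1 / e) • (f u - w) + (T (f u) - f u)‖
        ≤ (1 / e) * ‖f u - y‖ := by
      rw [← hsc, norm_smul, Real.norm_eq_abs, abs_of_pos (by positivity : (0:ℝ) < 1/e)]
      refine mul_le_mul_of_nonneg_left ?_ (by positivity)
      rw [hkey]
      calc ‖(1 - e) • (f u - y) + e • (T (f u) - T y)‖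
          ≤ ‖(1 - e) • (f u - y)‖ + ‖e • (T (f u) - T y)‖ := norm_add_le _ _
        _ ≤ (1 - e) * ‖f u - y‖ + e * ‖f u - y‖ := by
            rw [norm_smul, norm_smul, Real.norm_eq_abs, Real.norm_eq_abs,
              abs_of_nonneg (by linarith), abs_of_nonneg he0.le]
            exact add_le_add le_rfl (mul_le_mul_of_nonneg_left (hT _ _) he0.le)
        _ = ‖f u - y‖ := by ring
    have h3 : ‖gd u‖ = Real.exp (u / e) * ‖(1 / e) • (f u - w) + (T (f u) - f u)‖ := by
      rw [hgd_def, norm_smul, Real.norm_eq_abs, abs_of_pos (Real.exp_pos _)]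
    rw [h3]
    refine mul_le_mul_of_nonneg_left ?_ (Real.exp_pos _).le
    calc ‖(1 / e) • (f u - w) + (T (f u) - f u)‖ ≤ (1 / e) * ‖f u - y‖ := hinner
      _ ≤ (1 / e) * (C * Real.sqrt (A + (u - σ)^2)) :=
          mul_le_mul_of_nonneg_left (hIH u hu) (by positivity)
  -- the majorant E and its derivative
  set E : ℝ → ℝ := fun u => Real.exp (u / e) * (C * Real.sqrt (A' + (u - σ')^2)) with hE_def
  set Ed : ℝ → ℝ := fun u => Real.exp (u / e) *
      ((1 / e) * (C * Real.sqrt (A' + (u - σ')^2))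
        + C * ((u - σ') / Real.sqrt (A' + (u - σ')^2))) with hEd_def
  have hqpos : ∀ u : ℝ, 0 < A' + (u - σ')^2 := fun u => by positivity
  have hsqrt_pos : ∀ u : ℝ, 0 < Real.sqrt (A' + (u - σ')^2) :=
    fun u => Real.sqrt_pos.2 (hqpos u)
  have hsq : ∀ u : ℝ, HasDerivAt (fun v => Real.sqrt (A' + (v - σ')^2))
      ((u - σ') / Real.sqrt (A' + (u - σ')^2)) u := by
    intro u
    have hq : HasDerivAt (fun v : ℝ => A' + (v - σ')^2) (2 * (u - σ')) u := by
      have h1 := ((hasDerivAt_id u).sub_const σ').pow 2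
      simpa using h1.const_add A'
    have h2 := (Real.hasDerivAt_sqrt (hqpos u).ne').comp u hq
    convert h2 using 1
    · rfl
    · rfl
    · rfl
    field_simp
  have hE : ∀ u : ℝ, HasDerivAt E (Ed u) u := by
    intro u
    have h2 := (hexp u).mul ((hsq u).const_mul C)
    convert h2 using 1
    · rfl
    · rfl
    · rfl
    simp only [hEd_def]
    ring
  -- pointwise comparison of derivatives
  have hcomp : ∀ u : ℝ, 0 ≤ u → ‖gd u‖ ≤ Ed u := by
    intro u hu
    refine le_trans (hnorm u hu) ?_
    rw [hEd_def]
    refine mul_le_mul_of_nonneg_left ?_ (Real.exp_pos _).le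
    have h1 := aux_sqrt A e (u - σ') hA he0
    rw [← hA'] at h1
    rw [show A + (u - σ)^2 = A + ((u - σ') + e)^2 from by rw [hσ']; ring]
    set S := Real.sqrt (A' + (u - σ')^2) with hS
    have hSpos := hsqrt_pos u
    calc (1 / e) * (C * Real.sqrt (A + ((u - σ') + e)^2))
        ≤ (1 / e) * (C * (S + e * (u - σ') / S)) := by
          refine mul_le_mul_of_nonneg_left (mul_le_mul_of_nonneg_left h1 hC) (by positivity)
      _ = (1 / e) * (C * S) + C * ((u - σ') / S) := by field_simp
  -- continuity facts
  have hfcOn : ContinuousOn f (Icc 0 s) :=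
    fun u hu => (hf u hu.1).continuousAt.continuousWithinAt
  have hexpc : Continuous (fun u : ℝ => Real.exp (u / e)) :=
    Real.continuous_exp.comp (continuous_id.div_const e)
  have hgdcont : ContinuousOn gd (Icc 0 s) := by
    refine (hexpc.continuousOn).smul ?_
    refine ContinuousOn.add ?_ ?_
    · exact (hfcOn.sub continuousOn_const).const_smul (1 / e)
    · exact (hTcont.comp_continuousOn hfcOn).sub hfcOn
  have hsqc : Continuous (fun u : ℝ => Real.sqrt (A' + (u - σ')^2)) :=
    Real.continuous_sqrt.comp (by continuity)
  have hEdcont : Continuous Ed := by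
    refine hexpc.mul (Continuous.add ?_ ?_)
    · exact continuous_const.mul (continuous_const.mul hsqc)
    · exact continuous_const.mul ((continuous_id.sub continuous_const).div hsqc
        (fun u => (hsqrt_pos u).ne'))
  -- FTC
  have huIcc : uIcc (0:ℝ) s = Icc 0 s := uIcc_of_le hs
  have hgd_int : IntervalIntegrable gd MeasureTheory.volume 0 s :=
    (huIcc ▸ hgdcont : ContinuousOn gd (uIcc 0 s)).intervalIntegrable
  have hEd_int : IntervalIntegrable Ed MeasureTheory.volume 0 s :=
    hEdcont.intervalIntegrable _ _
  have hgsub : g s - g 0 = ∫ u in (0:ℝ)..s, gd u :=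
    (intervalIntegral.integral_eq_sub_of_hasDerivAt
      (fun u hu => hg u (huIcc ▸ hu : u ∈ Icc 0 s).1) hgd_int).symm
  have hEsub : E s - E 0 = ∫ u in (0:ℝ)..s, Ed u :=
    (intervalIntegral.integral_eq_sub_of_hasDerivAt
      (fun u _ => hE u) hEd_int).symm
  have hnorm_int : ‖g s - g 0‖ ≤ E s - E 0 := by
    rw [hgsub, hEsub]
    calc ‖∫ u in (0:ℝ)..s, gd u‖ ≤ ∫ u in (0:ℝ)..s, ‖gd u‖ :=
          intervalIntegral.norm_integral_le_integral_norm hs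
      _ ≤ ∫ u in (0:ℝ)..s, Ed u := by
          refine intervalIntegral.integral_mono_on hs ?_ hEd_int
            (fun u hu => hcomp u hu.1)
          exact (huIcc ▸ hgdcont.norm : ContinuousOn _ (uIcc 0 s)).intervalIntegrable
  -- initial bound
  have hg0 : ‖g 0‖ ≤ E 0 := by
    have h0 : g 0 = f 0 - w := by simp [hg_def]
    have hE0 : E 0 = C * Real.sqrt (A' + σ'^2) := by
      simp only [hE_def]
      rw [show ((0:ℝ) - σ')^2 = σ'^2 by ring]
      simp
    rw [h0, hE0]
    refine le_trans hinit ?_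
    refine mul_le_mul_of_nonneg_left ?_ hC
    calc σ + e = σ' := by rw [hσ']
      _ = Real.sqrt (σ'^2) := (Real.sqrt_sq (by positivity)).symm
      _ ≤ Real.sqrt (A' + σ'^2) := Real.sqrt_le_sqrt (by linarith [hA'pos.le])
  -- conclude
  have hfinal : ‖g s‖ ≤ E s := by
    calc ‖g s‖ ≤ ‖g 0‖ + ‖g s - g 0‖ := by
          have := norm_add_le (g 0) (g s - g 0); simpa using this
      _ ≤ E 0 + (E s - E 0) := add_le_add hg0 hnorm_int
      _ = E s := by ring
  have hgs : ‖g s‖ = Real.exp (s / e) * ‖f s - w‖ := by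
    rw [hg_def, norm_smul, Real.norm_eq_abs, abs_of_pos (Real.exp_pos _)]
  rw [hgs, hE_def] at hfinal
  have := le_of_mul_le_mul_left (by exact hfinal) (Real.exp_pos (s / e))
  exact this

/-- If the step sizes `h_1, …, h_k` are bounded by `h ∈ (0,1]` and sum to `t`,
then the Eulerian scheme started at `z` satisfies
`‖f t - z_k‖ ≤ ‖z - T z‖ √(h t)` where `f` solves `ḟ = (T - Id) f`, `f 0 = z`. -/
theorem eulerian_scheme_mesh_bound
    {Z : Type*} [NormedAddCommGroup Z] [NormedSpace ℝ Z] [CompleteSpace Z]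
    (T : Z → Z) (hT : ∀ x y : Z, ‖T x - T y‖ ≤ ‖x - y‖)
    (h : ℝ) (hh : h ∈ Set.Ioc (0 : ℝ) 1)
    (k : ℕ) (hs : ℕ → ℝ)
    (hbound : ∀ i ∈ Finset.Icc 1 k, 0 ≤ hs i ∧ hs i ≤ h)
    (t : ℝ) (hsum : ∑ i ∈ Finset.Icc 1 k, hs i = t)
    (z : Z) (zs : ℕ → Z) (hz0 : zs 0 = z)
    (hz : ∀ j, zs (j + 1) = (1 - hs (j + 1)) • zs j + hs (j + 1) • T (zs j))
    (f : ℝ → Z) (hf0 : f 0 = z)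
    (hf : ∀ s : ℝ, 0 ≤ s → HasDerivAt f (T (f s) - f s) s) :
    ‖f t - zs k‖ ≤ ‖z - T z‖ * Real.sqrt (h * t) := by
  obtain ⟨hh0, hh1⟩ := hh
  have hC : (0:ℝ) ≤ ‖z - T z‖ := norm_nonneg _
  have hlip : ∀ s : ℝ, 0 ≤ s → ‖f s - z‖ ≤ ‖z - T z‖ * s := by
    intro s hs0
    have h1 := aux_lip T hT f hf s hs0
    rwa [hf0, norm_sub_rev (T z) z] at h1
  have hdisc := aux_disc T hT h ⟨hh0, hh1⟩ k hs hbound z zs hz0 hz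
  have ht0 : 0 ≤ t := by
    rw [← hsum]; exact Finset.sum_nonneg (fun i hi => (hbound i hi).1)
  have main : ∀ j, j ≤ k → ∀ s : ℝ, 0 ≤ s → ‖f s - zs j‖ ≤
      ‖z - T z‖ * Real.sqrt ((∑ i ∈ Finset.Icc 1 j, (hs i)^2)
        + (s - ∑ i ∈ Finset.Icc 1 j, hs i)^2) := by
    intro j
    induction j with
    | zero =>
      intro _ s hs0
      have hIcc : Finset.Icc 1 0 = (∅ : Finset ℕ) := by decide
      rw [hz0, hIcc]
      simp only [Finset.sum_empty, zero_add, sub_zero]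
      rw [Real.sqrt_sq hs0]
      exact hlip s hs0
    | succ n ih =>
      intro hnk s hs0
      have hn : n ≤ k := by omega
      obtain ⟨he0, heh⟩ := hbound (n+1) (Finset.mem_Icc.2 ⟨by omega, hnk⟩)
      rw [Finset.sum_Icc_succ_top (by omega : 1 ≤ n + 1),
        Finset.sum_Icc_succ_top (by omega : 1 ≤ n + 1)]
      rcases eq_or_lt_of_le he0 with heq | hpos
      · have hzz : zs (n+1) = zs n := by rw [hz n, ← heq]; simp
        rw [hzz, ← heq]
        simpa using ih hn s hs0
      · have he1 : hs (n+1) ≤ 1 := heh.trans hh1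
        have hσ0 : 0 ≤ ∑ i ∈ Finset.Icc 1 n, hs i :=
          Finset.sum_nonneg (fun i hi => (hbound i (Finset.mem_Icc.2
            ⟨(Finset.mem_Icc.1 hi).1, le_trans (Finset.mem_Icc.1 hi).2 hn⟩)).1)
        have hA0 : 0 ≤ ∑ i ∈ Finset.Icc 1 n, (hs i)^2 :=
          Finset.sum_nonneg (fun i _ => sq_nonneg _)
        have hinit : ‖f 0 - zs (n+1)‖ ≤ ‖z - T z‖ * ((∑ i ∈ Finset.Icc 1 n, hs i) + hs (n+1)) := by
          rw [hf0]
          have h2 := (hdisc (n+1) hnk).2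
          rwa [Finset.sum_Icc_succ_top (by omega : 1 ≤ n + 1)] at h2
        exact aux_step T hT f hf (‖z - T z‖) hC (zs (n+1)) (zs n) (hs (n+1)) hpos he1
          (hz n) _ _ hA0 hσ0 (fun u hu => ih hn u hu) hinit s hs0
  have hmain := main k le_rfl t ht0
  rw [hsum] at hmain
  refine le_trans hmain (mul_le_mul_of_nonneg_left (Real.sqrt_le_sqrt ?_) hC)
  have hsq : ∑ i ∈ Finset.Icc 1 k, (hs i)^2 ≤ h * t := by
    rw [← hsum, Finset.mul_sum]
    refine Finset.sum_le_sum (fun i hi => ?_)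
    obtain ⟨h0i, h1i⟩ := hbound i hi
    calc (hs i)^2 = hs i * hs i := sq (hs i)
      _ ≤ h * hs i := mul_le_mul_of_nonneg_right h1i h0i
  have : (t - t)^2 = 0 := by ring
  linarith
end

section
/- Let t > 0, let h_1, …, h_k be step sizes with 0 ≤ h_i ≤ 1 for all i and Σ_{i=1}^k h_i = t, and let (z_j) be the Eulerian scheme z_0 = 0, z_{j+1} = (1 − h_{j+1})·z_j + h_{j+1}·T(z_j). Let f be the solution of the evolution equation ḟ = (T − Id)f with f(0) = 0. Then the normalized quantities satisfy ‖z_k/t − f(t)/t‖ ≤ ‖T(0)‖ / √t. -/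
lemma sqrt_concave3 (a b c x₁ x₂ x₃ X : ℝ) (ha : 0 ≤ a) (hb : 0 ≤ b) (hc : 0 ≤ c)
    (hx₁ : 0 ≤ x₁) (hx₂ : 0 ≤ x₂) (hx₃ : 0 ≤ x₃) (hX : 0 ≤ X)
    (h : a*x₁ + b*x₂ + c*x₃ ≤ (a+b+c)*X) :
    a * Real.sqrt x₁ + b * Real.sqrt x₂ + c * Real.sqrt x₃ ≤ (a+b+c) * Real.sqrt X := by
  set u₁ := Real.sqrt x₁
  set u₂ := Real.sqrt x₂
  set u₃ := Real.sqrt x₃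
  set u := Real.sqrt X
  have hq₁ : u₁^2 = x₁ := Real.sq_sqrt hx₁
  have hq₂ : u₂^2 = x₂ := Real.sq_sqrt hx₂
  have hq₃ : u₃^2 = x₃ := Real.sq_sqrt hx₃
  have hq : u^2 = X := Real.sq_sqrt hX
  have hn₁ : 0 ≤ u₁ := Real.sqrt_nonneg _
  have hn₂ : 0 ≤ u₂ := Real.sqrt_nonneg _
  have hn₃ : 0 ≤ u₃ := Real.sqrt_nonneg _
  have hn : 0 ≤ u := Real.sqrt_nonneg _
  have hL : 0 ≤ a*u₁ + b*u₂ + c*u₃ := by positivity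
  have hR : 0 ≤ (a+b+c)*u := by positivity
  have hsq : (a*u₁ + b*u₂ + c*u₃)^2 ≤ ((a+b+c)*u)^2 := by
    have cs : (a*u₁ + b*u₂ + c*u₃)^2 ≤ (a+b+c) * (a*u₁^2 + b*u₂^2 + c*u₃^2) := by
      nlinarith [mul_nonneg (mul_nonneg ha hb) (sq_nonneg (u₁ - u₂)),
        mul_nonneg (mul_nonneg ha hc) (sq_nonneg (u₁ - u₃)),
        mul_nonneg (mul_nonneg hb hc) (sq_nonneg (u₂ - u₃))]
    have h2 : (a+b+c) * (a*u₁^2 + b*u₂^2 + c*u₃^2) ≤ (a+b+c) * ((a+b+c) * u^2) := by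
      apply mul_le_mul_of_nonneg_left _ (by positivity)
      rw [hq₁, hq₂, hq₃, hq]; exact h
    calc (a*u₁ + b*u₂ + c*u₃)^2 ≤ (a+b+c) * ((a+b+c) * u^2) := le_trans cs h2
      _ = ((a+b+c)*u)^2 := by ring
  calc a*u₁ + b*u₂ + c*u₃ = Real.sqrt ((a*u₁ + b*u₂ + c*u₃)^2) := (Real.sqrt_sq hL).symm
    _ ≤ Real.sqrt (((a+b+c)*u)^2) := Real.sqrt_le_sqrt hsq
    _ = (a+b+c)*u := Real.sqrt_sq hR

open Finset Set Filter

section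
variable {Z : Type*} [NormedAddCommGroup Z] [NormedSpace ℝ Z]

noncomputable def eulerAux (T : Z → Z) (p : ℕ → ℝ) : ℕ → Z
  | 0 => 0
  | j+1 => (1 - p j) • eulerAux T p j + p j • T (eulerAux T p j)

variable {T : Z → Z} {p q : ℕ → ℝ}

lemma euler_res (hT : ∀ x y : Z, ‖T x - T y‖ ≤ ‖x - y‖)
    (hp : ∀ i, 0 ≤ p i ∧ p i ≤ 1) :
    ∀ j, ‖T (eulerAux T p j) - eulerAux T p j‖ ≤ ‖T 0‖ := by
  intro j
  induction j with
  | zero => simp [eulerAux]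
  | succ j ih =>
    obtain ⟨h0, h1⟩ := hp j
    set z := eulerAux T p j with hz
    have hstep : eulerAux T p (j+1) = z + p j • (T z - z) := by
      show (1 - p j) • z + p j • T z = _
      module
    set z' := eulerAux T p (j+1) with hz'
    have hdec : T z' - z' = (T z' - T z) + (1 - p j) • (T z - z) := by
      rw [hstep]; module
    calc ‖T z' - z'‖ ≤ ‖T z' - T z‖ + ‖(1 - p j) • (T z - z)‖ := by
            rw [hdec]; exact norm_add_le _ _
      _ ≤ ‖z' - z‖ + (1 - p j) * ‖T z - z‖ := by
            rw [norm_smul, Real.norm_eq_abs, abs_of_nonneg (by linarith)]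
            exact add_le_add_left (hT _ _) _
      _ = p j * ‖T z - z‖ + (1 - p j) * ‖T z - z‖ := by
            rw [hstep]
            simp [norm_smul, abs_of_nonneg h0]
      _ = ‖T z - z‖ := by ring
      _ ≤ ‖T 0‖ := ih

lemma euler_norm (hT : ∀ x y : Z, ‖T x - T y‖ ≤ ‖x - y‖)
    (hp : ∀ i, 0 ≤ p i ∧ p i ≤ 1) :
    ∀ j, ‖eulerAux T p j‖ ≤ (∑ i ∈ range j, p i) * ‖T 0‖ := by
  intro j
  induction j with
  | zero => simp [eulerAux]
  | succ j ih =>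
    obtain ⟨h0, h1⟩ := hp j
    have hstep : eulerAux T p (j+1) = eulerAux T p j + p j • (T (eulerAux T p j) - eulerAux T p j) := by
      show (1 - p j) • eulerAux T p j + p j • T (eulerAux T p j) = _
      module
    rw [hstep, Finset.sum_range_succ, add_mul]
    calc ‖eulerAux T p j + p j • (T (eulerAux T p j) - eulerAux T p j)‖
        ≤ ‖eulerAux T p j‖ + p j * ‖T (eulerAux T p j) - eulerAux T p j‖ := by
          refine (norm_add_le _ _).trans ?_
          rw [norm_smul, Real.norm_eq_abs, abs_of_nonneg h0]
      _ ≤ (∑ i ∈ range j, p i) * ‖T 0‖ + p j * ‖T 0‖ := by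
          exact add_le_add ih (mul_le_mul_of_nonneg_left (euler_res hT hp j) h0)


lemma euler_key (hT : ∀ x y : Z, ‖T x - T y‖ ≤ ‖x - y‖)
    (hp : ∀ i, 0 ≤ p i ∧ p i ≤ 1) (hq : ∀ i, 0 ≤ q i ∧ q i ≤ 1) :
    ∀ n j l, j + l ≤ n →
      ‖eulerAux T p j - eulerAux T q l‖ ≤
        ‖T 0‖ * Real.sqrt ((∑ i ∈ range j, p i - ∑ i ∈ range l, q i)^2
          + ∑ i ∈ range j, (p i)^2 + ∑ i ∈ range l, (q i)^2) := by
  -- boundary helpers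
  have hbound : ∀ (r : ℕ → ℝ), (∀ i, 0 ≤ r i ∧ r i ≤ 1) → ∀ l : ℕ,
      ‖eulerAux T r l‖ ≤ ‖T 0‖ * Real.sqrt ((∑ i ∈ range l, r i)^2 + ∑ i ∈ range l, (r i)^2) := by
    intro r hr l
    have h1 := euler_norm hT hr l
    have h2 : (∑ i ∈ range l, r i) ≤ Real.sqrt ((∑ i ∈ range l, r i)^2 + ∑ i ∈ range l, (r i)^2) := by
      have hsn : (0:ℝ) ≤ ∑ i ∈ range l, r i := Finset.sum_nonneg fun i _ => (hr i).1
      have h2n : (0:ℝ) ≤ ∑ i ∈ range l, (r i)^2 := Finset.sum_nonneg fun i _ => sq_nonneg _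
      rw [Real.le_sqrt hsn (by positivity)]
      linarith
    calc ‖eulerAux T r l‖ ≤ (∑ i ∈ range l, r i) * ‖T 0‖ := h1
      _ ≤ Real.sqrt ((∑ i ∈ range l, r i)^2 + ∑ i ∈ range l, (r i)^2) * ‖T 0‖ :=
          mul_le_mul_of_nonneg_right h2 (norm_nonneg _)
      _ = ‖T 0‖ * Real.sqrt ((∑ i ∈ range l, r i)^2 + ∑ i ∈ range l, (r i)^2) := mul_comm _ _
  intro n
  induction n with
  | zero =>
    intro j l hjl
    obtain ⟨rfl, rfl⟩ : j = 0 ∧ l = 0 := by omega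
    simp [eulerAux]
  | succ n ih =>
    intro j l hjl
    match j, l with
    | 0, l =>
      have := hbound q hq l
      simp only [eulerAux, zero_sub, norm_neg, Finset.sum_range_zero] at this ⊢
      calc ‖eulerAux T q l‖ ≤ ‖T 0‖ * Real.sqrt ((∑ i ∈ range l, q i)^2 + ∑ i ∈ range l, (q i)^2) := this
        _ ≤ _ := by
          apply mul_le_mul_of_nonneg_left _ (norm_nonneg _)
          apply Real.sqrt_le_sqrt
          ring_nf
          linarith
    | j+1, 0 =>
      have := hbound p hp (j+1)
      simp only [eulerAux, sub_zero, Finset.sum_range_zero] at this ⊢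
      calc ‖eulerAux T p (j+1)‖ ≤ ‖T 0‖ * Real.sqrt ((∑ i ∈ range (j+1), p i)^2 + ∑ i ∈ range (j+1), (p i)^2) := this
        _ ≤ _ := by
          apply mul_le_mul_of_nonneg_left _ (norm_nonneg _)
          apply Real.sqrt_le_sqrt
          ring_nf
          linarith
    | j+1, l+1 =>
      obtain ⟨hh0, hh1⟩ := hp j
      obtain ⟨he0, he1⟩ := hq l
      set h := p j with hh
      set ε := q l with he
      set A := eulerAux T p j with hA
      set B := eulerAux T q l with hB
      set A' := eulerAux T p (j+1) with hA'
      set B' := eulerAux T q (l+1) with hB'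
      have hA'eq : A' = (1 - h) • A + h • T A := rfl
      have hB'eq : B' = (1 - ε) • B + ε • T B := rfl
      set P := ∑ i ∈ range j, p i with hP
      set Q := ∑ i ∈ range l, q i with hQ
      set S := ∑ i ∈ range j, (p i)^2 with hS
      set E := ∑ i ∈ range l, (q i)^2 with hE
      have hSn : 0 ≤ S := Finset.sum_nonneg fun i _ => sq_nonneg _
      have hEn : 0 ≤ E := Finset.sum_nonneg fun i _ => sq_nonneg _
      have hsums : (∑ i ∈ range (j+1), p i) = P + h := by rw [Finset.sum_range_succ]
      have hsums2 : (∑ i ∈ range (l+1), q i) = Q + ε := by rw [Finset.sum_range_succ]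
      have hsumsS : (∑ i ∈ range (j+1), (p i)^2) = S + h^2 := by rw [Finset.sum_range_succ]
      have hsumsE : (∑ i ∈ range (l+1), (q i)^2) = E + ε^2 := by rw [Finset.sum_range_succ]
      clear_value h ε A B A' B' P Q S E
      rw [hsums, hsums2, hsumsS, hsumsE]
      -- degenerate cases
      rcases eq_or_lt_of_le hh0 with hz | hhpos
      · -- h = 0
        have hAA : A' = A := by rw [hA'eq, ← hz]; module
        have := ih j (l+1) (by omega)
        rw [hsums2, hsumsE] at this
        simp only [← hP, ← hS, ← hA, ← hB'] at this
        rw [hAA, ← hz]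
        simpa using this
      rcases eq_or_lt_of_le he0 with hz | hepos
      · -- ε = 0
        have hBB : B' = B := by rw [hB'eq, ← hz]; module
        have := ih (j+1) l (by omega)
        rw [hsums, hsumsS] at this
        simp only [← hQ, ← hE, ← hA', ← hB] at this
        rw [hBB, ← hz]
        simpa using this
      -- main case
      set a := ε * (1 - h) with ha
      set b := h * (1 - ε) with hb
      set c := h * ε with hc
      have han : 0 ≤ a := mul_nonneg he0 (by linarith)
      have hbn : 0 ≤ b := mul_nonneg hh0 (by linarith)
      have hcn : 0 ≤ c := mul_nonneg hh0 he0
      have hD : a + b + c = h + ε - h*ε := by rw [ha, hb, hc]; ring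
      have hDpos : 0 < h + ε - h*ε := by nlinarith
      -- vector identity
      have hid : (h + ε - h*ε) • (A' - B') = a • (A - B') + b • (A' - B) + c • (T A - T B) := by
        rw [hA'eq, hB'eq, ha, hb, hc]; module
      -- norm inequality
      have hnorm : (h + ε - h*ε) * ‖A' - B'‖ ≤ a * ‖A - B'‖ + b * ‖A' - B‖ + c * ‖A - B‖ := by
        have h1 : (h + ε - h*ε) * ‖A' - B'‖ = ‖(h + ε - h*ε) • (A' - B')‖ := by
          rw [norm_smul, Real.norm_eq_abs, abs_of_pos hDpos]
        rw [h1, hid]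
        calc ‖a • (A - B') + b • (A' - B) + c • (T A - T B)‖
            ≤ ‖a • (A - B')‖ + ‖b • (A' - B)‖ + ‖c • (T A - T B)‖ :=
              norm_add₃_le
          _ ≤ a * ‖A - B'‖ + b * ‖A' - B‖ + c * ‖A - B‖ := by
              rw [norm_smul, norm_smul, norm_smul, Real.norm_eq_abs, Real.norm_eq_abs,
                Real.norm_eq_abs, abs_of_nonneg han, abs_of_nonneg hbn, abs_of_nonneg hcn]
              exact add_le_add_right (mul_le_mul_of_nonneg_left (hT A B) hcn) _
      clear_value a b c
      -- induction hypotheses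
      have ih1 := ih j (l+1) (by omega)
      have ih2 := ih (j+1) l (by omega)
      have ih3 := ih j l (by omega)
      rw [hsums2, hsumsE] at ih1
      rw [hsums, hsumsS] at ih2
      simp only [← hP, ← hQ, ← hS, ← hE, ← hA, ← hB, ← hA', ← hB'] at ih1 ih2 ih3
      set x₁ := (P - (Q + ε))^2 + S + (E + ε^2) with hx₁
      set x₂ := (P + h - Q)^2 + (S + h^2) + E with hx₂
      set x₃ := (P - Q)^2 + S + E with hx₃
      set X := (P + h - (Q + ε))^2 + (S + h^2) + (E + ε^2) with hX
      have hx₁n : 0 ≤ x₁ := by rw [hx₁]; positivity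
      have hx₂n : 0 ≤ x₂ := by rw [hx₂]; positivity
      have hx₃n : 0 ≤ x₃ := by rw [hx₃]; positivity
      have hXn : 0 ≤ X := by rw [hX]; positivity
      clear_value x₁ x₂ x₃ X
      have hpoly : a*x₁ + b*x₂ + c*x₃ ≤ (a+b+c)*X := by
        have hexp : a*x₁ + b*x₂ + c*x₃ = (a+b+c)*X - 2*(h*ε)^2 := by
          rw [ha, hb, hc, hx₁, hx₂, hx₃, hX]; ring
        linarith [sq_nonneg (h*ε)]
      have hsqrt := sqrt_concave3 a b c x₁ x₂ x₃ X han hbn hcn hx₁n hx₂n hx₃n hXn hpoly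
      have hfinal : (h + ε - h*ε) * ‖A' - B'‖ ≤ (h + ε - h*ε) * (‖T 0‖ * Real.sqrt X) := by
        calc (h + ε - h*ε) * ‖A' - B'‖ ≤ a * ‖A - B'‖ + b * ‖A' - B‖ + c * ‖A - B‖ := hnorm
          _ ≤ a * (‖T 0‖ * Real.sqrt x₁) + b * (‖T 0‖ * Real.sqrt x₂) + c * (‖T 0‖ * Real.sqrt x₃) := by
              gcongr
          _ = ‖T 0‖ * (a * Real.sqrt x₁ + b * Real.sqrt x₂ + c * Real.sqrt x₃) := by ring
          _ ≤ ‖T 0‖ * ((a+b+c) * Real.sqrt X) := mul_le_mul_of_nonneg_left hsqrt (norm_nonneg _)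
          _ = (h + ε - h*ε) * (‖T 0‖ * Real.sqrt X) := by rw [hD]; ring
      exact le_of_mul_le_mul_left hfinal hDpos

lemma euler_flow {T : Z → Z} (hT : ∀ x y : Z, ‖T x - T y‖ ≤ ‖x - y‖)
    {f : ℝ → Z} (hf0 : f 0 = 0)
    (hf : ∀ s : ℝ, 0 ≤ s → HasDerivAt f (T (f s) - f s) s)
    {t M : ℝ} (ht : 0 < t) (hM : ∀ s ∈ Icc (0:ℝ) t, ‖T (f s) - f s‖ ≤ M)
    {δ : ℝ} (hδ0 : 0 < δ) (hδ1 : δ ≤ 1) :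
    ∀ j : ℕ, (j : ℝ) * δ ≤ t →
      ‖eulerAux T (fun _ => δ) j - f (j * δ)‖ ≤ j * (2 * M * δ^2) := by
  have hM0 : 0 ≤ M := le_trans (norm_nonneg _) (hM 0 ⟨le_refl _, ht.le⟩)
  have hlip : ∀ r ∈ Icc (0:ℝ) t, ∀ r' ∈ Icc (0:ℝ) t, ‖f r' - f r‖ ≤ M * ‖r' - r‖ := by
    intro r hr r' hr'
    exact Convex.norm_image_sub_le_of_norm_hasDerivWithin_le
      (fun x hx => (hf x hx.1).hasDerivWithinAt) (fun x hx => hM x hx) (convex_Icc _ _) hr hr'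
  intro j
  induction j with
  | zero => simp [eulerAux, hf0]
  | succ j ihj =>
    intro hjt
    have hj1 : ((j:ℝ)+1) * δ ≤ t := by push_cast at hjt ⊢; linarith
    have hjδ : (j:ℝ) * δ ≤ t := by nlinarith [hδ0.le]
    have hjδ0 : 0 ≤ (j:ℝ) * δ := by positivity
    set s := (j:ℝ) * δ with hs
    have hsmem : s ∈ Icc (0:ℝ) t := ⟨hjδ0, hjδ⟩
    have hs'mem : s + δ ∈ Icc (0:ℝ) t := ⟨by linarith, by push_cast at hj1; linarith [hj1]⟩
    set v := T (f s) - f s with hv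
    -- local error
    have hloc : ‖f (s + δ) - f s - δ • v‖ ≤ 2 * M * δ^2 := by
      have key : ∀ x ∈ Icc s (s + δ), HasDerivWithinAt (fun r => f r - r • v)
          ((T (f x) - f x) - v) (Icc s (s + δ)) x := by
        intro x hx
        exact ((hf x (le_trans hjδ0 hx.1)).sub ((hasDerivAt_id x).smul_const v)).hasDerivWithinAt.congr_deriv
          (by simp)
      have bound : ∀ x ∈ Icc s (s + δ), ‖(T (f x) - f x) - v‖ ≤ 2 * M * δ := by
        intro x hx
        have hxmem : x ∈ Icc (0:ℝ) t := ⟨le_trans hjδ0 hx.1, le_trans hx.2 hs'mem.2⟩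
        have h1 : ‖(T (f x) - f x) - v‖ ≤ ‖T (f x) - T (f s)‖ + ‖f x - f s‖ := by
          rw [hv]
          calc ‖(T (f x) - f x) - (T (f s) - f s)‖ = ‖(T (f x) - T (f s)) - (f x - f s)‖ := by
                congr 1; abel
            _ ≤ ‖T (f x) - T (f s)‖ + ‖f x - f s‖ := norm_sub_le _ _
        have h2 : ‖f x - f s‖ ≤ M * δ := by
          have := hlip s hsmem x hxmem
          have hxs : ‖x - s‖ ≤ δ := by
            rw [Real.norm_eq_abs, abs_of_nonneg (by linarith [hx.1])]
            linarith [hx.2]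
          calc ‖f x - f s‖ ≤ M * ‖x - s‖ := this
            _ ≤ M * δ := mul_le_mul_of_nonneg_left hxs hM0
        calc ‖(T (f x) - f x) - v‖ ≤ ‖T (f x) - T (f s)‖ + ‖f x - f s‖ := h1
          _ ≤ ‖f x - f s‖ + ‖f x - f s‖ := add_le_add_left (hT _ _) _
          _ ≤ M * δ + M * δ := add_le_add h2 h2
          _ = 2 * M * δ := by ring
      have := Convex.norm_image_sub_le_of_norm_hasDerivWithin_le key bound (convex_Icc _ _)
        (left_mem_Icc.mpr (by linarith)) (right_mem_Icc.mpr (by linarith))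
      have heq : (fun r => f r - r • v) (s + δ) - (fun r => f r - r • v) s
          = f (s + δ) - f s - δ • v := by
        simp only
        rw [add_smul]
        abel
      rw [heq] at this
      calc ‖f (s + δ) - f s - δ • v‖ ≤ 2 * M * δ * ‖s + δ - s‖ := this
        _ = 2 * M * δ^2 := by
            rw [show s + δ - s = δ by ring, Real.norm_eq_abs, abs_of_pos hδ0]; ring
    -- step
    set w := eulerAux T (fun _ => δ) j with hw
    have hstep : eulerAux T (fun _ => δ) (j+1) = (1 - δ) • w + δ • T w := rfl
    have hdecomp : eulerAux T (fun _ => δ) (j+1) - f (((j:ℝ)+1) * δ)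
        = ((1 - δ) • (w - f s) + δ • (T w - T (f s))) + (f s + δ • v - f (s + δ)) := by
      rw [hstep, hv, hs]
      have : ((j:ℝ)+1) * δ = (j:ℝ)*δ + δ := by ring
      rw [this]
      module
    have ihj' := ihj hjδ
    have hmain : ‖eulerAux T (fun _ => δ) (j+1) - f (((j:ℝ)+1) * δ)‖
        ≤ (j:ℝ) * (2*M*δ^2) + 2*M*δ^2 := by
      rw [hdecomp]
      calc ‖((1 - δ) • (w - f s) + δ • (T w - T (f s))) + (f s + δ • v - f (s + δ))‖
          ≤ ‖(1 - δ) • (w - f s)‖ + ‖δ • (T w - T (f s))‖ + ‖f s + δ • v - f (s + δ)‖ :=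
            norm_add₃_le
        _ ≤ (1 - δ) * ‖w - f s‖ + δ * ‖w - f s‖ + 2*M*δ^2 := by
            have e1 : ‖(1 - δ) • (w - f s)‖ = (1 - δ) * ‖w - f s‖ := by
              rw [norm_smul, Real.norm_eq_abs, abs_of_nonneg (by linarith)]
            have e2 : ‖δ • (T w - T (f s))‖ ≤ δ * ‖w - f s‖ := by
              rw [norm_smul, Real.norm_eq_abs, abs_of_pos hδ0]
              exact mul_le_mul_of_nonneg_left (hT _ _) hδ0.le
            have e3 : ‖f s + δ • v - f (s + δ)‖ ≤ 2*M*δ^2 := by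
              have : f s + δ • v - f (s + δ) = -(f (s + δ) - f s - δ • v) := by abel
              rw [this, norm_neg]; exact hloc
            gcongr <;> linarith [e1.le]
        _ = ‖w - f s‖ + 2*M*δ^2 := by ring
        _ ≤ (j:ℝ) * (2*M*δ^2) + 2*M*δ^2 := by
            exact add_le_add_left ihj' _
    calc ‖eulerAux T (fun _ => δ) (j+1) - f ((j+1 : ℕ) * δ)‖
        = ‖eulerAux T (fun _ => δ) (j+1) - f (((j:ℝ)+1) * δ)‖ := by push_cast; ring_nf
      _ ≤ (j:ℝ) * (2*M*δ^2) + 2*M*δ^2 := hmain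
      _ = ((j+1 : ℕ) : ℝ) * (2*M*δ^2) := by push_cast; ring

end

/-- Asymptotic comparison: for step sizes `h_i ∈ [0,1]` summing to `t > 0`,
the normalized Eulerian scheme started at `0` satisfies
`‖z_k/t - f t / t‖ ≤ ‖T 0‖ / √t` where `f` solves `ḟ = (T - Id) f`, `f 0 = 0`. -/
theorem eulerian_scheme_normalized_bound
    {Z : Type*} [NormedAddCommGroup Z] [NormedSpace ℝ Z] [CompleteSpace Z]
    (T : Z → Z) (hT : ∀ x y : Z, ‖T x - T y‖ ≤ ‖x - y‖)
    (t : ℝ) (ht : 0 < t)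
    (k : ℕ) (hs : ℕ → ℝ)
    (hbound : ∀ i ∈ Finset.Icc 1 k, 0 ≤ hs i ∧ hs i ≤ 1)
    (hsum : ∑ i ∈ Finset.Icc 1 k, hs i = t)
    (zs : ℕ → Z) (hz0 : zs 0 = 0)
    (hz : ∀ j, zs (j + 1) = (1 - hs (j + 1)) • zs j + hs (j + 1) • T (zs j))
    (f : ℝ → Z) (hf0 : f 0 = 0)
    (hf : ∀ s : ℝ, 0 ≤ s → HasDerivAt f (T (f s) - f s) s) :
    ‖(1 / t) • zs k - (1 / t) • f t‖ ≤ ‖T 0‖ / Real.sqrt t := by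
  classical
  set p : ℕ → ℝ := fun i => if i < k then hs (i+1) else 0 with hpdef
  have hp : ∀ i, 0 ≤ p i ∧ p i ≤ 1 := by
    intro i
    rw [hpdef]
    dsimp only
    split
    · exact hbound (i+1) (Finset.mem_Icc.mpr ⟨Nat.le_add_left 1 i, by omega⟩)
    · exact ⟨le_refl 0, zero_le_one⟩
  have hzs : ∀ j, j ≤ k → eulerAux T p j = zs j := by
    intro j
    induction j with
    | zero => intro _; simp [eulerAux, hz0]
    | succ j ihj =>
      intro hjk
      have hjk' : j < k := by omega
      show (1 - p j) • eulerAux T p j + p j • T (eulerAux T p j) = zs (j+1)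
      rw [ihj (by omega), hz j, hpdef]
      simp [hjk']
  have hPk : ∑ i ∈ Finset.range k, p i = t := by
    rw [← hsum, ← Finset.Ico_add_one_right_eq_Icc, Finset.sum_Ico_eq_sum_range]
    apply Finset.sum_congr (by simp)
    intro i hi
    have : i < k := by simpa using hi
    simp [hpdef, this, add_comm]
  set S := ∑ i ∈ Finset.range k, (p i)^2 with hSdef
  have hSn : 0 ≤ S := Finset.sum_nonneg fun i _ => sq_nonneg _
  have hSt : S ≤ t := by
    rw [hSdef, ← hPk]
    apply Finset.sum_le_sum
    intro i _
    obtain ⟨h0, h1⟩ := hp i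
    nlinarith
  -- bound on the derivative over [0, t]
  have hfc : ContinuousOn f (Set.Icc 0 t) := fun s hs => ((hf s hs.1).continuousAt).continuousWithinAt
  have hTlip : LipschitzWith 1 T := by
    apply LipschitzWith.of_dist_le_mul
    intro x y
    rw [dist_eq_norm, dist_eq_norm]
    simpa using hT x y
  have hphic : ContinuousOn (fun s => ‖T (f s) - f s‖) (Set.Icc 0 t) :=
    ((hTlip.continuous.comp_continuousOn hfc).sub hfc).norm
  obtain ⟨s₀, hs₀mem, hs₀⟩ := isCompact_Icc.exists_isMaxOn ⟨0, le_refl 0, ht.le⟩ hphic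
  set M := ‖T (f s₀) - f s₀‖ with hMdef
  have hM : ∀ s ∈ Set.Icc (0:ℝ) t, ‖T (f s) - f s‖ ≤ M := fun s hs => hs₀ hs
  have hM0 : 0 ≤ M := norm_nonneg _
  -- the per-m bound
  have hperm : ∀ m : ℕ, max 1 ⌈t⌉₊ ≤ m →
      ‖zs k - f t‖ ≤ ‖T 0‖ * Real.sqrt (S + t^2/(m:ℝ)) + 2*M*(t^2/(m:ℝ)) := by
    intro m hm
    have hm1 : 1 ≤ m := le_trans (le_max_left _ _) hm
    have hm0 : (0:ℝ) < m := by exact_mod_cast hm1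
    have htm : t ≤ (m:ℝ) := by
      calc t ≤ (⌈t⌉₊ : ℝ) := Nat.le_ceil t
        _ ≤ m := by exact_mod_cast le_trans (le_max_right _ _) hm
    set δ := t / m with hδdef
    have hδ0 : 0 < δ := by positivity
    have hδ1 : δ ≤ 1 := (div_le_one hm0).mpr htm
    have hq : ∀ i : ℕ, 0 ≤ (fun _ : ℕ => δ) i ∧ (fun _ : ℕ => δ) i ≤ 1 := fun i => ⟨hδ0.le, hδ1⟩
    have hmδ : (m:ℝ) * δ = t := by rw [hδdef]; field_simp
    have hQm : ∑ i ∈ Finset.range m, (fun _ : ℕ => δ) i = t := by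
      simp [Finset.sum_const, nsmul_eq_mul, hmδ]
    have hQ2m : ∑ i ∈ Finset.range m, ((fun _ : ℕ => δ) i)^2 = t^2/(m:ℝ) := by
      simp only [Finset.sum_const, Finset.card_range, nsmul_eq_mul, hδdef]
      field_simp
    have hdisc := euler_key hT hp hq (k + m) k m le_rfl
    rw [hPk, hQm, hQ2m, ← hSdef] at hdisc
    have hdisc' : ‖eulerAux T p k - eulerAux T (fun _ : ℕ => δ) m‖
        ≤ ‖T 0‖ * Real.sqrt (S + t^2/(m:ℝ)) := by
      have : (t - t)^2 + S + t^2/(m:ℝ) = S + t^2/(m:ℝ) := by ring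
      rwa [this] at hdisc
    have hflow := euler_flow hT hf0 hf ht hM hδ0 hδ1 m (le_of_eq hmδ)
    rw [hmδ] at hflow
    have hflow' : ‖eulerAux T (fun _ : ℕ => δ) m - f t‖ ≤ 2*M*(t^2/(m:ℝ)) := by
      have : (m:ℝ) * (2*M*δ^2) = 2*M*(t^2/(m:ℝ)) := by
        rw [hδdef]; field_simp
      rwa [this] at hflow
    calc ‖zs k - f t‖ = ‖(eulerAux T p k - eulerAux T (fun _ : ℕ => δ) m)
            + (eulerAux T (fun _ : ℕ => δ) m - f t)‖ := by rw [← hzs k le_rfl]; congr 1; abel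
      _ ≤ ‖eulerAux T p k - eulerAux T (fun _ : ℕ => δ) m‖
            + ‖eulerAux T (fun _ : ℕ => δ) m - f t‖ := norm_add_le _ _
      _ ≤ ‖T 0‖ * Real.sqrt (S + t^2/(m:ℝ)) + 2*M*(t^2/(m:ℝ)) := add_le_add hdisc' hflow'
  -- take the limit m → ∞
  have h0 : Filter.Tendsto (fun m : ℕ => t^2/(m:ℝ)) Filter.atTop (nhds 0) :=
    tendsto_const_div_atTop_nhds_zero_nat _
  have h2 : Filter.Tendsto (fun m : ℕ => Real.sqrt (S + t^2/(m:ℝ))) Filter.atTop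
      (nhds (Real.sqrt (S + 0))) :=
    (Real.continuous_sqrt.tendsto _).comp (tendsto_const_nhds.add h0)
  have hg : Filter.Tendsto (fun m : ℕ => ‖T 0‖ * Real.sqrt (S + t^2/(m:ℝ)) + 2*M*(t^2/(m:ℝ)))
      Filter.atTop (nhds (‖T 0‖ * Real.sqrt S)) := by
    have := ((tendsto_const_nhds (x := ‖T 0‖)).mul h2).add ((tendsto_const_nhds (x := 2*M)).mul h0)
    simpa using this
  have hkey : ‖zs k - f t‖ ≤ ‖T 0‖ * Real.sqrt S :=
    ge_of_tendsto hg (Filter.eventually_atTop.mpr ⟨max 1 ⌈t⌉₊, hperm⟩)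
  have hkey2 : ‖zs k - f t‖ ≤ ‖T 0‖ * Real.sqrt t :=
    le_trans hkey (mul_le_mul_of_nonneg_left (Real.sqrt_le_sqrt hSt) (norm_nonneg _))
  -- normalize
  have hst : (0:ℝ) < Real.sqrt t := Real.sqrt_pos.mpr ht
  have hfin : (1/t) * (‖T 0‖ * Real.sqrt t) = ‖T 0‖ / Real.sqrt t := by
    calc (1/t) * (‖T 0‖ * Real.sqrt t) = ‖T 0‖ * Real.sqrt t / t := by ring
      _ = ‖T 0‖ * Real.sqrt t / (Real.sqrt t * Real.sqrt t) := by rw [Real.mul_self_sqrt ht.le]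
      _ = ‖T 0‖ / Real.sqrt t := mul_div_mul_right _ _ (ne_of_gt hst)
  calc ‖(1 / t) • zs k - (1 / t) • f t‖ = ‖(1/t) • (zs k - f t)‖ := by rw [smul_sub]
    _ = (1/t) * ‖zs k - f t‖ := by
        rw [norm_smul, Real.norm_eq_abs, abs_of_pos (by positivity)]
    _ ≤ (1/t) * (‖T 0‖ * Real.sqrt t) := by
        exact mul_le_mul_of_nonneg_left hkey2 (by positivity)
    _ = ‖T 0‖ / Real.sqrt t := hfin
end

section
/- For all λ, μ ∈ (0,1], ‖w_λ − w_μ‖ ≤ 2·|1 − λ/μ|·‖T(0)‖. -/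
/-- For `λ, μ ∈ (0,1]` with corresponding fixed points `W_λ`, `W_μ` of
`x ↦ T((1-λ) x)` resp. `x ↦ T((1-μ) x)`, one has
`‖w_λ - w_μ‖ ≤ 2 |1 - λ/μ| ‖T 0‖`. -/
theorem discounted_values_lipschitz
    {Z : Type*} [NormedAddCommGroup Z] [NormedSpace ℝ Z] [CompleteSpace Z]
    (T : Z → Z) (hT : ∀ x y : Z, ‖T x - T y‖ ≤ ‖x - y‖)
    (lam mu : ℝ) (hlam : lam ∈ Set.Ioc (0 : ℝ) 1) (hmu : mu ∈ Set.Ioc (0 : ℝ) 1)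
    (Wl : Z) (hWl : T ((1 - lam) • Wl) = Wl)
    (Wm : Z) (hWm : T ((1 - mu) • Wm) = Wm) :
    ‖lam • Wl - mu • Wm‖ ≤ 2 * |1 - lam / mu| * ‖T 0‖ := by
  obtain ⟨hlam0, hlam1⟩ := hlam
  obtain ⟨hmu0, hmu1⟩ := hmu
  have habs_lam : |1 - lam| = 1 - lam := abs_of_nonneg (by linarith)
  -- bound on ‖Wm‖ : mu * ‖Wm‖ ≤ ‖T 0‖
  have hWm_bound : mu * ‖Wm‖ ≤ ‖T 0‖ := by
    have h1 : ‖Wm‖ ≤ (1 - mu) * ‖Wm‖ + ‖T 0‖ := by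
      calc ‖Wm‖ = ‖(T ((1 - mu) • Wm) - T 0) + T 0‖ := by rw [sub_add_cancel, hWm]
        _ ≤ ‖T ((1 - mu) • Wm) - T 0‖ + ‖T 0‖ := norm_add_le _ _
        _ ≤ ‖(1 - mu) • Wm - 0‖ + ‖T 0‖ := by linarith [hT ((1 - mu) • Wm) 0]
        _ = (1 - mu) * ‖Wm‖ + ‖T 0‖ := by
            rw [sub_zero, norm_smul, Real.norm_eq_abs, abs_of_nonneg (by linarith : (0:ℝ) ≤ 1 - mu)]
    linarith
  -- bound on ‖Wl - Wm‖ : lam * ‖Wl - Wm‖ ≤ |mu - lam| * ‖Wm‖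
  have hdiff : lam * ‖Wl - Wm‖ ≤ |mu - lam| * ‖Wm‖ := by
    have key : (1 - lam) • Wl - (1 - mu) • Wm = (1 - lam) • (Wl - Wm) + (mu - lam) • Wm := by
      rw [smul_sub]; module
    have h1 : ‖Wl - Wm‖ ≤ (1 - lam) * ‖Wl - Wm‖ + |mu - lam| * ‖Wm‖ := by
      calc ‖Wl - Wm‖ = ‖T ((1 - lam) • Wl) - T ((1 - mu) • Wm)‖ := by rw [hWl, hWm]
        _ ≤ ‖(1 - lam) • Wl - (1 - mu) • Wm‖ := hT _ _
        _ = ‖(1 - lam) • (Wl - Wm) + (mu - lam) • Wm‖ := by rw [key]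
        _ ≤ ‖(1 - lam) • (Wl - Wm)‖ + ‖(mu - lam) • Wm‖ := norm_add_le _ _
        _ = (1 - lam) * ‖Wl - Wm‖ + |mu - lam| * ‖Wm‖ := by
            rw [norm_smul, norm_smul, Real.norm_eq_abs, Real.norm_eq_abs, habs_lam]
    linarith
  -- main combination
  have hmain : ‖lam • Wl - mu • Wm‖ ≤ lam * ‖Wl - Wm‖ + |lam - mu| * ‖Wm‖ := by
    have key : lam • Wl - mu • Wm = lam • (Wl - Wm) + (lam - mu) • Wm := by
      rw [smul_sub]; module
    calc ‖lam • Wl - mu • Wm‖ = ‖lam • (Wl - Wm) + (lam - mu) • Wm‖ := by rw [key]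
      _ ≤ ‖lam • (Wl - Wm)‖ + ‖(lam - mu) • Wm‖ := norm_add_le _ _
      _ = lam * ‖Wl - Wm‖ + |lam - mu| * ‖Wm‖ := by
          rw [norm_smul, norm_smul, Real.norm_eq_abs, Real.norm_eq_abs,
            abs_of_pos hlam0]
  have habs_eq : |1 - lam / mu| = |mu - lam| / mu := by
    rw [show (1 : ℝ) - lam / mu = (mu - lam) / mu by field_simp, abs_div, abs_of_pos hmu0]
  rw [habs_eq, abs_sub_comm lam mu] at *
  have hWmnorm : ‖Wm‖ ≤ ‖T 0‖ / mu := by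
    rw [le_div_iff₀ hmu0]; linarith [hWm_bound]
  have h1 : |mu - lam| * ‖Wm‖ ≤ |mu - lam| * (‖T 0‖ / mu) :=
    mul_le_mul_of_nonneg_left hWmnorm (abs_nonneg _)
  calc ‖lam • Wl - mu • Wm‖ ≤ lam * ‖Wl - Wm‖ + |mu - lam| * ‖Wm‖ := hmain
    _ ≤ |mu - lam| * ‖Wm‖ + |mu - lam| * ‖Wm‖ := by linarith
    _ ≤ 2 * (|mu - lam| / mu) * ‖T 0‖ := by
        have he : 2 * (|mu - lam| / mu) * ‖T 0‖ = 2 * (|mu - lam| * (‖T 0‖ / mu)) := by ring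
        rw [he]; linarith
end

section
/- For all λ ∈ (0,1] and h ∈ (0,1], w_λ^h = w_μ where μ = λ/(1 + λ − λ·h). (Note μ ∈ (0,1].) -/
/-- Identification of the `λ`-discounted value of `T_h = (1-h) Id + h T` with
the `μ`-discounted value of `T`, where `μ = λ/(1 + λ - λ h)`:
if `W_λ^h` is the fixed point of `u ↦ T_h((1 - λ h) u)` and `W_μ` is the fixed
point of `x ↦ T((1 - μ) x)`, then `λ • W_λ^h = μ • W_μ`. -/
theorem discounted_value_stage_duration
    {Z : Type*} [NormedAddCommGroup Z] [NormedSpace ℝ Z] [CompleteSpace Z]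
    (T : Z → Z) (hT : ∀ x y : Z, ‖T x - T y‖ ≤ ‖x - y‖)
    (lam h : ℝ) (hlam : lam ∈ Set.Ioc (0 : ℝ) 1) (hh : h ∈ Set.Ioc (0 : ℝ) 1)
    (Wlh : Z)
    (hWlh : (1 - h) • ((1 - lam * h) • Wlh) + h • T ((1 - lam * h) • Wlh) = Wlh)
    (Wmu : Z)
    (hWmu : T ((1 - lam / (1 + lam - lam * h)) • Wmu) = Wmu) :
    lam • Wlh = (lam / (1 + lam - lam * h)) • Wmu := by
  obtain ⟨hl0, hl1⟩ := hlam
  obtain ⟨hh0, hh1⟩ := hh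
  set D : ℝ := 1 + lam - lam * h with hDdef
  have hD1 : (1:ℝ) ≤ D := by nlinarith
  have hD0 : (0:ℝ) < D := lt_of_lt_of_le one_pos hD1
  have hlh : lam * h ≤ 1 := by nlinarith
  set μ : ℝ := lam / D with hmudef
  have hμ0 : 0 < μ := div_pos hl0 hD0
  have h1μ : 1 - μ = (1 - lam * h) / D := by
    field_simp [hmudef]
    rw [hmudef, sub_mul, div_mul_cancel₀ _ hD0.ne', hDdef]
    ring
  set x : Z := (1 - lam * h) • Wlh with hxdef
  -- x = (1-μ) • T x
  have hx : x = (1 - μ) • T x := by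
    have h1 : x = (1 - lam * h) • ((1 - h) • x + h • T x) := by
      rw [hxdef]
      congr 1
      exact hWlh.symm
    have h2 : (h * D) • x = ((1 - lam * h) * h) • T x := by
      have := h1
      rw [smul_add, smul_smul, smul_smul] at this
      have h3 : (h * D) • x = x - ((1 - lam * h) * (1 - h)) • x := by
        rw [hDdef]
        module
      rw [h3]
      nth_rewrite 1 [this]
      module
    have hhD : h * D ≠ 0 := by positivity
    have hco := congrArg (fun z => (h * D)⁻¹ • z) h2
    simp only [smul_smul, inv_mul_cancel₀ hhD, one_smul] at hco
    have hc : (h * D)⁻¹ * ((1 - lam * h) * h) = 1 - μ := by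
      rw [h1μ]; field_simp
    rwa [hc] at hco
  -- T x is a fixed point of y ↦ T ((1-μ) • y), hence equals Wmu
  have hfix : T ((1 - μ) • T x) = T x := by rw [← hx]
  have hWmu' : Wmu = T x := by
    have hle : ‖Wmu - T x‖ ≤ (1 - μ) * ‖Wmu - T x‖ := by
      calc ‖Wmu - T x‖ = ‖T ((1 - μ) • Wmu) - T ((1 - μ) • T x)‖ := by
            rw [hWmu, hfix]
        _ ≤ ‖(1 - μ) • Wmu - (1 - μ) • T x‖ := hT _ _
        _ = ‖(1 - μ) • (Wmu - T x)‖ := by rw [smul_sub]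
        _ = |1 - μ| * ‖Wmu - T x‖ := by rw [norm_smul, Real.norm_eq_abs]
        _ = (1 - μ) * ‖Wmu - T x‖ := by
            rw [abs_of_nonneg (by rw [h1μ]; exact div_nonneg (by linarith) hD0.le)]
    have : ‖Wmu - T x‖ = 0 := by nlinarith [norm_nonneg (Wmu - T x)]
    have := norm_sub_eq_zero_iff.mp this
    exact this
  -- conclude
  have hW : Wlh = (1 - h) • ((1 - μ) • Wmu) + h • Wmu := by
    rw [hWmu', ← hx]; exact hWlh.symm
  rw [hW]
  have hscal : lam * ((1 - h) * (1 - μ) + h) = μ := by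
    rw [h1μ, hmudef]
    field_simp
    ring
  calc lam • ((1 - h) • ((1 - μ) • Wmu) + h • Wmu)
      = (lam * ((1 - h) * (1 - μ) + h)) • Wmu := by module
    _ = μ • Wmu := by rw [hscal]
end

section
/- For all λ, h ∈ (0,1], ‖w_λ^h − w_{λ/(1+λ)}‖ ≤ 2·‖T(0)‖·λ·h. -/
set_option maxHeartbeats 1000000


/-- For `λ, h ∈ (0,1]`, `‖w_λ^h - w_{λ/(1+λ)}‖ ≤ 2 ‖T 0‖ λ h`, where `W_λ^h` is
the fixed point of `u ↦ T_h((1 - λ h) u)` with `T_h = (1-h) Id + h T`,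
`w_λ^h = λ • W_λ^h`, and `W_{λ/(1+λ)}` is the fixed point of
`x ↦ T((1 - λ/(1+λ)) x)`, `w_{λ/(1+λ)} = (λ/(1+λ)) • W_{λ/(1+λ)}`. -/
theorem discounted_value_vanishing_duration
    {Z : Type*} [NormedAddCommGroup Z] [NormedSpace ℝ Z] [CompleteSpace Z]
    (T : Z → Z) (hT : ∀ x y : Z, ‖T x - T y‖ ≤ ‖x - y‖)
    (lam h : ℝ) (hlam : lam ∈ Set.Ioc (0 : ℝ) 1) (hh : h ∈ Set.Ioc (0 : ℝ) 1)
    (Wlh : Z)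
    (hWlh : (1 - h) • ((1 - lam * h) • Wlh) + h • T ((1 - lam * h) • Wlh) = Wlh)
    (Wm : Z) (hWm : T ((1 - lam / (1 + lam)) • Wm) = Wm) :
    ‖lam • Wlh - (lam / (1 + lam)) • Wm‖ ≤ 2 * ‖T 0‖ * lam * h := by
  obtain ⟨hl0, hl1⟩ := hlam
  obtain ⟨hh0, hh1⟩ := hh
  have hc0 : (0:ℝ) < 1 + lam := by linarith
  have hs1 : (1:ℝ) ≤ 1 + lam - lam * h := by nlinarith
  have hs0 : (0:ℝ) < 1 + lam - lam * h := by linarith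
  have hlh1 : lam * h ≤ 1 := by nlinarith
  -- `T a = s • Wlh`
  have hTa : T ((1 - lam * h) • Wlh) = (1 + lam - lam * h) • Wlh := by
    have h2 : h • T ((1 - lam * h) • Wlh)
        = Wlh - (1 - h) • ((1 - lam * h) • Wlh) := by
      rw [eq_sub_iff_add_eq, add_comm]; exact hWlh
    apply smul_right_injective Z (ne_of_gt hh0)
    show h • T ((1 - lam * h) • Wlh) = h • ((1 + lam - lam * h) • Wlh)
    rw [h2]; module
  -- `T b = Wm`
  have hcoef : (1:ℝ) - lam / (1 + lam) = 1 / (1 + lam) := by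
    field_simp; ring
  rw [hcoef] at hWm
  -- abbreviations for norms
  set t0 : ℝ := ‖T 0‖ with ht0
  set D : ℝ := ‖(1 + lam - lam * h) • Wlh - Wm‖ with hD
  set M : ℝ := ‖Wm‖ with hM
  have hMn : 0 ≤ M := norm_nonneg _
  have hDn : 0 ≤ D := norm_nonneg _
  have ht0n : 0 ≤ t0 := norm_nonneg _
  -- inequality 1 : D ≤ ‖a - b‖
  have ineq1 : D ≤ ‖(1 - lam * h) • Wlh - (1 / (1 + lam)) • Wm‖ := by
    have h1 := hT ((1 - lam * h) • Wlh) ((1 / (1 + lam)) • Wm)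
    rw [hTa, hWm] at h1
    exact h1
  -- c • b = Wm
  have hbc : (1 + lam) • ((1 / (1 + lam)) • Wm) = Wm := by
    rw [smul_smul, mul_one_div_cancel hc0.ne', one_smul]
  -- identity A : s • (c • (a - b)) = (c*(s-lam)) • P - (lam^2*h) • Wm
  have idA : (1 + lam - lam * h) • ((1 + lam) •
      ((1 - lam * h) • Wlh - (1 / (1 + lam)) • Wm))
      = ((1 + lam) * (1 - lam * h)) • ((1 + lam - lam * h) • Wlh - Wm)
        - (lam ^ 2 * h) • Wm := by
    rw [smul_sub (1 + lam), hbc]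
    module
  -- inequality 2 (from idA)
  have ineq2 : (1 + lam - lam * h) * ((1 + lam) *
      ‖(1 - lam * h) • Wlh - (1 / (1 + lam)) • Wm‖)
      ≤ (1 + lam) * (1 - lam * h) * D + lam ^ 2 * h * M := by
    have e1 : (1 + lam - lam * h) * ((1 + lam) *
        ‖(1 - lam * h) • Wlh - (1 / (1 + lam)) • Wm‖)
        = ‖(1 + lam - lam * h) • ((1 + lam) •
          ((1 - lam * h) • Wlh - (1 / (1 + lam)) • Wm))‖ := by
      rw [norm_smul, norm_smul, Real.norm_eq_abs, Real.norm_eq_abs,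
        abs_of_pos hs0, abs_of_pos hc0]
    rw [e1, idA]
    calc ‖((1 + lam) * (1 - lam * h)) • ((1 + lam - lam * h) • Wlh - Wm)
          - (lam ^ 2 * h) • Wm‖
        ≤ ‖((1 + lam) * (1 - lam * h)) • ((1 + lam - lam * h) • Wlh - Wm)‖
          + ‖(lam ^ 2 * h) • Wm‖ := norm_sub_le _ _
      _ ≤ (1 + lam) * (1 - lam * h) * D + lam ^ 2 * h * M := by
          rw [norm_smul, norm_smul, Real.norm_eq_abs, Real.norm_eq_abs]
          have h1 : (0:ℝ) ≤ (1 + lam) * (1 - lam * h) := by nlinarith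
          have h2 : (0:ℝ) ≤ lam ^ 2 * h := by positivity
          rw [abs_of_nonneg h1, abs_of_nonneg h2]
  -- key bound : c * lam * D ≤ lam^2 * h * M
  have key : (1 + lam) * lam * D ≤ lam ^ 2 * h * M := by
    have hEn : 0 ≤ ‖(1 - lam * h) • Wlh - (1 / (1 + lam)) • Wm‖ := norm_nonneg _
    nlinarith [mul_le_mul_of_nonneg_left ineq1 (mul_pos hs0 hc0).le]
  -- norm bound on Wm : lam * M ≤ (1 + lam) * t0
  have hWmBound : lam * M ≤ (1 + lam) * t0 := by
    have h1 : M ≤ ‖(1 / (1 + lam)) • Wm - 0‖ + t0 := by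
      calc M = ‖T ((1 / (1 + lam)) • Wm) - T 0 + T 0‖ := by
              rw [sub_add_cancel, hWm]
        _ ≤ ‖T ((1 / (1 + lam)) • Wm) - T 0‖ + ‖T 0‖ := norm_add_le _ _
        _ ≤ ‖(1 / (1 + lam)) • Wm - 0‖ + t0 := by
              have := hT ((1 / (1 + lam)) • Wm) 0
              linarith
    have h2 : ‖(1 / (1 + lam)) • Wm - 0‖ = (1 / (1 + lam)) * M := by
      rw [sub_zero, norm_smul, Real.norm_eq_abs, abs_of_pos (by positivity)]
    rw [h2] at h1
    have h3 : (1 + lam) * M ≤ M + (1 + lam) * t0 := by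
      have := mul_le_mul_of_nonneg_left h1 hc0.le
      calc (1 + lam) * M ≤ (1 + lam) * ((1 / (1 + lam)) * M + t0) := this
        _ = M + (1 + lam) * t0 := by field_simp
    nlinarith
  -- identity B
  have hGc : (1 + lam) • (lam • Wlh - (lam / (1 + lam)) • Wm)
      = ((1 + lam) * lam) • Wlh - lam • Wm := by
    rw [smul_sub, smul_smul, smul_smul, mul_div_cancel₀ lam hc0.ne']
  have idB : (1 + lam - lam * h) • (((1 + lam) * lam) • Wlh - lam • Wm)
      = ((1 + lam) * lam) • ((1 + lam - lam * h) • Wlh - Wm)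
        + (lam ^ 2 * h) • Wm := by
    module
  -- inequality 4
  have ineq4 : (1 + lam - lam * h) * ((1 + lam) *
      ‖lam • Wlh - (lam / (1 + lam)) • Wm‖)
      ≤ (1 + lam) * lam * D + lam ^ 2 * h * M := by
    have e1 : (1 + lam - lam * h) * ((1 + lam) *
        ‖lam • Wlh - (lam / (1 + lam)) • Wm‖)
        = ‖(1 + lam - lam * h) • ((1 + lam) •
          (lam • Wlh - (lam / (1 + lam)) • Wm))‖ := by
      rw [norm_smul, norm_smul, Real.norm_eq_abs, Real.norm_eq_abs,
        abs_of_pos hs0, abs_of_pos hc0]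
    rw [e1, hGc, idB]
    calc ‖((1 + lam) * lam) • ((1 + lam - lam * h) • Wlh - Wm)
          + (lam ^ 2 * h) • Wm‖
        ≤ ‖((1 + lam) * lam) • ((1 + lam - lam * h) • Wlh - Wm)‖
          + ‖(lam ^ 2 * h) • Wm‖ := norm_add_le _ _
      _ ≤ (1 + lam) * lam * D + lam ^ 2 * h * M := by
          rw [norm_smul, norm_smul, Real.norm_eq_abs, Real.norm_eq_abs]
          have h1 : (0:ℝ) ≤ (1 + lam) * lam := by positivity
          have h2 : (0:ℝ) ≤ lam ^ 2 * h := by positivity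
          rw [abs_of_nonneg h1, abs_of_nonneg h2]
  -- finish
  set G : ℝ := ‖lam • Wlh - (lam / (1 + lam)) • Wm‖ with hG
  have hGn : 0 ≤ G := norm_nonneg _
  -- sc G ≤ 2 λ² h M ;  λ M ≤ c t0  ⇒  λ s c G ≤ 2 λ² h c t0 ⇒ G ≤ 2 t0 λ h
  have step1 : (1 + lam - lam * h) * ((1 + lam) * G) ≤ 2 * (lam ^ 2 * h) * M := by
    nlinarith
  nlinarith [mul_le_mul_of_nonneg_left step1 hl0.le,
    mul_le_mul_of_nonneg_left hWmBound (by positivity : (0:ℝ) ≤ 2 * lam * h),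
    mul_pos hs0 hc0, mul_nonneg (mul_nonneg hl0.le hh0.le) ht0n,
    mul_nonneg hGn (mul_pos hc0 hl0).le]
end

section
/- Let λ ∈ (0,1], let z ∈ Z, and let h_1, …, h_n ∈ (0,1]. Then ‖(D_λ^{h_1} ∘ D_λ^{h_2} ∘ ⋯ ∘ D_λ^{h_n})(z) − w_{λ/(1+λ)}‖ ≤ 2·‖T(0)‖·max_{1 ≤ i ≤ n} h_i + (‖T(0)‖ + ‖z‖)·Π_{i=1}^n (1 − λ·h_i). -/
set_option maxHeartbeats 1000000 in
/-- Bound on a finite composition of the operators `D_λ^{h_i}`, where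
`D_λ^h(x) = λ • T_h(((1-λh)/λ) • x)` and `T_h = (1-h) Id + h T`:
`‖D_λ^{h_1} ∘ ⋯ ∘ D_λ^{h_n}(z) - w_{λ/(1+λ)}‖
  ≤ 2 ‖T 0‖ max_i h_i + (‖T 0‖ + ‖z‖) Π_i (1 - λ h_i)`. -/
theorem composed_discounted_operators_bound
    {Z : Type*} [NormedAddCommGroup Z] [NormedSpace ℝ Z] [CompleteSpace Z]
    (T : Z → Z) (hT : ∀ x y : Z, ‖T x - T y‖ ≤ ‖x - y‖)
    (lam : ℝ) (hlam : lam ∈ Set.Ioc (0 : ℝ) 1)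
    (z : Z) (hs : List ℝ) (hne : hs ≠ [])
    (hmem : ∀ hi ∈ hs, hi ∈ Set.Ioc (0 : ℝ) 1)
    (Wm : Z) (hWm : T ((1 - lam / (1 + lam)) • Wm) = Wm) :
    ‖hs.foldr (fun hi x => lam • ((1 - hi) • (((1 - lam * hi) / lam) • x)
        + hi • T (((1 - lam * hi) / lam) • x))) z
      - (lam / (1 + lam)) • Wm‖
      ≤ 2 * ‖T 0‖ * hs.foldr max 0
        + (‖T 0‖ + ‖z‖) * (hs.map (fun hi => 1 - lam * hi)).prod := by
  obtain ⟨hl0, hl1⟩ := hlam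
  have h1l : (0:ℝ) < 1 + lam := by linarith
  have hlne : lam ≠ 0 := ne_of_gt hl0
  have h1lne : (1:ℝ) + lam ≠ 0 := ne_of_gt h1l
  have hT0 : (0:ℝ) ≤ ‖T 0‖ := norm_nonneg _
  -- `w` is the discounted fixed point
  set w : Z := (lam / (1 + lam)) • Wm with hw
  have hμ0 : 0 < lam / (1 + lam) := by positivity
  have hμ1 : lam / (1 + lam) ≤ 1 / 2 := by
    rw [div_le_div_iff₀ h1l (by norm_num)]; linarith
  -- key facts about w
  have hkey : (1/lam) • w = (1 - lam / (1 + lam)) • Wm := by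
    rw [hw, smul_smul]
    congr 1
    field_simp
    ring
  have hwfix : T ((1/lam) • w) = Wm := by rw [hkey]; exact hWm
  have hWm' : Wm = ((1 + lam) / lam) • w := by
    rw [hw, smul_smul, show (1 + lam) / lam * (lam / (1 + lam)) = 1 by
      field_simp, one_smul]
  have hwnorm : ‖w‖ ≤ ‖T 0‖ := by
    have h1 : ‖T ((1 - lam / (1 + lam)) • Wm) - T 0‖
        ≤ ‖(1 - lam / (1 + lam)) • Wm - 0‖ := hT _ _
    have h2 : ‖(1 - lam / (1 + lam)) • Wm - 0‖
        = (1 - lam / (1 + lam)) * ‖Wm‖ := by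
      rw [sub_zero, norm_smul, Real.norm_eq_abs, abs_of_nonneg (by linarith)]
    have h3 : ‖Wm‖ ≤ ‖T ((1 - lam / (1 + lam)) • Wm) - T 0‖ + ‖T 0‖ := by
      calc ‖Wm‖ = ‖(T ((1 - lam / (1 + lam)) • Wm) - T 0) + T 0‖ := by
            rw [sub_add_cancel, hWm]
        _ ≤ _ := norm_add_le _ _
    have h4 : (lam / (1 + lam)) * ‖Wm‖ ≤ ‖T 0‖ := by nlinarith [norm_nonneg Wm]
    rw [hw, norm_smul, Real.norm_eq_abs, abs_of_pos hμ0]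
    exact h4
  clear_value w
  clear hkey hw
  -- the one-step estimate
  have step : ∀ h : ℝ, h ∈ Set.Ioc (0:ℝ) 1 → ∀ x : Z,
      ‖lam • ((1 - h) • (((1 - lam * h) / lam) • x)
        + h • T (((1 - lam * h) / lam) • x)) - w‖
      ≤ (1 - lam * h) * ‖x - w‖ + 2 * lam * h^2 * ‖T 0‖ := by
    intro h hhm x
    obtain ⟨hh0, hh1⟩ := hhm
    have hlh : lam * h ≤ 1 := by nlinarith
    have hd0 : (0:ℝ) ≤ (1 - lam * h) / lam := div_nonneg (by linarith) hl0.le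
    set u : Z := T (((1 - lam * h) / lam) • x) with hu
    set v : Z := T (((1 - lam * h) / lam) • w) with hv
    -- algebraic identity
    have hid : lam • ((1 - h) • (((1 - lam * h) / lam) • x) + h • u) - w
        = ((1 - h) * (1 - lam * h)) • (x - w) + (lam * h) • (u - v)
          + (lam * h) • (v - Wm) + (lam * h^2) • w := by
      rw [hWm']
      match_scalars <;> field_simp <;> ring
    rw [hid]
    have n1 : ‖((1 - h) * (1 - lam * h)) • (x - w)‖
        = (1 - h) * (1 - lam * h) * ‖x - w‖ := by
      rw [norm_smul, Real.norm_eq_abs, abs_of_nonneg (by nlinarith)]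
    have n2 : ‖(lam * h) • (u - v)‖ ≤ h * (1 - lam * h) * ‖x - w‖ := by
      rw [norm_smul, Real.norm_eq_abs, abs_of_nonneg (by positivity)]
      have h1 : ‖u - v‖ ≤ ((1 - lam * h) / lam) * ‖x - w‖ := by
        have h2 := hT (((1 - lam * h) / lam) • x) (((1 - lam * h) / lam) • w)
        rwa [← smul_sub, norm_smul, Real.norm_eq_abs, abs_of_nonneg hd0] at h2
      calc lam * h * ‖u - v‖
          ≤ lam * h * (((1 - lam * h) / lam) * ‖x - w‖) :=
            mul_le_mul_of_nonneg_left h1 (by positivity)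
        _ = h * (1 - lam * h) * ‖x - w‖ := by field_simp
    have n3 : ‖(lam * h) • (v - Wm)‖ ≤ lam * h^2 * ‖w‖ := by
      rw [norm_smul, Real.norm_eq_abs, abs_of_nonneg (by positivity)]
      have h1 : ‖v - Wm‖ ≤ h * ‖w‖ := by
        have h2 := hT (((1 - lam * h) / lam) • w) ((1/lam) • w)
        rw [hwfix] at h2
        rw [← sub_smul, norm_smul, Real.norm_eq_abs,
          show (1 - lam * h) / lam - 1/lam = -h by field_simp; ring,
          abs_neg, abs_of_pos hh0] at h2
        exact h2
      calc lam * h * ‖v - Wm‖ ≤ lam * h * (h * ‖w‖) :=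
            mul_le_mul_of_nonneg_left h1 (by positivity)
        _ = lam * h^2 * ‖w‖ := by ring
    have n4 : ‖(lam * h^2) • w‖ ≤ lam * h^2 * ‖T 0‖ := by
      rw [norm_smul, Real.norm_eq_abs, abs_of_nonneg (by positivity)]
      exact mul_le_mul_of_nonneg_left hwnorm (by positivity)
    calc ‖((1 - h) * (1 - lam * h)) • (x - w) + (lam * h) • (u - v)
          + (lam * h) • (v - Wm) + (lam * h^2) • w‖
        ≤ ‖((1 - h) * (1 - lam * h)) • (x - w) + (lam * h) • (u - v)
          + (lam * h) • (v - Wm)‖ + ‖(lam * h^2) • w‖ := norm_add_le _ _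
      _ ≤ ‖((1 - h) * (1 - lam * h)) • (x - w) + (lam * h) • (u - v)‖
          + ‖(lam * h) • (v - Wm)‖ + ‖(lam * h^2) • w‖ := by
            gcongr; exact norm_add_le _ _
      _ ≤ ‖((1 - h) * (1 - lam * h)) • (x - w)‖ + ‖(lam * h) • (u - v)‖
          + ‖(lam * h) • (v - Wm)‖ + ‖(lam * h^2) • w‖ := by
            gcongr; exact norm_add_le _ _
      _ ≤ (1 - h) * (1 - lam * h) * ‖x - w‖ + h * (1 - lam * h) * ‖x - w‖
          + lam * h^2 * ‖w‖ + lam * h^2 * ‖T 0‖ := by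
            rw [n1]; gcongr
      _ ≤ (1 - lam * h) * ‖x - w‖ + 2 * lam * h^2 * ‖T 0‖ := by
            have := mul_le_mul_of_nonneg_left hwnorm
              (show (0:ℝ) ≤ lam * h^2 by positivity)
            nlinarith [norm_nonneg (x - w)]
  -- nonnegativity of foldr max 0
  have hfoldmax : ∀ l : List ℝ, (0:ℝ) ≤ l.foldr max 0 := by
    intro l
    induction l with
    | nil => simp
    | cons a s ihs => exact le_max_of_le_right ihs
  -- the induction
  have main : ∀ l : List ℝ, (∀ hi ∈ l, hi ∈ Set.Ioc (0:ℝ) 1) →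
      ‖l.foldr (fun hi x => lam • ((1 - hi) • (((1 - lam * hi) / lam) • x)
          + hi • T (((1 - lam * hi) / lam) • x))) z - w‖
        ≤ 2 * ‖T 0‖ * l.foldr max 0
          + (l.map (fun hi => 1 - lam * hi)).prod * ‖z - w‖ := by
    intro l
    induction l with
    | nil => intro _; simp
    | cons h t ih =>
      intro hmem'
      obtain ⟨hh0, hh1⟩ := hmem' h List.mem_cons_self
      have iht := ih (fun hi hmemt => hmem' hi (List.mem_cons_of_mem h hmemt))
      have hM0 : (0:ℝ) ≤ t.foldr max 0 := hfoldmax t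
      have hP0 : (0:ℝ) ≤ (t.map (fun hi => 1 - lam * hi)).prod := by
        apply List.prod_nonneg
        intro p hp
        obtain ⟨q, hq, rfl⟩ := List.mem_map.mp hp
        obtain ⟨hq0, hq1⟩ := hmem' q (List.mem_cons_of_mem h hq)
        nlinarith
      simp only [List.foldr_cons, List.map_cons, List.prod_cons]
      generalize hy : (t.foldr (fun hi x =>
          lam • ((1 - hi) • (((1 - lam * hi) / lam) • x)
            + hi • T (((1 - lam * hi) / lam) • x))) z) = y at iht ⊢
      generalize hMg : t.foldr max 0 = M at iht hM0 ⊢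
      generalize hPg : (t.map (fun hi => 1 - lam * hi)).prod = P at iht hP0 ⊢
      have hstep := step h ⟨hh0, hh1⟩ y
      refine hstep.trans ?_
      have hC0 : (0:ℝ) ≤ ‖y - w‖ := norm_nonneg _
      generalize ‖y - w‖ = C at iht hC0
      have hlh : lam * h ≤ 1 := by nlinarith
      have hK1 : h ≤ max h M := le_max_left _ _
      have hK2 : M ≤ max h M := le_max_right _ _
      have e3 : (1 - lam * h) * M + lam * h^2 ≤ max h M := by
        nlinarith [mul_nonneg (show (0:ℝ) ≤ 1 - lam * h by linarith)
            (show (0:ℝ) ≤ max h M - M by linarith),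
          mul_nonneg (mul_nonneg hl0.le hh0.le)
            (show (0:ℝ) ≤ max h M - h by linarith)]
      nlinarith [mul_le_mul_of_nonneg_left iht
          (show (0:ℝ) ≤ 1 - lam * h by linarith),
        mul_le_mul_of_nonneg_left e3 hT0, norm_nonneg (z - w),
        mul_nonneg hP0 (norm_nonneg (z - w))]
  have hfinal := main hs hmem
  have hzw : ‖z - w‖ ≤ ‖T 0‖ + ‖z‖ := by
    calc ‖z - w‖ ≤ ‖z‖ + ‖w‖ := norm_sub_le _ _
      _ ≤ ‖T 0‖ + ‖z‖ := by linarith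
  have hPnn : 0 ≤ (hs.map (fun hi => 1 - lam * hi)).prod := by
    apply List.prod_nonneg
    intro p hp
    obtain ⟨q, hq, rfl⟩ := List.mem_map.mp hp
    obtain ⟨hq0, hq1⟩ := hmem q hq
    nlinarith
  calc ‖hs.foldr (fun hi x => lam • ((1 - hi) • (((1 - lam * hi) / lam) • x)
        + hi • T (((1 - lam * hi) / lam) • x))) z - w‖
      ≤ 2 * ‖T 0‖ * hs.foldr max 0
        + (hs.map (fun hi => 1 - lam * hi)).prod * ‖z - w‖ := hfinal
    _ ≤ 2 * ‖T 0‖ * hs.foldr max 0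
        + (‖T 0‖ + ‖z‖) * (hs.map (fun hi => 1 - lam * hi)).prod := by
        rw [mul_comm ((hs.map (fun hi => 1 - lam * hi)).prod)]
        gcongr
end

section
/- For all λ, h ∈ (0,1], ‖D_λ^h(w_{λ/(1+λ)}) − w_{λ/(1+λ)}‖ ≤ 2·‖T(0)‖·λ·h². -/
/-- For `λ, h ∈ (0,1]`, with `w = w_{λ/(1+λ)}` the normalized fixed point of
`x ↦ T((1 - λ/(1+λ)) x)` and `D_λ^h(x) = λ • T_h(((1-λh)/λ) • x)`,
one has `‖D_λ^h(w) - w‖ ≤ 2 ‖T 0‖ λ h²`. -/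
theorem discounted_operator_near_fixed_point
    {Z : Type*} [NormedAddCommGroup Z] [NormedSpace ℝ Z] [CompleteSpace Z]
    (T : Z → Z) (hT : ∀ x y : Z, ‖T x - T y‖ ≤ ‖x - y‖)
    (lam h : ℝ) (hlam : lam ∈ Set.Ioc (0 : ℝ) 1) (hh : h ∈ Set.Ioc (0 : ℝ) 1)
    (Wm : Z) (hWm : T ((1 - lam / (1 + lam)) • Wm) = Wm) :
    ‖lam • ((1 - h) • (((1 - lam * h) / lam) • ((lam / (1 + lam)) • Wm))
        + h • T (((1 - lam * h) / lam) • ((lam / (1 + lam)) • Wm)))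
      - (lam / (1 + lam)) • Wm‖ ≤ 2 * ‖T 0‖ * lam * h ^ 2 := by
  obtain ⟨hl0, hl1⟩ := hlam
  obtain ⟨hh0, hh1⟩ := hh
  have h1l : (0:ℝ) < 1 + lam := by linarith
  have hlne : lam ≠ 0 := ne_of_gt hl0
  have h1lne : (1:ℝ) + lam ≠ 0 := ne_of_gt h1l
  set w : Z := (lam / (1 + lam)) • Wm with hw
  set u : Z := ((1 - lam * h) / lam) • w with hu
  set v : Z := (1 - lam / (1 + lam)) • Wm with hv
  -- bound ‖w‖ ≤ ‖T 0‖
  have hnormw : ‖w‖ ≤ ‖T 0‖ := by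
    have h1 : ‖Wm‖ ≤ ‖v‖ + ‖T 0‖ := by
      have e1 := norm_sub_norm_le (T v) (T 0)
      have e2 := hT v 0
      rw [sub_zero] at e2
      rw [hWm] at e1 e2
      linarith
    have hvn : ‖v‖ = (1 / (1 + lam)) * ‖Wm‖ := by
      rw [hv, norm_smul, Real.norm_eq_abs]
      have : 1 - lam / (1 + lam) = 1 / (1 + lam) := by field_simp; ring
      rw [this, abs_of_pos (by positivity)]
    have hwn : ‖w‖ = (lam / (1 + lam)) * ‖Wm‖ := by
      rw [hw, norm_smul, Real.norm_eq_abs, abs_of_pos (by positivity)]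
    rw [hwn]
    rw [hvn] at h1
    have e : lam / (1 + lam) * ‖Wm‖ = ‖Wm‖ - 1 / (1 + lam) * ‖Wm‖ := by
      field_simp; ring
    rw [e]; linarith
  -- u - v = (-h) • w
  have huv : u - v = (-h) • w := by
    rw [hu, hv, hw]
    match_scalars
    field_simp
    ring
  have hTuv : ‖T u - Wm‖ ≤ h * ‖w‖ := by
    calc ‖T u - Wm‖ = ‖T u - T v‖ := by rw [hWm]
      _ ≤ ‖u - v‖ := hT u v
      _ = ‖(-h) • w‖ := by rw [huv]
      _ = h * ‖w‖ := by
          rw [norm_smul, Real.norm_eq_abs, abs_neg, abs_of_pos hh0]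
  -- key algebraic identity
  have key : lam • ((1 - h) • u + h • T u) - w
      = (lam * h) • (T u - Wm) + (lam * h ^ 2) • w := by
    rw [hu, hw]
    match_scalars
    · field_simp; ring
    · ring
  rw [key]
  calc ‖(lam * h) • (T u - Wm) + (lam * h ^ 2) • w‖
      ≤ ‖(lam * h) • (T u - Wm)‖ + ‖(lam * h ^ 2) • w‖ := norm_add_le _ _
    _ = (lam * h) * ‖T u - Wm‖ + (lam * h ^ 2) * ‖w‖ := by
        rw [norm_smul, norm_smul, Real.norm_eq_abs, Real.norm_eq_abs,
          abs_of_pos (by positivity), abs_of_pos (by positivity)]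
    _ ≤ (lam * h ^ 2) * ‖T 0‖ + (lam * h ^ 2) * ‖T 0‖ := by
        have h1 : (lam * h) * ‖T u - Wm‖ ≤ (lam * h) * (h * ‖w‖) :=
          mul_le_mul_of_nonneg_left hTuv (by positivity)
        have h1' : (lam * h) * (h * ‖w‖) = (lam * h ^ 2) * ‖w‖ := by ring
        have h2 : (lam * h ^ 2) * ‖w‖ ≤ (lam * h ^ 2) * ‖T 0‖ :=
          mul_le_mul_of_nonneg_left hnormw (by positivity)
        linarith
    _ = 2 * ‖T 0‖ * lam * h ^ 2 := by ring
end

section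
/- Let λ, h ∈ (0,1], let z ∈ Z, and let (h_i)_{i≥1} be a sequence in (0,1] with h_i ≤ h for all i and Σ_{i=1}^∞ h_i = +∞. Then limsup_{n→∞} ‖(D_λ^{h_1} ∘ D_λ^{h_2} ∘ ⋯ ∘ D_λ^{h_n})(z) − w_{λ/(1+λ)}‖ ≤ 2·‖T(0)‖·h; in particular every limit point L of this sequence of compositions satisfies ‖L − w_{λ/(1+λ)}‖ ≤ 2·‖T(0)‖·h. -/
open Filter

set_option maxHeartbeats 1000000

/-- For a sequence of step sizes `h_i ∈ (0,1]` with `h_i ≤ h` and `Σ h_i = ∞`,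
the compositions `c n = D_λ^{h_1} ∘ ⋯ ∘ D_λ^{h_n}(z)` (with
`D_λ^h(x) = λ • T_h(((1-λh)/λ) • x)`, `T_h = (1-h) Id + h T`) satisfy
`limsup_n ‖c n - w_{λ/(1+λ)}‖ ≤ 2 ‖T 0‖ h`; in particular every cluster point
`L` of `(c n)` satisfies `‖L - w_{λ/(1+λ)}‖ ≤ 2 ‖T 0‖ h`. -/
theorem composed_discounted_operators_limsup
    {Z : Type*} [NormedAddCommGroup Z] [NormedSpace ℝ Z] [CompleteSpace Z]
    (T : Z → Z) (hT : ∀ x y : Z, ‖T x - T y‖ ≤ ‖x - y‖)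
    (lam h : ℝ) (hlam : lam ∈ Set.Ioc (0 : ℝ) 1) (hh : h ∈ Set.Ioc (0 : ℝ) 1)
    (z : Z) (hs : ℕ → ℝ)
    (hmem : ∀ i : ℕ, 1 ≤ i → hs i ∈ Set.Ioc (0 : ℝ) 1)
    (hle : ∀ i : ℕ, 1 ≤ i → hs i ≤ h)
    (hdiv : Filter.Tendsto (fun n : ℕ => ∑ i ∈ Finset.range n, hs (i + 1))
      Filter.atTop Filter.atTop)
    (Wm : Z) (hWm : T ((1 - lam / (1 + lam)) • Wm) = Wm) :
    (Filter.limsup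
        (fun n : ℕ =>
          ‖((List.range n).map (fun i => hs (i + 1))).foldr
              (fun hi x => lam • ((1 - hi) • (((1 - lam * hi) / lam) • x)
                + hi • T (((1 - lam * hi) / lam) • x))) z
            - (lam / (1 + lam)) • Wm‖)
        Filter.atTop ≤ 2 * ‖T 0‖ * h) ∧
    (∀ L : Z, MapClusterPt L Filter.atTop
        (fun n : ℕ =>
          ((List.range n).map (fun i => hs (i + 1))).foldr
            (fun hi x => lam • ((1 - hi) • (((1 - lam * hi) / lam) • x)
              + hi • T (((1 - lam * hi) / lam) • x))) z) →
      ‖L - (lam / (1 + lam)) • Wm‖ ≤ 2 * ‖T 0‖ * h) := by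
  obtain ⟨hl0, hl1⟩ := hlam
  obtain ⟨hh0, hh1⟩ := hh
  have h1l : (0:ℝ) < 1 + lam := by linarith
  have hl0' : lam ≠ 0 := ne_of_gt hl0
  have h1l' : (1:ℝ) + lam ≠ 0 := ne_of_gt h1l
  set D : ℝ → Z → Z := fun hi x => lam • ((1 - hi) • (((1 - lam * hi) / lam) • x)
      + hi • T (((1 - lam * hi) / lam) • x)) with hD
  set w : Z := (lam / (1 + lam)) • Wm with hwdef
  set C : ℝ := 2 * ‖T 0‖ * h with hCdef
  have hT0 : (0:ℝ) ≤ ‖T 0‖ := norm_nonneg _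
  have hC0 : 0 ≤ C := by positivity
  -- bound on ‖Wm‖
  have hWmb : lam / (1 + lam) * ‖Wm‖ ≤ ‖T 0‖ := by
    have h1 : ‖T ((1 - lam / (1 + lam)) • Wm) - T 0‖ ≤ ‖(1 - lam / (1 + lam)) • Wm - 0‖ := hT _ _
    rw [hWm, sub_zero, norm_smul, Real.norm_eq_abs] at h1
    have hmle : lam / (1 + lam) ≤ 1 := by rw [div_le_one h1l]; linarith
    rw [abs_of_nonneg (by linarith : (0:ℝ) ≤ 1 - lam / (1 + lam))] at h1
    have h2 : ‖Wm‖ ≤ ‖Wm - T 0‖ + ‖T 0‖ := by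
      have := norm_add_le (Wm - T 0) (T 0); simpa using this
    linarith
  -- Lipschitz bound for D
  have key1 : ∀ hi : ℝ, 0 < hi → hi ≤ 1 → ∀ x y : Z,
      ‖D hi x - D hi y‖ ≤ (1 - lam * hi) * ‖x - y‖ := by
    intro hi h0 h1 x y
    have hlh1 : lam * hi ≤ 1 := by nlinarith
    have hs0 : 0 ≤ (1 - lam * hi) / lam := div_nonneg (by linarith) hl0.le
    have hid : D hi x - D hi y
        = (lam * (1 - hi)) • (((1 - lam * hi) / lam) • (x - y))
          + (lam * hi) • (T (((1 - lam * hi) / lam) • x) - T (((1 - lam * hi) / lam) • y)) := by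
      simp only [hD]
      module
    have hTb : ‖T (((1 - lam * hi) / lam) • x) - T (((1 - lam * hi) / lam) • y)‖
        ≤ (1 - lam * hi) / lam * ‖x - y‖ := by
      refine (hT _ _).trans ?_
      rw [← smul_sub, norm_smul, Real.norm_eq_abs, abs_of_nonneg hs0]
    have hls : lam * ((1 - lam * hi) / lam) = 1 - lam * hi := by field_simp
    calc ‖D hi x - D hi y‖
        ≤ ‖(lam * (1 - hi)) • (((1 - lam * hi) / lam) • (x - y))‖
          + ‖(lam * hi) • (T (((1 - lam * hi) / lam) • x) - T (((1 - lam * hi) / lam) • y))‖ := by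
          rw [hid]; exact norm_add_le _ _
      _ ≤ (lam * (1 - hi)) * ((1 - lam * hi) / lam * ‖x - y‖)
          + (lam * hi) * ((1 - lam * hi) / lam * ‖x - y‖) := by
          rw [norm_smul, norm_smul, norm_smul, Real.norm_eq_abs, Real.norm_eq_abs,
            Real.norm_eq_abs, abs_of_nonneg (by nlinarith : (0:ℝ) ≤ lam * (1 - hi)),
            abs_of_nonneg (by positivity : (0:ℝ) ≤ lam * hi), abs_of_nonneg hs0]
          have := mul_le_mul_of_nonneg_left hTb (by positivity : (0:ℝ) ≤ lam * hi)
          linarith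
      _ = (1 - lam * hi) * ‖x - y‖ := by field_simp; ring
  -- displacement bound at w
  have key2 : ∀ hi : ℝ, 0 < hi → hi ≤ 1 → hi ≤ h → ‖D hi w - w‖ ≤ C * (lam * hi) := by
    intro hi h0 h1 hih
    have hinner : ((1 - lam * hi) / lam) • w = ((1 - lam * hi) / (1 + lam)) • Wm := by
      rw [hwdef, smul_smul]; congr 1; field_simp
    have hid : D hi w - w = (lam * hi) • (T (((1 - lam * hi) / (1 + lam)) • Wm) - Wm)
        + (lam * hi * hi * (lam / (1 + lam))) • Wm := by
      simp only [hD, hinner]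
      rw [hwdef]
      match_scalars <;> field_simp <;> ring
    have hTb : ‖T (((1 - lam * hi) / (1 + lam)) • Wm) - Wm‖
        ≤ hi * (lam / (1 + lam)) * ‖Wm‖ := by
      calc ‖T (((1 - lam * hi) / (1 + lam)) • Wm) - Wm‖
          = ‖T (((1 - lam * hi) / (1 + lam)) • Wm) - T ((1 - lam / (1 + lam)) • Wm)‖ := by
            rw [hWm]
        _ ≤ ‖((1 - lam * hi) / (1 + lam)) • Wm - (1 - lam / (1 + lam)) • Wm‖ := hT _ _
        _ = hi * (lam / (1 + lam)) * ‖Wm‖ := by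
            rw [← sub_smul, norm_smul, Real.norm_eq_abs]
            have hco : (1 - lam * hi) / (1 + lam) - (1 - lam / (1 + lam))
                = -(hi * (lam / (1 + lam))) := by field_simp; ring
            rw [hco, abs_neg, abs_of_nonneg (by positivity)]
    have hmul : hi * (lam / (1 + lam) * ‖Wm‖) ≤ h * ‖T 0‖ :=
      mul_le_mul hih hWmb (by positivity) (by linarith)
    calc ‖D hi w - w‖
        ≤ ‖(lam * hi) • (T (((1 - lam * hi) / (1 + lam)) • Wm) - Wm)‖
          + ‖(lam * hi * hi * (lam / (1 + lam))) • Wm‖ := by rw [hid]; exact norm_add_le _ _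
      _ ≤ (lam * hi) * (hi * (lam / (1 + lam)) * ‖Wm‖)
          + (lam * hi * hi * (lam / (1 + lam))) * ‖Wm‖ := by
          rw [norm_smul, norm_smul, Real.norm_eq_abs, Real.norm_eq_abs,
            abs_of_nonneg (by positivity : (0:ℝ) ≤ lam * hi),
            abs_of_nonneg (by positivity : (0:ℝ) ≤ lam * hi * hi * (lam / (1 + lam)))]
          have := mul_le_mul_of_nonneg_left hTb (by positivity : (0:ℝ) ≤ lam * hi)
          linarith
      _ ≤ C * (lam * hi) := by
          rw [hCdef]
          nlinarith [mul_le_mul_of_nonneg_left hmul (by positivity : (0:ℝ) ≤ lam * hi)]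
  -- product of contraction factors
  set P : ℕ → ℝ := fun n => ∏ i ∈ Finset.range n, (1 - lam * hs (i + 1)) with hPdef
  have hPfac : ∀ i : ℕ, 0 ≤ 1 - lam * hs (i + 1) := by
    intro i
    have hm := hmem (i + 1) (by omega)
    nlinarith [hm.1, hm.2]
  have hP0 : ∀ n, 0 ≤ P n := fun n => Finset.prod_nonneg fun i _ => hPfac i
  have hPsucc : ∀ n, P (n + 1) = P n * (1 - lam * hs (n + 1)) := fun n =>
    Finset.prod_range_succ _ n
  have hPle : ∀ n, P n ≤ Real.exp (-(lam * ∑ i ∈ Finset.range n, hs (i + 1))) := by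
    intro n
    calc P n ≤ ∏ i ∈ Finset.range n, Real.exp (-(lam * hs (i + 1))) :=
          Finset.prod_le_prod (fun i _ => hPfac i) (fun i _ => by
            have := Real.add_one_le_exp (-(lam * hs (i + 1))); linarith)
      _ = Real.exp (∑ i ∈ Finset.range n, -(lam * hs (i + 1))) := (Real.exp_sum _ _).symm
      _ = Real.exp (-(lam * ∑ i ∈ Finset.range n, hs (i + 1))) := by
          congr 1
          rw [Finset.mul_sum, ← Finset.sum_neg_distrib]
  have hPtend : Tendsto P atTop (nhds 0) := by
    have hexp : Tendsto (fun n : ℕ => Real.exp (-(lam * ∑ i ∈ Finset.range n, hs (i + 1))))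
        atTop (nhds 0) :=
      Real.tendsto_exp_atBot.comp (tendsto_neg_atTop_atBot.comp (hdiv.const_mul_atTop hl0))
    exact squeeze_zero hP0 hPle hexp
  -- main induction
  have main : ∀ (n : ℕ) (x : Z),
      ‖((List.range n).map (fun i => hs (i + 1))).foldr D x - w‖
        ≤ P n * ‖x - w‖ + C * (1 - P n) := by
    intro n
    induction n with
    | zero => intro x; simp [hPdef]
    | succ n ih =>
      intro x
      rw [List.range_succ, List.map_append, List.foldr_append]
      simp only [List.map_cons, List.map_nil, List.foldr_cons, List.foldr_nil]
      have hm := hmem (n + 1) (by omega)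
      have hd : ‖D (hs (n + 1)) x - w‖
          ≤ (1 - lam * hs (n + 1)) * ‖x - w‖ + C * (lam * hs (n + 1)) := by
        calc ‖D (hs (n + 1)) x - w‖
            ≤ ‖D (hs (n + 1)) x - D (hs (n + 1)) w‖ + ‖D (hs (n + 1)) w - w‖ :=
              norm_sub_le_norm_sub_add_norm_sub _ _ _
          _ ≤ (1 - lam * hs (n + 1)) * ‖x - w‖ + C * (lam * hs (n + 1)) :=
              add_le_add (key1 _ hm.1 hm.2 x w) (key2 _ hm.1 hm.2 (hle (n + 1) (by omega)))
      calc ‖((List.range n).map (fun i => hs (i + 1))).foldr D (D (hs (n + 1)) x) - w‖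
          ≤ P n * ‖D (hs (n + 1)) x - w‖ + C * (1 - P n) := ih _
        _ ≤ P n * ((1 - lam * hs (n + 1)) * ‖x - w‖ + C * (lam * hs (n + 1))) + C * (1 - P n) :=
            add_le_add (mul_le_mul_of_nonneg_left hd (hP0 n)) le_rfl
        _ = P (n + 1) * ‖x - w‖ + C * (1 - P (n + 1)) := by rw [hPsucc]; ring
  -- eventual bound
  have hev : ∀ ε : ℝ, 0 < ε → ∀ᶠ n in atTop,
      ‖((List.range n).map (fun i => hs (i + 1))).foldr D z - w‖ ≤ C + ε := by
    intro ε hε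
    have ht : Tendsto (fun n => P n * ‖z - w‖) atTop (nhds 0) := by
      have := hPtend.mul_const ‖z - w‖
      simpa using this
    filter_upwards [ht.eventually_lt_const hε] with n hn
    have h1 := main n z
    have h2 : C * (1 - P n) ≤ C := by nlinarith [hP0 n]
    linarith
  constructor
  · refine le_of_forall_pos_le_add fun ε hε => ?_
    refine Filter.limsup_le_of_le (isCoboundedUnder_le_of_le atTop fun n => norm_nonneg _) ?_
    exact hev ε hε
  · intro L hL
    refine le_of_forall_pos_le_add fun ε hε => ?_
    have h1 := hev (ε / 2) (by positivity)
    have h2 : ∃ᶠ n in atTop,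
        ((List.range n).map (fun i => hs (i + 1))).foldr D z ∈ Metric.ball L (ε / 2) :=
      mapClusterPt_iff_frequently.mp hL _ (Metric.ball_mem_nhds _ (by positivity))
    obtain ⟨n, hn1, hn2⟩ := (h2.and_eventually h1).exists
    rw [Metric.mem_ball, dist_eq_norm] at hn1
    have h3 : ‖L - w‖ ≤ ‖L - ((List.range n).map (fun i => hs (i + 1))).foldr D z‖
        + ‖((List.range n).map (fun i => hs (i + 1))).foldr D z - w‖ :=
      norm_sub_le_norm_sub_add_norm_sub _ _ _
    rw [norm_sub_rev] at hn1
    linarith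
end

section
/- For all λ, h ∈ (0,1], ‖w_λ^h − w_λ‖ ≤ 2·‖T(0)‖·λ. -/
/-- For `λ, h ∈ (0,1]`, `‖w_λ^h - w_λ‖ ≤ 2 ‖T 0‖ λ`, where `W_λ^h` is the fixed
point of `u ↦ T_h((1 - λ h) u)` with `T_h = (1-h) Id + h T`, `w_λ^h = λ • W_λ^h`,
and `W_λ` is the fixed point of `x ↦ T((1 - λ) x)`, `w_λ = λ • W_λ`. -/
theorem discounted_value_asymptotic
    {Z : Type*} [NormedAddCommGroup Z] [NormedSpace ℝ Z] [CompleteSpace Z]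
    (T : Z → Z) (hT : ∀ x y : Z, ‖T x - T y‖ ≤ ‖x - y‖)
    (lam h : ℝ) (hlam : lam ∈ Set.Ioc (0 : ℝ) 1) (hh : h ∈ Set.Ioc (0 : ℝ) 1)
    (Wlh : Z)
    (hWlh : (1 - h) • ((1 - lam * h) • Wlh) + h • T ((1 - lam * h) • Wlh) = Wlh)
    (Wl : Z) (hWl : T ((1 - lam) • Wl) = Wl) :
    ‖lam • Wlh - lam • Wl‖ ≤ 2 * ‖T 0‖ * lam := by
  obtain ⟨hl0, hl1⟩ := hlam
  obtain ⟨hh0, hh1⟩ := hh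
  have hN0 : (0:ℝ) ≤ ‖T 0‖ := norm_nonneg _
  obtain ⟨α, hα⟩ : ∃ a : ℝ, a = 1 + lam * (1 - h) := ⟨_, rfl⟩
  have hα1 : 1 ≤ α := by nlinarith
  have hα0 : (0:ℝ) ≤ α := by linarith
  have hlh : lam * h ≤ 1 := by nlinarith
  -- bound on Wl
  have hB : lam * ‖Wl‖ ≤ ‖T 0‖ := by
    have h1 : ‖Wl‖ ≤ ‖(1 - lam) • Wl‖ + ‖T 0‖ := by
      calc ‖Wl‖ = ‖(T ((1 - lam) • Wl) - T 0) + T 0‖ := by rw [hWl]; congr 1; abel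
        _ ≤ ‖T ((1 - lam) • Wl) - T 0‖ + ‖T 0‖ := norm_add_le _ _
        _ ≤ ‖(1 - lam) • Wl - 0‖ + ‖T 0‖ := by gcongr; exact hT _ _
        _ = ‖(1 - lam) • Wl‖ + ‖T 0‖ := by rw [sub_zero]
    have h2 : ‖(1 - lam) • Wl‖ = (1 - lam) * ‖Wl‖ := by
      rw [norm_smul, Real.norm_of_nonneg (by linarith)]
    nlinarith [norm_nonneg Wl]
  -- key fixed point identity for Wlh
  set t := T ((1 - lam * h) • Wlh) with ht
  have key : t = α • Wlh := by
    have h3 : h • t = h • (α • Wlh) := by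
      have h4 : h • t = Wlh - (1 - h) • ((1 - lam * h) • Wlh) :=
        eq_sub_iff_add_eq.mpr (by rw [add_comm]; exact hWlh)
      rw [h4, hα]; module
    exact smul_right_injective Z (ne_of_gt hh0) h3
  -- estimate on E = ‖α • Wlh - Wl‖
  have hE : ‖α • Wlh - Wl‖ ≤ ‖(1 - lam * h) • Wlh - (1 - lam) • Wl‖ := by
    calc ‖α • Wlh - Wl‖ = ‖t - T ((1 - lam) • Wl)‖ := by rw [key, hWl]
      _ ≤ _ := hT _ _
  have hid : α • ((1 - lam * h) • Wlh - (1 - lam) • Wl)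
      = (1 - lam * h) • (α • Wlh - Wl) + (lam ^ 2 * (1 - h)) • Wl := by
    rw [hα]; module
  have hscale : α * ‖(1 - lam * h) • Wlh - (1 - lam) • Wl‖
      ≤ (1 - lam * h) * ‖α • Wlh - Wl‖ + (lam ^ 2 * (1 - h)) * ‖Wl‖ := by
    calc α * ‖(1 - lam * h) • Wlh - (1 - lam) • Wl‖
        = ‖α • ((1 - lam * h) • Wlh - (1 - lam) • Wl)‖ := by
          rw [norm_smul, Real.norm_of_nonneg hα0]
      _ = ‖(1 - lam * h) • (α • Wlh - Wl) + (lam ^ 2 * (1 - h)) • Wl‖ := by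
          rw [hid]
      _ ≤ ‖(1 - lam * h) • (α • Wlh - Wl)‖ + ‖(lam ^ 2 * (1 - h)) • Wl‖ :=
          norm_add_le _ _
      _ = (1 - lam * h) * ‖α • Wlh - Wl‖ + (lam ^ 2 * (1 - h)) * ‖Wl‖ := by
          rw [norm_smul, norm_smul, Real.norm_of_nonneg (by linarith),
            Real.norm_of_nonneg (by nlinarith)]
  have hE2 : ‖α • Wlh - Wl‖ ≤ lam * (1 - h) * ‖Wl‖ := by
    have hmul : α * ‖α • Wlh - Wl‖
        ≤ α * ‖(1 - lam * h) • Wlh - (1 - lam) • Wl‖ :=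
      mul_le_mul_of_nonneg_left hE hα0
    nlinarith [norm_nonneg (α • Wlh - Wl)]
  -- final estimate
  have hid2 : α • (Wlh - Wl) = (α • Wlh - Wl) - (lam * (1 - h)) • Wl := by
    rw [hα]; module
  have hfin : α * ‖Wlh - Wl‖ ≤ 2 * ‖T 0‖ := by
    have hs : ‖(lam * (1 - h)) • Wl‖ = lam * (1 - h) * ‖Wl‖ := by
      rw [norm_smul, Real.norm_of_nonneg (by nlinarith)]
    have h5 : α * ‖Wlh - Wl‖ ≤ ‖α • Wlh - Wl‖ + ‖(lam * (1 - h)) • Wl‖ := by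
      rw [← norm_smul_of_nonneg hα0, hid2]; exact norm_sub_le _ _
    rw [hs] at h5
    nlinarith [norm_nonneg Wl]
  have hdiff : ‖Wlh - Wl‖ ≤ 2 * ‖T 0‖ := by
    nlinarith [norm_nonneg (Wlh - Wl)]
  calc ‖lam • Wlh - lam • Wl‖ = lam * ‖Wlh - Wl‖ := by
        rw [← smul_sub, norm_smul, Real.norm_of_nonneg (le_of_lt hl0)]
    _ ≤ 2 * ‖T 0‖ * lam := by nlinarith
end

section
/- Assume T satisfies assumption (H) with functions k and ℓ. Then for all λ, h ∈ (0,1], ‖D_λ^h(w_λ) − w_λ‖ ≤ 2·h·ℓ(‖T(0)‖)·k(λ²). -/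
set_option maxHeartbeats 1000000


/-- Under assumption (H) — there are nondecreasing `k : (0,1] → ℝ⁺` and
`ℓ : [0,∞) → ℝ⁺` with `k(λ) = o(√λ)` at `0` and
`‖D_λ^1 x - D_μ^1 x‖ ≤ k(|λ-μ|) ℓ(‖x‖)` where `D_λ^1 x = λ • T(((1-λ)/λ) • x)` —
one has `‖D_λ^h(w_λ) - w_λ‖ ≤ 2 h ℓ(‖T 0‖) k(λ²)` for all `λ, h ∈ (0,1]`,
where `w_λ = λ • W_λ` with `W_λ` the fixed point of `x ↦ T((1-λ) x)`, and
`D_λ^h(x) = λ • T_h(((1-λh)/λ) • x)` with `T_h = (1-h) Id + h T`. -/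
theorem assumption_H_single_step
    {Z : Type*} [NormedAddCommGroup Z] [NormedSpace ℝ Z] [CompleteSpace Z]
    (T : Z → Z) (hT : ∀ x y : Z, ‖T x - T y‖ ≤ ‖x - y‖)
    (kf lf : ℝ → ℝ)
    (hk0 : ∀ x ∈ Set.Ioc (0 : ℝ) 1, 0 ≤ kf x)
    (hkmono : MonotoneOn kf (Set.Ioc (0 : ℝ) 1))
    (hl0 : ∀ x : ℝ, 0 ≤ x → 0 ≤ lf x)
    (hlmono : MonotoneOn lf (Set.Ici (0 : ℝ)))
    (hksmall : Filter.Tendsto (fun x : ℝ => kf x / Real.sqrt x)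
      (nhdsWithin 0 (Set.Ioi 0)) (nhds 0))
    (hH : ∀ lam mu : ℝ, lam ∈ Set.Ioc (0 : ℝ) 1 → mu ∈ Set.Ioc (0 : ℝ) 1 →
      ∀ x : Z, ‖lam • T (((1 - lam) / lam) • x) - mu • T (((1 - mu) / mu) • x)‖
        ≤ kf |lam - mu| * lf ‖x‖)
    (lam h : ℝ) (hlam : lam ∈ Set.Ioc (0 : ℝ) 1) (hh : h ∈ Set.Ioc (0 : ℝ) 1)
    (Wl : Z) (hWl : T ((1 - lam) • Wl) = Wl) :
    ‖lam • ((1 - h) • (((1 - lam * h) / lam) • (lam • Wl))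
        + h • T (((1 - lam * h) / lam) • (lam • Wl)))
      - lam • Wl‖ ≤ 2 * h * lf ‖T 0‖ * kf (lam ^ 2) := by
  obtain ⟨hl, hl1⟩ := hlam
  obtain ⟨hh0, hh1⟩ := hh
  have hTn : (0 : ℝ) ≤ ‖T 0‖ := norm_nonneg _
  have hlam2 : lam ^ 2 ∈ Set.Ioc (0 : ℝ) 1 := ⟨by positivity, by nlinarith⟩
  have hkl2 : 0 ≤ kf (lam ^ 2) := hk0 _ hlam2
  have hlfT : 0 ≤ lf ‖T 0‖ := hl0 _ hTn
  have key1 : ((1 - lam * h) / lam) • (lam • Wl) = (1 - lam * h) • Wl := by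
    rw [smul_smul, div_mul_cancel₀ _ (ne_of_gt hl)]
  have key3 : ((1 - lam) / lam) • (lam • Wl) = (1 - lam) • Wl := by
    rw [smul_smul, div_mul_cancel₀ _ (ne_of_gt hl)]
  -- norm bound : ‖lam • Wl‖ ≤ ‖T 0‖
  have hWn : ‖lam • Wl‖ ≤ ‖T 0‖ := by
    have h1 : ‖T ((1 - lam) • Wl) - T 0‖ ≤ ‖(1 - lam) • Wl - 0‖ := hT _ _
    have h2 : ‖(1 - lam) • Wl - 0‖ = (1 - lam) * ‖Wl‖ := by
      rw [sub_zero, norm_smul, Real.norm_of_nonneg (by linarith)]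
    have h3 : ‖Wl‖ ≤ (1 - lam) * ‖Wl‖ + ‖T 0‖ := by
      calc ‖Wl‖ = ‖(T ((1 - lam) • Wl) - T 0) + T 0‖ := by rw [sub_add_cancel, hWl]
        _ ≤ ‖T ((1 - lam) • Wl) - T 0‖ + ‖T 0‖ := norm_add_le _ _
        _ ≤ (1 - lam) * ‖Wl‖ + ‖T 0‖ := by rw [← h2]; linarith
    rw [norm_smul, Real.norm_of_nonneg hl.le]
    nlinarith [norm_nonneg Wl]
  by_cases hcase : h = 1
  · subst hcase
    rw [key1]
    simp only [sub_self, zero_smul, zero_add, one_smul, mul_one]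
    rw [hWl, sub_self, norm_zero]
    nlinarith [mul_nonneg hlfT hkl2]
  · have hh1' : h < 1 := lt_of_le_of_ne hh1 hcase
    obtain ⟨d, hd⟩ : ∃ d : ℝ, d = 1 + lam - lam * h := ⟨_, rfl⟩
    have hd1 : 1 < d := by rw [hd]; nlinarith
    have hd0 : 0 < d := by linarith
    have hd2 : d ≤ 2 := by rw [hd]; nlinarith
    obtain ⟨mu, hmu⟩ : ∃ m : ℝ, m = lam / d := ⟨_, rfl⟩
    have hmu0 : 0 < mu := hmu ▸ div_pos hl hd0
    have hmult : mu < lam := hmu ▸ div_lt_self hl hd1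
    have hmu1 : mu ≤ 1 := le_trans hmult.le hl1
    have hq : mu * d = lam := by rw [hmu, div_mul_cancel₀ _ (ne_of_gt hd0)]
    have key2 : ((1 - mu) / mu) • (lam • Wl) = (1 - lam * h) • Wl := by
      rw [smul_smul]
      congr 1
      field_simp
      nlinarith [hq]
    -- key algebraic identity
    have hid : lam • ((1 - h) • (((1 - lam * h) / lam) • (lam • Wl))
          + h • T (((1 - lam * h) / lam) • (lam • Wl))) - lam • Wl
        = (h * d) • (mu • T ((1 - lam * h) • Wl) - lam • Wl) := by
      rw [key1]
      match_scalars
      · linear_combination (h * lam) * hd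
      · linear_combination (-h) * hq
    have hA : ‖mu • T ((1 - lam * h) • Wl) - lam • Wl‖ ≤ kf |lam - mu| * lf ‖lam • Wl‖ := by
      have hb := hH lam mu ⟨hl, hl1⟩ ⟨hmu0, hmu1⟩ (lam • Wl)
      rw [key2, key3, hWl] at hb
      rw [norm_sub_rev]
      exact hb
    have hdiff : |lam - mu| = lam - mu := abs_of_pos (by linarith)
    have hle2 : lam - mu ≤ lam ^ 2 := by nlinarith [hq]
    have hmem : lam - mu ∈ Set.Ioc (0 : ℝ) 1 := ⟨by linarith, le_trans hle2 hlam2.2⟩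
    have hkmono' : kf (lam - mu) ≤ kf (lam ^ 2) := hkmono hmem hlam2 hle2
    have hlmono' : lf ‖lam • Wl‖ ≤ lf ‖T 0‖ :=
      hlmono (Set.mem_Ici.2 (norm_nonneg _)) (Set.mem_Ici.2 hTn) hWn
    have hk1 : 0 ≤ kf (lam - mu) := hk0 _ hmem
    have hlf1 : 0 ≤ lf ‖lam • Wl‖ := hl0 _ (norm_nonneg _)
    calc ‖lam • ((1 - h) • (((1 - lam * h) / lam) • (lam • Wl))
          + h • T (((1 - lam * h) / lam) • (lam • Wl))) - lam • Wl‖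
        = (h * d) * ‖mu • T ((1 - lam * h) • Wl) - lam • Wl‖ := by
          rw [hid, norm_smul, Real.norm_of_nonneg (mul_nonneg hh0.le hd0.le)]
      _ ≤ (h * d) * (kf |lam - mu| * lf ‖lam • Wl‖) := by
          exact mul_le_mul_of_nonneg_left hA (mul_nonneg hh0.le hd0.le)
      _ ≤ (2 * h) * (kf (lam ^ 2) * lf ‖T 0‖) := by
          rw [hdiff]
          have h2h : h * d ≤ 2 * h := by nlinarith [hd2, hh0]
          exact mul_le_mul h2h (mul_le_mul hkmono' hlmono' hlf1 hkl2)
            (mul_nonneg hk1 hlf1) (by linarith)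
      _ = 2 * h * lf ‖T 0‖ * kf (lam ^ 2) := by ring
end

section
/- Assume T satisfies assumption (H) with functions k and ℓ. Then for every λ ∈ (0,1], every n, and every finite sequence h_1, …, h_n in (0,1]: ‖(D_λ^{h_1} ∘ D_λ^{h_2} ∘ ⋯ ∘ D_λ^{h_n})(w_λ) − w_λ‖ ≤ 2·ℓ(‖T(0)‖)·k(λ²)/λ. Consequently, this bound tends to 0 as λ → 0. -/
set_option maxHeartbeats 1600000

/-- Under assumption (H), any finite composition `D_λ^{h_1} ∘ ⋯ ∘ D_λ^{h_n}`
applied to `w_λ` stays within `2 ℓ(‖T 0‖) k(λ²)/λ` of `w_λ`, and this bound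
tends to `0` as `λ → 0⁺`. Here `w_λ = λ • W_λ` with `W_λ` the fixed point of
`x ↦ T((1-λ) x)`, and `D_λ^h(x) = λ • T_h(((1-λh)/λ) • x)` with
`T_h = (1-h) Id + h T`. -/
theorem assumption_H_composition
    {Z : Type*} [NormedAddCommGroup Z] [NormedSpace ℝ Z] [CompleteSpace Z]
    (T : Z → Z) (hT : ∀ x y : Z, ‖T x - T y‖ ≤ ‖x - y‖)
    (kf lf : ℝ → ℝ)
    (hk0 : ∀ x ∈ Set.Ioc (0 : ℝ) 1, 0 ≤ kf x)
    (hkmono : MonotoneOn kf (Set.Ioc (0 : ℝ) 1))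
    (hl0 : ∀ x : ℝ, 0 ≤ x → 0 ≤ lf x)
    (hlmono : MonotoneOn lf (Set.Ici (0 : ℝ)))
    (hksmall : Filter.Tendsto (fun x : ℝ => kf x / Real.sqrt x)
      (nhdsWithin 0 (Set.Ioi 0)) (nhds 0))
    (hH : ∀ lam mu : ℝ, lam ∈ Set.Ioc (0 : ℝ) 1 → mu ∈ Set.Ioc (0 : ℝ) 1 →
      ∀ x : Z, ‖lam • T (((1 - lam) / lam) • x) - mu • T (((1 - mu) / mu) • x)‖
        ≤ kf |lam - mu| * lf ‖x‖)
    (lam : ℝ) (hlam : lam ∈ Set.Ioc (0 : ℝ) 1)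
    (hs : List ℝ) (hmem : ∀ hi ∈ hs, hi ∈ Set.Ioc (0 : ℝ) 1)
    (Wl : Z) (hWl : T ((1 - lam) • Wl) = Wl) :
    ‖hs.foldr (fun hi x => lam • ((1 - hi) • (((1 - lam * hi) / lam) • x)
        + hi • T (((1 - lam * hi) / lam) • x))) (lam • Wl)
      - lam • Wl‖ ≤ 2 * lf ‖T 0‖ * kf (lam ^ 2) / lam ∧
    Filter.Tendsto (fun l : ℝ => 2 * lf ‖T 0‖ * kf (l ^ 2) / l)
      (nhdsWithin 0 (Set.Ioi 0)) (nhds 0) := by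
  obtain ⟨hlam0, hlam1⟩ := hlam
  have hlamne : lam ≠ 0 := ne_of_gt hlam0
  set F : ℝ → Z → Z := fun hi x => lam • ((1 - hi) • (((1 - lam * hi) / lam) • x)
        + hi • T (((1 - lam * hi) / lam) • x)) with hF
  set w : Z := lam • Wl with hwdef
  -- basic facts
  have hsq : lam ^ 2 ∈ Set.Ioc (0 : ℝ) 1 := ⟨by positivity, by nlinarith⟩
  have hkpos : 0 ≤ kf (lam ^ 2) := hk0 _ hsq
  have hlfTpos : 0 ≤ lf ‖T 0‖ := hl0 _ (norm_nonneg _)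
  have hwle : ‖w‖ ≤ ‖T 0‖ := by
    have h1 : ‖Wl - T 0‖ ≤ (1 - lam) * ‖Wl‖ := by
      have := hT ((1 - lam) • Wl) 0
      rw [hWl, sub_zero, norm_smul] at this
      calc ‖Wl - T 0‖ ≤ |1 - lam| * ‖Wl‖ := this
        _ = (1 - lam) * ‖Wl‖ := by rw [abs_of_nonneg (by linarith)]
    have h2 : ‖Wl‖ - ‖T 0‖ ≤ ‖Wl - T 0‖ := norm_sub_norm_le _ _
    have h3 : lam * ‖Wl‖ ≤ ‖T 0‖ := by nlinarith
    rw [hwdef, norm_smul, Real.norm_eq_abs, abs_of_pos hlam0]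
    exact h3
  set C : ℝ := 2 * lf ‖T 0‖ * kf (lam ^ 2) / lam with hC
  have hCpos : 0 ≤ C := by positivity
  -- fixed point of D_lam^1
  have hfix : lam • T (((1 - lam) / lam) • w) = w := by
    have : ((1 - lam) / lam) • w = (1 - lam) • Wl := by
      rw [hwdef, smul_smul, div_mul_cancel₀ _ hlamne]
    rw [this, hWl]
  -- single step estimate
  have step : ∀ hi ∈ Set.Ioc (0:ℝ) 1, ‖F hi w - w‖ ≤ C * (lam * hi) := by
    rintro hi ⟨hhi0, hhi1⟩
    obtain ⟨d, hd⟩ : ∃ d : ℝ, d = 1 + lam * (1 - hi) := ⟨_, rfl⟩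
    have hd1 : 1 ≤ d := by nlinarith
    have hd2 : d ≤ 2 := by nlinarith
    have hd0 : 0 < d := by linarith
    obtain ⟨mu, hmu⟩ : ∃ m : ℝ, m = lam / d := ⟨_, rfl⟩
    have hdne : d ≠ 0 := ne_of_gt hd0
    have hmu0 : 0 < mu := by rw [hmu]; exact div_pos hlam0 hd0
    have hmule : mu ≤ lam := by rw [hmu]; exact div_le_self hlam0.le hd1
    have hmu1 : mu ≤ 1 := le_trans hmule hlam1
    have hmune : mu ≠ 0 := ne_of_gt hmu0
    have harg : (1 - mu) / mu = (1 - lam * hi) / lam := by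
      have h2 : (1 - mu) / mu = 1 / mu - 1 := by rw [sub_div, div_self hmune]
      have h3 : (1:ℝ) / mu = d / lam := by rw [hmu, one_div, inv_div]
      rw [h2, h3, div_sub_one hlamne, hd]
      congr 1
      ring
    obtain ⟨a, ha⟩ : ∃ a : Z, a = ((1 - lam * hi) / lam) • w := ⟨_, rfl⟩
    have hebound : ‖mu • T a - w‖ ≤ kf (lam ^ 2) * lf ‖T 0‖ := by
      rcases eq_or_lt_of_le hhi1 with heq | hlt
      · -- hi = 1 : mu = lam and mu • T a = w
        have hdeq : d = 1 := by rw [hd, heq]; ring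
        have hmueq : mu = lam := by rw [hmu, hdeq, div_one]
        have : mu • T a = w := by
          rw [hmueq, ha]
          have h4 : (1 - lam * hi) = 1 - lam := by rw [heq]; ring
          rw [h4]; exact hfix
        rw [this, sub_self, norm_zero]
        positivity
      · -- hi < 1 : use assumption (H)
        have hH' := hH lam mu ⟨hlam0, hlam1⟩ ⟨hmu0, hmu1⟩ w
        rw [harg, ← ha, hfix, norm_sub_rev] at hH'
        have hdiff : lam - mu = lam ^ 2 * (1 - hi) / d := by
          rw [hmu]
          rw [eq_div_iff hdne, sub_mul, div_mul_cancel₀ _ hdne, hd]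
          ring
        have hdiffpos : 0 < lam - mu := by
          rw [hdiff]
          exact div_pos (mul_pos (pow_pos hlam0 2) (by linarith)) hd0
        have habs : |lam - mu| = lam - mu := abs_of_pos hdiffpos
        have hle : lam - mu ≤ lam ^ 2 := by
          rw [hdiff, div_le_iff₀ hd0]
          nlinarith
        have hk1 : kf |lam - mu| ≤ kf (lam ^ 2) := by
          rw [habs]
          exact hkmono ⟨hdiffpos, le_trans hle hsq.2⟩ hsq hle
        have hl1 : lf ‖w‖ ≤ lf ‖T 0‖ :=
          hlmono (Set.mem_Ici.mpr (norm_nonneg _)) (Set.mem_Ici.mpr (norm_nonneg _)) hwle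
        have hk0' : 0 ≤ kf |lam - mu| := by
          rw [habs]; exact hk0 _ ⟨hdiffpos, le_trans hle hsq.2⟩
        calc ‖mu • T a - w‖ ≤ kf |lam - mu| * lf ‖w‖ := hH'
          _ ≤ kf (lam ^ 2) * lf ‖T 0‖ :=
              mul_le_mul hk1 hl1 (hl0 _ (norm_nonneg _)) hkpos
    -- identity
    have hiden : F hi w - w = (hi * d) • (mu • T a - w) := by
      simp only [hF]
      rw [ha, hmu, hd]
      have hdne' : (1:ℝ) + lam * (1 - hi) ≠ 0 := by rw [← hd]; exact hdne
      match_scalars <;> field_simp [hlamne, hdne'] <;> ring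
    rw [hiden, norm_smul, Real.norm_eq_abs,
      abs_of_nonneg (le_of_lt (mul_pos hhi0 hd0))]
    have hCval : C * (lam * hi) = 2 * lf ‖T 0‖ * kf (lam ^ 2) * hi := by
      rw [hC]; field_simp
    rw [hCval]
    have h5 : hi * d * ‖mu • T a - w‖ ≤ hi * d * (kf (lam ^ 2) * lf ‖T 0‖) :=
      mul_le_mul_of_nonneg_left hebound (by positivity)
    nlinarith [mul_nonneg hkpos hlfTpos, mul_nonneg (mul_nonneg hhi0.le hkpos) hlfTpos]
  -- Lipschitz estimate
  have lip : ∀ hi ∈ Set.Ioc (0:ℝ) 1, ∀ x y : Z,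
      ‖F hi x - F hi y‖ ≤ (1 - lam * hi) * ‖x - y‖ := by
    rintro hi ⟨hhi0, hhi1⟩ x y
    have hc0 : 0 ≤ (1 - lam * hi) / lam := by
      apply div_nonneg _ hlam0.le; nlinarith
    have hiden : F hi x - F hi y = ((1 - hi) * (1 - lam * hi)) • (x - y)
        + (lam * hi) • (T (((1 - lam * hi) / lam) • x) - T (((1 - lam * hi) / lam) • y)) := by
      simp only [hF]
      match_scalars <;> field_simp [hlamne] <;> ring
    rw [hiden]
    have h1 := hT (((1 - lam * hi) / lam) • x) (((1 - lam * hi) / lam) • y)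
    rw [← smul_sub, norm_smul, Real.norm_eq_abs, abs_of_nonneg hc0] at h1
    calc ‖((1 - hi) * (1 - lam * hi)) • (x - y)
        + (lam * hi) • (T (((1 - lam * hi) / lam) • x) - T (((1 - lam * hi) / lam) • y))‖
        ≤ ‖((1 - hi) * (1 - lam * hi)) • (x - y)‖
          + ‖(lam * hi) • (T (((1 - lam * hi) / lam) • x) - T (((1 - lam * hi) / lam) • y))‖ :=
          norm_add_le _ _
      _ ≤ (1 - hi) * (1 - lam * hi) * ‖x - y‖ + (lam * hi) * ((1 - lam * hi) / lam * ‖x - y‖) := by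
          rw [norm_smul, norm_smul]
          gcongr
          · exact le_of_eq (Real.norm_of_nonneg (mul_nonneg (by linarith) (by nlinarith)))
          · exact le_of_eq (Real.norm_of_nonneg (by positivity))
      _ = (1 - lam * hi) * ‖x - y‖ := by field_simp; ring
  -- main induction
  have main : ∀ l : List ℝ, (∀ hi ∈ l, hi ∈ Set.Ioc (0:ℝ) 1) →
      ‖l.foldr F w - w‖ ≤ C * (1 - ((l.map (fun h => 1 - lam * h)).prod)) := by
    intro l
    induction l with
    | nil => intro _; simp
    | cons h t ih =>
      intro hmem'
      have hh := hmem' h List.mem_cons_self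
      have ht : ∀ hi ∈ t, hi ∈ Set.Ioc (0:ℝ) 1 := fun hi hmem'' =>
        hmem' hi (List.mem_cons_of_mem h hmem'')
      have iht := ih ht
      have hfold : (h :: t).foldr F w = F h (t.foldr F w) := rfl
      rw [hfold]
      have hprod0 : 0 ≤ ((t.map (fun h => 1 - lam * h)).prod) := by
        apply List.prod_nonneg
        intro x hx
        simp only [List.mem_map] at hx
        obtain ⟨hi, hhi, rfl⟩ := hx
        have := ht hi hhi
        nlinarith [this.1, this.2]
      have hlh0 : 0 ≤ 1 - lam * h := by nlinarith [hh.1, hh.2]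
      calc ‖F h (t.foldr F w) - w‖
          ≤ ‖F h (t.foldr F w) - F h w‖ + ‖F h w - w‖ := by
            rw [show F h (t.foldr F w) - w
              = (F h (t.foldr F w) - F h w) + (F h w - w) from by abel]
            exact norm_add_le _ _
        _ ≤ (1 - lam * h) * ‖t.foldr F w - w‖ + C * (lam * h) := by
            gcongr
            · exact lip h hh _ _
            · exact step h hh
        _ ≤ (1 - lam * h) * (C * (1 - ((t.map (fun h => 1 - lam * h)).prod))) + C * (lam * h) := by
            gcongr
        _ = C * (1 - ((( h :: t).map (fun h => 1 - lam * h)).prod)) := by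
            simp [List.prod_cons]; ring
  constructor
  · have h1 := main hs hmem
    have hprod0 : 0 ≤ ((hs.map (fun h => 1 - lam * h)).prod) := by
      apply List.prod_nonneg
      intro x hx
      simp only [List.mem_map] at hx
      obtain ⟨hi, hhi, rfl⟩ := hx
      have := hmem hi hhi
      nlinarith [this.1, this.2]
    calc ‖hs.foldr F w - w‖ ≤ C * (1 - ((hs.map (fun h => 1 - lam * h)).prod)) := h1
      _ ≤ C * 1 := by nlinarith
      _ = C := mul_one C
  · -- tendsto part
    have hsq2 : Filter.Tendsto (fun l : ℝ => l ^ 2) (nhdsWithin 0 (Set.Ioi 0))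
        (nhdsWithin 0 (Set.Ioi 0)) := by
      apply tendsto_nhdsWithin_of_tendsto_nhds_of_eventually_within
      · have : Filter.Tendsto (fun l : ℝ => l ^ 2) (nhds 0) (nhds 0) := by
          simpa using (continuous_pow 2).tendsto (0:ℝ)
        exact this.mono_left nhdsWithin_le_nhds
      · filter_upwards [self_mem_nhdsWithin] with x hx
        exact pow_pos (Set.mem_Ioi.mp hx) 2
    have hcomp := hksmall.comp hsq2
    have hmul := hcomp.const_mul (2 * lf ‖T 0‖)
    rw [mul_zero] at hmul
    apply hmul.congr'
    filter_upwards [self_mem_nhdsWithin] with x hx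
    have hx0 : (0:ℝ) < x := hx
    simp only [Function.comp]
    rw [Real.sqrt_sq hx0.le]
    field_simp
end

section
/- For all α ∈ [0,1] and λ ∈ (0,1], w̃_λ^α = w_μ where μ = λ/(α + λ − λ·α). (Note μ ∈ (0,1].) -/
/-- Identification of the `λ`-discounted value of `T̃_α : x ↦ (1-α) x + T(α x)`
with the `μ`-discounted value of `T`, where `μ = λ/(α + λ - λ α)`: if `W̃` is
the fixed point of `u ↦ T̃_α((1-λ) u)` and `W_μ` the fixed point of
`x ↦ T((1-μ) x)`, then `λ • W̃ = μ • W_μ`. -/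
theorem discounted_value_scaled_kernel
    {Z : Type*} [NormedAddCommGroup Z] [NormedSpace ℝ Z] [CompleteSpace Z]
    (T : Z → Z) (hT : ∀ x y : Z, ‖T x - T y‖ ≤ ‖x - y‖)
    (alpha lam : ℝ) (halpha : alpha ∈ Set.Icc (0 : ℝ) 1)
    (hlam : lam ∈ Set.Ioc (0 : ℝ) 1)
    (Wt : Z)
    (hWt : (1 - alpha) • ((1 - lam) • Wt) + T (alpha • ((1 - lam) • Wt)) = Wt)
    (Wmu : Z)
    (hWmu : T ((1 - lam / (alpha + lam - lam * alpha)) • Wmu) = Wmu) :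
    lam • Wt = (lam / (alpha + lam - lam * alpha)) • Wmu := by
  obtain ⟨ha0, ha1⟩ := halpha
  obtain ⟨hl0, hl1⟩ := hlam
  set d : ℝ := alpha + lam - lam * alpha with hd_def
  have hd : 0 < d := by nlinarith
  set mu : ℝ := lam / d with hmu_def
  have hmu0 : 0 < mu := div_pos hl0 hd
  have hmud : mu * d = lam := div_mul_cancel₀ lam (ne_of_gt hd)
  -- d • Wt is a fixed point of x ↦ T ((1 - mu) • x)
  have harg : (1 - mu) • (d • Wt) = alpha • ((1 - lam) • Wt) := by
    rw [smul_smul, smul_smul]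
    congr 1
    rw [hmu_def, hd_def]
    have hd' : alpha + lam - lam * alpha ≠ 0 := ne_of_gt hd
    field_simp
    ring
  have hfix : T ((1 - mu) • (d • Wt)) = d • Wt := by
    rw [harg]
    have h1 : T (alpha • ((1 - lam) • Wt)) = Wt - (1 - alpha) • ((1 - lam) • Wt) :=
      eq_sub_of_add_eq' hWt
    rw [h1, smul_smul]
    nth_rewrite 1 [← one_smul ℝ Wt]
    rw [← sub_smul]
    congr 1
    ring
  -- uniqueness of fixed point of the (1-mu)-contraction
  have key : Wmu = d • Wt := by
    have hnorm : ‖Wmu - d • Wt‖ ≤ (1 - mu) * ‖Wmu - d • Wt‖ := by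
      calc ‖Wmu - d • Wt‖ = ‖T ((1 - mu) • Wmu) - T ((1 - mu) • (d • Wt))‖ := by
            rw [hWmu, hfix]
        _ ≤ ‖(1 - mu) • Wmu - (1 - mu) • (d • Wt)‖ := hT _ _
        _ = ‖(1 - mu) • (Wmu - d • Wt)‖ := by rw [smul_sub]
        _ = |1 - mu| * ‖Wmu - d • Wt‖ := by rw [norm_smul, Real.norm_eq_abs]
        _ ≤ (1 - mu) * ‖Wmu - d • Wt‖ := by
            have hmu1 : mu ≤ 1 := by
              rw [hmu_def, div_le_one hd]; nlinarith
            rw [abs_of_nonneg (by linarith)]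
    have : ‖Wmu - d • Wt‖ = 0 := by nlinarith [norm_nonneg (Wmu - d • Wt)]
    exact sub_eq_zero.mp (norm_eq_zero.mp this)
  rw [key, smul_smul, hmud]
end
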